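/- arXiv:2209.06031 — 6 statements merged into one kernel-verified Lean document; each statement's English description precedes it below -/
import Mathlib

section
/- Reflection positivity: for any operator A in the subalgebra 𝒜₋ generated by {ψ(x), ψ(x)* : x ∈ Λ₋}, it holds that tr(A ϑ(A)) ≥ 0 (the trace is real and nonnegative); the same holds for A in 𝒜₊. -/
set_option linter.unusedSectionVars false
set_option maxHeartbeats 1000000


open Matrix

noncomputable section

/-- The periodic lattice `Λ = ({-L+1, …, L})^ν` with coordinates mod `2L`. -/
abbrev Site (ν L : ℕ) := Fin ν → ZMod (2 * L)

variable {ν L N : ℕ}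

/-- Canonical anticommutation relations for `ψ : Λ → M_N(ℂ)`. -/
def CAR (ψ : Site ν L → Matrix (Fin N) (Fin N) ℂ) : Prop :=
  (∀ x y, ψ x * star (ψ y) + star (ψ y) * ψ x
      = if x = y then (1 : Matrix (Fin N) (Fin N) ℂ) else 0) ∧
  (∀ x y, ψ x * ψ y + ψ y * ψ x = 0)

/-- The left half `Λ₋ = {x ∈ Λ : -L+1 ≤ x⁽¹⁾ ≤ 0}` (in terms of representatives
mod `2L`, first coordinate `0` or in `{L+1,…,2L-1}`). -/
def LambdaMinus (ν L : ℕ) [NeZero ν] : Set (Site ν L) :=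
  {x | (x 0).val = 0 ∨ L + 1 ≤ (x 0).val}

/-- The right half `Λ₊ = {x ∈ Λ : 1 ≤ x⁽¹⁾ ≤ L}`. -/
def LambdaPlus (ν L : ℕ) [NeZero ν] : Set (Site ν L) :=
  {x | 1 ≤ (x 0).val ∧ (x 0).val ≤ L}

/-- The reflection `r(x) = (1 - x⁽¹⁾, x⁽²⁾, …, x⁽ᵛ⁾)` across the hyperplane
`x⁽¹⁾ = 1/2`. -/
def reflMap (ν L : ℕ) [NeZero ν] (x : Site ν L) : Site ν L :=
  fun i => if i = 0 then 1 - x 0 else x i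

/-- The unital subalgebra `𝒜₋` generated by `{ψ(x), ψ(x)* : x ∈ Λ₋}`. -/
def algMinus (ν L N : ℕ) [NeZero ν]
    (ψ : Site ν L → Matrix (Fin N) (Fin N) ℂ) :
    Subalgebra ℂ (Matrix (Fin N) (Fin N) ℂ) :=
  Algebra.adjoin ℂ {M | ∃ x ∈ LambdaMinus ν L, M = ψ x ∨ M = star (ψ x)}

/-- The unital subalgebra `𝒜₊` generated by `{ψ(x), ψ(x)* : x ∈ Λ₊}`. -/
def algPlus (ν L N : ℕ) [NeZero ν]
    (ψ : Site ν L → Matrix (Fin N) (Fin N) ℂ) :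
    Subalgebra ℂ (Matrix (Fin N) (Fin N) ℂ) :=
  Algebra.adjoin ℂ {M | ∃ x ∈ LambdaPlus ν L, M = ψ x ∨ M = star (ψ x)}

namespace RPAux

variable {N : ℕ} {ι : Type*} [DecidableEq ι]

/-- Word in the generators. -/
def word (c : ι → Matrix (Fin N) (Fin N) ℂ) (l : List ι) : Matrix (Fin N) (Fin N) ℂ :=
  (l.map c).prod

variable {c : ι → Matrix (Fin N) (Fin N) ℂ}

lemma word_nil : word c [] = 1 := rfl

lemma word_cons {a : ι} {l : List ι} : word c (a :: l) = c a * word c l := by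
  simp [word]

lemma word_append {l₁ l₂ : List ι} : word c (l₁ ++ l₂) = word c l₁ * word c l₂ := by
  simp [word]

lemma word_single {a : ι} : word c [a] = c a := by simp [word]

section rel

variable (hcc : ∀ p, c p * c p = 1)
  (hac : ∀ p q, p ≠ q → c p * c q = -(c q * c p))

include hac in
lemma word_comm : ∀ (l : List ι) (p : ι), p ∉ l →
    c p * word c l = ((-1 : ℂ) ^ l.length) • (word c l * c p) := by
  intro l
  induction l with
  | nil => intro p _; simp [word_nil]
  | cons a t ih =>
    intro p hp
    have hpa : p ≠ a := fun h => hp (h ▸ List.mem_cons_self)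
    have hpt : p ∉ t := fun h => hp (List.mem_cons_of_mem _ h)
    rw [word_cons, ← mul_assoc, hac p a hpa, neg_mul, mul_assoc, ih p hpt,
      mul_smul_comm, List.length_cons, pow_succ]
    rw [← mul_assoc]
    module

lemma exists_split {a : ι} : ∀ t : List ι, a ∈ t → ∃ t₁ t₂, t = t₁ ++ a :: t₂ ∧ a ∉ t₁ := by
  intro t
  induction t with
  | nil => intro h; exact absurd h List.not_mem_nil
  | cons b t ih =>
    intro h
    by_cases hba : a = b
    · exact ⟨[], t, by simp [hba], by simp⟩
    · have hat : a ∈ t := by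
        rcases List.mem_cons.mp h with h' | h'
        · exact absurd h' hba
        · exact h'
      obtain ⟨t₁, t₂, rfl, ha₁⟩ := ih hat
      exact ⟨b :: t₁, t₂, by simp, by simp [hba, ha₁]⟩

include hcc hac in
lemma word_shrink {a : ι} {t₁ t₂ : List ι} (ha : a ∉ t₁) :
    word c (a :: (t₁ ++ a :: t₂)) = ((-1 : ℂ) ^ t₁.length) • word c (t₁ ++ t₂) := by
  rw [word_cons, word_append, word_cons, ← mul_assoc, word_comm hac t₁ a ha]
  rw [smul_mul_assoc, word_append]
  rw [mul_assoc, ← mul_assoc (c a), hcc, one_mul]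

include hcc hac in
lemma word_reduce : ∀ (n : ℕ) (l : List ι), l.length ≤ n →
    ∃ (s : ℂ) (m : List ι), (s = 1 ∨ s = -1) ∧ m.Nodup ∧ (∀ a ∈ m, a ∈ l) ∧
      word c l = s • word c m := by
  intro n
  induction n with
  | zero =>
    intro l hl
    have : l = [] := List.length_eq_zero_iff.mp (Nat.le_zero.mp hl)
    exact ⟨1, [], Or.inl rfl, List.nodup_nil, by simp, by simp [this]⟩
  | succ n ih =>
    intro l hl
    match l with
    | [] => exact ⟨1, [], Or.inl rfl, List.nodup_nil, by simp, by simp⟩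
    | a :: t =>
      by_cases hat : a ∈ t
      · obtain ⟨t₁, t₂, rfl, ha₁⟩ := exists_split t hat
        have hlen : (t₁ ++ t₂).length ≤ n := by
          have := @List.length_cons _ a (t₁ ++ a :: t₂) ▸ hl
          simp only [List.length_append, List.length_cons] at *
          omega
        obtain ⟨s, m, hs, hm, hsub, heq⟩ := ih (t₁ ++ t₂) hlen
        refine ⟨((-1 : ℂ) ^ t₁.length) * s, m, ?_, hm, ?_, ?_⟩
        · rcases neg_one_pow_eq_or ℂ t₁.length with h | h <;> rcases hs with h' | h' <;>
            rw [h, h'] <;> norm_num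
        · intro b hb
          have := hsub b hb
          simp only [List.mem_append, List.mem_cons] at *
          tauto
        · rw [word_shrink hcc hac ha₁, heq, smul_smul]
      · have hlen : t.length ≤ n := by simpa using hl
        obtain ⟨s, m, hs, hm, hsub, heq⟩ := ih t hlen
        have ham : a ∉ m := fun h => hat (hsub a h)
        refine ⟨s, a :: m, hs, List.nodup_cons.mpr ⟨ham, hm⟩, ?_, ?_⟩
        · intro b hb
          rcases List.mem_cons.mp hb with h | h
          · simp [h]
          · exact List.mem_cons_of_mem _ (hsub b h)
        · rw [word_cons, heq, mul_smul_comm, word_cons]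

include hcc hac in
lemma trace_vanish_odd {l : List ι} {d : ι} (hd : d ∉ l) (hodd : Odd l.length) :
    (word c l).trace = 0 := by
  have h := word_comm hac l d hd
  rw [hodd.neg_one_pow, neg_one_smul] at h
  have key : (word c l).trace = -(word c l).trace := by
    calc (word c l).trace = (c d * c d * word c l).trace := by rw [hcc, one_mul]
    _ = (c d * (c d * word c l)).trace := by rw [mul_assoc]
    _ = (c d * -(word c l * c d)).trace := by rw [h]
    _ = -((c d * word c l) * c d).trace := by rw [mul_neg, trace_neg, mul_assoc]
    _ = -(c d * (c d * word c l)).trace := by rw [trace_mul_comm]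
    _ = -(word c l).trace := by rw [← mul_assoc, hcc, one_mul]
  have h2 : (word c l).trace + (word c l).trace = 0 := by
    nth_rewrite 1 [key]; ring
  have := add_self_eq_zero.mp h2
  exact this

include hac in
lemma trace_vanish_head {a : ι} {t : List ι} (ha : a ∉ t) (hodd : Odd t.length) :
    (word c (a :: t)).trace = 0 := by
  have h := word_comm hac t a ha
  rw [hodd.neg_one_pow, neg_one_smul] at h
  have key : (word c (a :: t)).trace = -(word c (a :: t)).trace := by
    calc (word c (a :: t)).trace = (c a * word c t).trace := by rw [word_cons]
    _ = (word c t * c a).trace := trace_mul_comm _ _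
    _ = (-(c a * word c t)).trace := by
      rw [(by rw [h, neg_neg] : -(c a * word c t) = word c t * c a)]
    _ = -(word c (a :: t)).trace := by rw [trace_neg, word_cons]
  have h2 := add_self_eq_zero.mp (by nth_rewrite 1 [key]; ring :
    (word c (a :: t)).trace + (word c (a :: t)).trace = 0)
  exact h2

include hcc hac in
lemma trace_vanish_nodup_even {l : List ι} (hnd : l.Nodup) (hne : l ≠ [])
    (heven : Even l.length) : (word c l).trace = 0 := by
  match l with
  | [] => exact absurd rfl hne
  | a :: t =>
    have ha : a ∉ t := (List.nodup_cons.mp hnd).1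
    have hodd : Odd t.length := by
      rw [List.length_cons] at heven
      rcases Nat.even_or_odd t.length with h | h
      · exact absurd heven (by simp [Nat.even_add_one, h])
      · exact h
    exact trace_vanish_head hac ha hodd

lemma spare_exists {F : Finset ι} (hF : Even F.card)
    {m : List ι} (hm : m.Nodup) (hsub : ∀ a ∈ m, a ∈ F) (ho : Odd m.length) :
    ∃ d, d ∈ F ∧ d ∉ m := by
  by_contra h
  push_neg at h
  have h1 : F ⊆ m.toFinset := fun d hd => List.mem_toFinset.2 (h d hd)
  have h2 : m.toFinset ⊆ F := fun d hd => hsub d (List.mem_toFinset.1 hd)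
  have heq : m.toFinset = F := le_antisymm h2 h1
  have hc : m.toFinset.card = m.length := List.toFinset_card_of_nodup hm
  rw [heq] at hc
  rw [hc] at hF
  rcases ho with ⟨k, hk⟩
  rcases hF with ⟨j, hj⟩
  omega

section rel2

variable (hcc : ∀ p, c p * c p = 1)
  (hac : ∀ p q, p ≠ q → c p * c q = -(c q * c p))
  (S₁ S₂ : Set ι)
  (hdisj : ∀ p, p ∈ S₁ → p ∈ S₂ → False)
  (hne₁ : ∃ d, d ∈ S₁) (hne₂ : ∃ d, d ∈ S₂)
  (hodd₁ : ∀ m : List ι, m.Nodup → (∀ a ∈ m, a ∈ S₁) → Odd m.length → ∃ d, d ∈ S₁ ∧ d ∉ m)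
  (hodd₂ : ∀ m : List ι, m.Nodup → (∀ a ∈ m, a ∈ S₂) → Odd m.length → ∃ d, d ∈ S₂ ∧ d ∉ m)

include hcc hac hdisj hne₁ hne₂ hodd₁ hodd₂ in
lemma main_nodup {m₁ m₂ : List ι} (hnd₁ : m₁.Nodup) (hnd₂ : m₂.Nodup)
    (hs₁ : ∀ a ∈ m₁, a ∈ S₁) (hs₂ : ∀ a ∈ m₂, a ∈ S₂) :
    (N : ℂ) * (word c m₁ * word c m₂).trace = (word c m₁).trace * (word c m₂).trace := by
  have hldisj : m₁.Disjoint m₂ := fun a h1 h2 => hdisj a (hs₁ a h1) (hs₂ a h2)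
  have hndc : (m₁ ++ m₂).Nodup := hnd₁.append hnd₂ hldisj
  have happ : word c m₁ * word c m₂ = word c (m₁ ++ m₂) := word_append.symm
  by_cases hboth : m₁ = [] ∧ m₂ = []
  · rw [hboth.1, hboth.2]
    simp [word_nil, Matrix.trace_one]
  · have hnecomb : m₁ ++ m₂ ≠ [] := by
      intro h
      rcases List.append_eq_nil_iff.mp h with ⟨h1, h2⟩
      exact hboth ⟨h1, h2⟩
    rw [happ]
    rcases Nat.even_or_odd m₁.length with he₁ | ho₁
    · rcases Nat.even_or_odd m₂.length with he₂ | ho₂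
      · -- even, even: combined even nonempty
        have hLHS : (word c (m₁ ++ m₂)).trace = 0 :=
          trace_vanish_nodup_even hcc hac hndc hnecomb (by
            rw [List.length_append]; exact he₁.add he₂)
        rw [hLHS]
        rcases Classical.em (m₁ = []) with h1 | h1
        · have h2 : m₂ ≠ [] := fun h => hboth ⟨h1, h⟩
          have : (word c m₂).trace = 0 :=
            trace_vanish_nodup_even hcc hac hnd₂ h2 he₂
          rw [this]; ring
        · have : (word c m₁).trace = 0 :=
            trace_vanish_nodup_even hcc hac hnd₁ h1 he₁
          rw [this]; ring
      · -- even, odd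
        obtain ⟨d, hd, hdm⟩ := hodd₂ m₂ hnd₂ hs₂ ho₂
        have hdcomb : d ∉ m₁ ++ m₂ := by
          intro h
          rcases List.mem_append.mp h with h' | h'
          · exact hdisj d (hs₁ d h') hd
          · exact hdm h'
        have hLHS : (word c (m₁ ++ m₂)).trace = 0 :=
          trace_vanish_odd hcc hac hdcomb (by
            rw [List.length_append]
            rcases ho₂ with ⟨k, hk⟩; rcases he₁ with ⟨j, hj⟩
            exact ⟨j + k, by omega⟩)
        obtain ⟨e, he⟩ := hne₁
        have hem : e ∉ m₂ := fun h => hdisj e he (hs₂ e h)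
        have hRHS : (word c m₂).trace = 0 := trace_vanish_odd hcc hac hem ho₂
        rw [hLHS, hRHS]; ring
    · rcases Nat.even_or_odd m₂.length with he₂ | ho₂
      · -- odd, even
        obtain ⟨d, hd, hdm⟩ := hodd₁ m₁ hnd₁ hs₁ ho₁
        have hdcomb : d ∉ m₁ ++ m₂ := by
          intro h
          rcases List.mem_append.mp h with h' | h'
          · exact hdm h'
          · exact hdisj d hd (hs₂ d h')
        have hLHS : (word c (m₁ ++ m₂)).trace = 0 :=
          trace_vanish_odd hcc hac hdcomb (by
            rw [List.length_append]
            rcases ho₁ with ⟨k, hk⟩; rcases he₂ with ⟨j, hj⟩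
            exact ⟨k + j, by omega⟩)
        obtain ⟨e, he⟩ := hne₂
        have hem : e ∉ m₁ := fun h => hdisj e (hs₁ e h) he
        have hRHS : (word c m₁).trace = 0 := trace_vanish_odd hcc hac hem ho₁
        rw [hLHS, hRHS]; ring
      · -- odd, odd: combined even nonempty
        have hLHS : (word c (m₁ ++ m₂)).trace = 0 :=
          trace_vanish_nodup_even hcc hac hndc hnecomb (by
            rw [List.length_append]
            rcases ho₁ with ⟨k, hk⟩; rcases ho₂ with ⟨j, hj⟩
            exact ⟨k + j + 1, by omega⟩)
        obtain ⟨e, he⟩ := hne₂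
        have hem : e ∉ m₁ := fun h => hdisj e (hs₁ e h) he
        have hRHS : (word c m₁).trace = 0 := trace_vanish_odd hcc hac hem ho₁
        rw [hLHS, hRHS]; ring

include hcc hac hdisj hne₁ hne₂ hodd₁ hodd₂ in
lemma main_words {l₁ l₂ : List ι} (hs₁ : ∀ a ∈ l₁, a ∈ S₁) (hs₂ : ∀ a ∈ l₂, a ∈ S₂) :
    (N : ℂ) * (word c l₁ * word c l₂).trace = (word c l₁).trace * (word c l₂).trace := by
  obtain ⟨s₁, m₁, _, hnd₁, hsub₁, heq₁⟩ := word_reduce hcc hac l₁.length l₁ le_rfl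
  obtain ⟨s₂, m₂, _, hnd₂, hsub₂, heq₂⟩ := word_reduce hcc hac l₂.length l₂ le_rfl
  have hms₁ : ∀ a ∈ m₁, a ∈ S₁ := fun a h => hs₁ a (hsub₁ a h)
  have hms₂ : ∀ a ∈ m₂, a ∈ S₂ := fun a h => hs₂ a (hsub₂ a h)
  have key := main_nodup hcc hac S₁ S₂ hdisj hne₁ hne₂ hodd₁ hodd₂ hnd₁ hnd₂ hms₁ hms₂
  rw [heq₁, heq₂]
  rw [smul_mul_smul_comm, Matrix.trace_smul, Matrix.trace_smul, Matrix.trace_smul]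
  rw [smul_eq_mul, smul_eq_mul, smul_eq_mul]
  linear_combination (s₁ * s₂) * key

end rel2

end rel

section theta

variable (hcc : ∀ p, c p * c p = 1)
  (hac : ∀ p q, p ≠ q → c p * c q = -(c q * c p))
  (θ : Matrix (Fin N) (Fin N) ℂ → Matrix (Fin N) (Fin N) ℂ)
  (hadd : ∀ A B, θ (A + B) = θ A + θ B)
  (hsmul : ∀ (a : ℂ) (A), θ (a • A) = (starRingEnd ℂ a) • θ A)
  (hmul : ∀ A B, θ (A * B) = θ A * θ B)
  (hθ1 : θ 1 = 1)
  (rf : ι → ι) (hrf : Function.Injective rf)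
  (σ : ι → ℂ)
  (hθc : ∀ p, θ (c p) = σ p • c (rf p))

include hmul hθ1 hθc in
lemma theta_word : ∀ l : List ι, θ (word c l) = ((l.map σ).prod) • word c (l.map rf) := by
  intro l
  induction l with
  | nil => simp [word_nil, hθ1]
  | cons a t ih =>
    rw [word_cons, hmul, hθc, ih, smul_mul_smul_comm, List.map_cons, List.map_cons,
      List.prod_cons, word_cons]

include hcc hac hsmul hmul hθ1 hrf hθc in
lemma theta_trace_conj (S₁ S₂ : Set ι)
    (hdisj : ∀ p, p ∈ S₁ → p ∈ S₂ → False)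
    (hne₁ : ∃ d, d ∈ S₁) (hne₂ : ∃ d, d ∈ S₂)
    (hS : ∀ p, p ∈ S₁ → rf p ∈ S₂) :
    ∀ (n : ℕ) (l : List ι), l.length ≤ n → (∀ a ∈ l, a ∈ S₁) →
      (θ (word c l)).trace = (starRingEnd ℂ) ((word c l).trace) := by
  intro n
  induction n with
  | zero =>
    intro l hl _
    have : l = [] := List.length_eq_zero_iff.mp (Nat.le_zero.mp hl)
    subst this
    simp [word_nil, hθ1, Matrix.trace_one]
  | succ n ih =>
    intro l hl hsub
    match l with
    | [] => simp [word_nil, hθ1, Matrix.trace_one]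
    | a :: t =>
      have hsubt : ∀ b ∈ t, b ∈ S₁ := fun b hb => hsub b (List.mem_cons_of_mem _ hb)
      by_cases hat : a ∈ t
      · obtain ⟨t₁, t₂, rfl, ha₁⟩ := exists_split t hat
        have hlen : (t₁ ++ t₂).length ≤ n := by
          have h := hl
          simp only [List.length_cons, List.length_append] at h ⊢
          omega
        have hsub' : ∀ b ∈ t₁ ++ t₂, b ∈ S₁ := by
          intro b hb
          apply hsubt
          rcases List.mem_append.mp hb with h | h
          · exact List.mem_append.mpr (Or.inl h)
          · exact List.mem_append.mpr (Or.inr (List.mem_cons_of_mem _ h))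
        rw [word_shrink hcc hac ha₁, hsmul, Matrix.trace_smul, Matrix.trace_smul,
          smul_eq_mul, smul_eq_mul, _root_.map_mul, map_pow, map_neg, RingHom.map_one,
          ih (t₁ ++ t₂) hlen hsub']
      · rcases Nat.even_or_odd t.length with he | ho
        · -- length of a :: t is odd; both sides vanish using spares
          have hoddl : Odd (a :: t).length := by
            rcases he with ⟨k, hk⟩
            exact ⟨k, by simp [List.length_cons, hk]; omega⟩
          obtain ⟨d, hd⟩ := hne₂
          have hdl : d ∉ a :: t := fun h => hdisj d (hsub d h) hd
          have hRHS : (word c (a :: t)).trace = 0 := trace_vanish_odd hcc hac hdl hoddl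
          obtain ⟨e, he'⟩ := hne₁
          have hel : e ∉ (a :: t).map rf := by
            intro h
            obtain ⟨b, hb, hbe⟩ := List.mem_map.mp h
            exact hdisj e he' (hbe ▸ hS b (hsub b hb))
          have hLHS : (word c ((a :: t).map rf)).trace = 0 :=
            trace_vanish_odd hcc hac hel (by rw [List.length_map]; exact hoddl)
          rw [theta_word θ hmul hθ1 rf σ hθc, Matrix.trace_smul, hLHS, hRHS]
          simp
        · -- t has odd length, a ∉ t : both sides vanish by the head trick
          have hRHS : (word c (a :: t)).trace = 0 := trace_vanish_head hac hat ho
          have hanotin : rf a ∉ t.map rf := by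
            intro h
            obtain ⟨b, hb, hbe⟩ := List.mem_map.mp h
            exact hat (hrf hbe ▸ hb)
          have hLHS : (word c ((a :: t).map rf)).trace = 0 := by
            rw [List.map_cons]
            exact trace_vanish_head hac hanotin (by rw [List.length_map]; exact ho)
          rw [theta_word θ hmul hθ1 rf σ hθc, Matrix.trace_smul, hLHS, hRHS]
          simp

end theta

/-- The span of all words with letters in `S`. -/
def wordSpan (c : ι → Matrix (Fin N) (Fin N) ℂ) (S : Set ι) :
    Submodule ℂ (Matrix (Fin N) (Fin N) ℂ) :=
  Submodule.span ℂ {A | ∃ l : List ι, (∀ a ∈ l, a ∈ S) ∧ A = word c l}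

lemma one_mem_wordSpan {S : Set ι} : (1 : Matrix (Fin N) (Fin N) ℂ) ∈ wordSpan c S :=
  Submodule.subset_span ⟨[], by simp, rfl⟩

lemma mul_mem_wordSpan {S : Set ι} {X Y : Matrix (Fin N) (Fin N) ℂ}
    (hX : X ∈ wordSpan c S) (hY : Y ∈ wordSpan c S) : X * Y ∈ wordSpan c S := by
  induction hX using Submodule.span_induction with
  | mem x hx =>
    induction hY using Submodule.span_induction with
    | mem y hy =>
      obtain ⟨l, hl, rfl⟩ := hx
      obtain ⟨m, hm, rfl⟩ := hy
      refine Submodule.subset_span ⟨l ++ m, ?_, word_append.symm⟩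
      intro b hb
      rcases List.mem_append.mp hb with h | h
      · exact hl b h
      · exact hm b h
    | zero => rw [mul_zero]; exact zero_mem _
    | add y z _ _ ihy ihz => rw [mul_add]; exact add_mem ihy ihz
    | smul a y _ ihy => rw [mul_smul_comm]; exact Submodule.smul_mem _ _ ihy
  | zero => rw [zero_mul]; exact zero_mem _
  | add x y _ _ ihx ihy => rw [add_mul]; exact add_mem ihx ihy
  | smul a x _ ihx => rw [smul_mul_assoc]; exact Submodule.smul_mem _ _ ihx

lemma span_factor (hcc : ∀ p, c p * c p = 1)
    (hac : ∀ p q, p ≠ q → c p * c q = -(c q * c p))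
    (S₁ S₂ : Set ι)
    (hdisj : ∀ p, p ∈ S₁ → p ∈ S₂ → False)
    (hne₁ : ∃ d, d ∈ S₁) (hne₂ : ∃ d, d ∈ S₂)
    (hodd₁ : ∀ m : List ι, m.Nodup → (∀ a ∈ m, a ∈ S₁) → Odd m.length → ∃ d, d ∈ S₁ ∧ d ∉ m)
    (hodd₂ : ∀ m : List ι, m.Nodup → (∀ a ∈ m, a ∈ S₂) → Odd m.length → ∃ d, d ∈ S₂ ∧ d ∉ m)
    {X Y : Matrix (Fin N) (Fin N) ℂ}
    (hX : X ∈ wordSpan c S₁) (hY : Y ∈ wordSpan c S₂) :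
    (N : ℂ) * (X * Y).trace = X.trace * Y.trace := by
  induction hX using Submodule.span_induction with
  | mem x hx =>
    induction hY using Submodule.span_induction with
    | mem y hy =>
      obtain ⟨l, hl, rfl⟩ := hx
      obtain ⟨m, hm, rfl⟩ := hy
      exact main_words hcc hac S₁ S₂ hdisj hne₁ hne₂ hodd₁ hodd₂ hl hm
    | zero => simp
    | add y z _ _ ihy ihz =>
      rw [mul_add, Matrix.trace_add, Matrix.trace_add]
      ring_nf
      linear_combination ihy + ihz
    | smul a y _ ihy =>
      rw [mul_smul_comm, Matrix.trace_smul, Matrix.trace_smul, smul_eq_mul, smul_eq_mul]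
      linear_combination a * ihy
  | zero => simp
  | add x y _ _ ihx ihy =>
    rw [add_mul, Matrix.trace_add, Matrix.trace_add]
    linear_combination ihx + ihy
  | smul a x _ ihx =>
    rw [smul_mul_assoc, Matrix.trace_smul, Matrix.trace_smul, smul_eq_mul, smul_eq_mul]
    linear_combination a * ihx

lemma theta_mem_span
    (θ : Matrix (Fin N) (Fin N) ℂ → Matrix (Fin N) (Fin N) ℂ)
    (hadd : ∀ A B, θ (A + B) = θ A + θ B)
    (hsmul : ∀ (a : ℂ) (A), θ (a • A) = (starRingEnd ℂ a) • θ A)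
    (hmul : ∀ A B, θ (A * B) = θ A * θ B)
    (hθ1 : θ 1 = 1)
    (rf : ι → ι) (σ : ι → ℂ)
    (hθc : ∀ p, θ (c p) = σ p • c (rf p))
    (S₁ S₂ : Set ι) (hS : ∀ p, p ∈ S₁ → rf p ∈ S₂)
    {X : Matrix (Fin N) (Fin N) ℂ} (hX : X ∈ wordSpan c S₁) :
    θ X ∈ wordSpan c S₂ := by
  have hθ0 : θ 0 = 0 := by
    have := hsmul 0 0
    simpa using this
  induction hX using Submodule.span_induction with
  | mem x hx =>
    obtain ⟨l, hl, rfl⟩ := hx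
    rw [theta_word θ hmul hθ1 rf σ hθc]
    refine Submodule.smul_mem _ _ (Submodule.subset_span ⟨l.map rf, ?_, rfl⟩)
    intro b hb
    obtain ⟨a, ha, rfl⟩ := List.mem_map.mp hb
    exact hS a (hl a ha)
  | zero => rw [hθ0]; exact zero_mem _
  | add x y _ _ ihx ihy => rw [hadd]; exact add_mem ihx ihy
  | smul a x _ ihx => rw [hsmul]; exact Submodule.smul_mem _ _ ihx

lemma theta_trace_span
    (hcc : ∀ p, c p * c p = 1)
    (hac : ∀ p q, p ≠ q → c p * c q = -(c q * c p))
    (θ : Matrix (Fin N) (Fin N) ℂ → Matrix (Fin N) (Fin N) ℂ)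
    (hadd : ∀ A B, θ (A + B) = θ A + θ B)
    (hsmul : ∀ (a : ℂ) (A), θ (a • A) = (starRingEnd ℂ a) • θ A)
    (hmul : ∀ A B, θ (A * B) = θ A * θ B)
    (hθ1 : θ 1 = 1)
    (rf : ι → ι) (hrf : Function.Injective rf)
    (σ : ι → ℂ)
    (hθc : ∀ p, θ (c p) = σ p • c (rf p))
    (S₁ S₂ : Set ι)
    (hdisj : ∀ p, p ∈ S₁ → p ∈ S₂ → False)
    (hne₁ : ∃ d, d ∈ S₁) (hne₂ : ∃ d, d ∈ S₂)
    (hS : ∀ p, p ∈ S₁ → rf p ∈ S₂)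
    {X : Matrix (Fin N) (Fin N) ℂ} (hX : X ∈ wordSpan c S₁) :
    (θ X).trace = (starRingEnd ℂ) X.trace := by
  have hθ0 : θ 0 = 0 := by
    have := hsmul 0 0
    simpa using this
  induction hX using Submodule.span_induction with
  | mem x hx =>
    obtain ⟨l, hl, rfl⟩ := hx
    exact theta_trace_conj hcc hac θ hsmul hmul hθ1 rf hrf σ hθc S₁ S₂ hdisj hne₁ hne₂ hS
      l.length l le_rfl hl
  | zero => simp [hθ0]
  | add x y _ _ ihx ihy => rw [hadd, Matrix.trace_add, Matrix.trace_add, map_add, ihx, ihy]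
  | smul a x _ ihx =>
    rw [hsmul, Matrix.trace_smul, Matrix.trace_smul, smul_eq_mul, smul_eq_mul, _root_.map_mul, ihx]

lemma rp_final
    (hcc : ∀ p, c p * c p = 1)
    (hac : ∀ p q, p ≠ q → c p * c q = -(c q * c p))
    (θ : Matrix (Fin N) (Fin N) ℂ → Matrix (Fin N) (Fin N) ℂ)
    (hadd : ∀ A B, θ (A + B) = θ A + θ B)
    (hsmul : ∀ (a : ℂ) (A), θ (a • A) = (starRingEnd ℂ a) • θ A)
    (hmul : ∀ A B, θ (A * B) = θ A * θ B)
    (hθ1 : θ 1 = 1)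
    (rf : ι → ι) (hrf : Function.Injective rf)
    (σ : ι → ℂ)
    (hθc : ∀ p, θ (c p) = σ p • c (rf p))
    (S₁ S₂ : Set ι)
    (hdisj : ∀ p, p ∈ S₁ → p ∈ S₂ → False)
    (hne₁ : ∃ d, d ∈ S₁) (hne₂ : ∃ d, d ∈ S₂)
    (hodd₁ : ∀ m : List ι, m.Nodup → (∀ a ∈ m, a ∈ S₁) → Odd m.length → ∃ d, d ∈ S₁ ∧ d ∉ m)
    (hodd₂ : ∀ m : List ι, m.Nodup → (∀ a ∈ m, a ∈ S₂) → Odd m.length → ∃ d, d ∈ S₂ ∧ d ∉ m)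
    (hS : ∀ p, p ∈ S₁ → rf p ∈ S₂)
    (hN : (N : ℂ) ≠ 0)
    (gens : Set (Matrix (Fin N) (Fin N) ℂ))
    (hGen : ∀ M ∈ gens, M ∈ wordSpan c S₁) :
    ∀ A ∈ Algebra.adjoin ℂ gens, 0 ≤ (A * θ A).trace.re ∧ (A * θ A).trace.im = 0 := by
  intro A hA
  have hspan : A ∈ wordSpan c S₁ := by
    induction hA using Algebra.adjoin_induction with
    | mem x hx => exact hGen x hx
    | algebraMap r =>
      rw [Algebra.algebraMap_eq_smul_one]
      exact Submodule.smul_mem _ _ one_mem_wordSpan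
    | add x y _ _ ihx ihy => exact add_mem ihx ihy
    | mul x y _ _ ihx ihy => exact mul_mem_wordSpan ihx ihy
  have hθA : θ A ∈ wordSpan c S₂ :=
    theta_mem_span θ hadd hsmul hmul hθ1 rf σ hθc S₁ S₂ hS hspan
  have h2 : (N : ℂ) * (A * θ A).trace = A.trace * (θ A).trace :=
    span_factor hcc hac S₁ S₂ hdisj hne₁ hne₂ hodd₁ hodd₂ hspan hθA
  have h3 : (θ A).trace = (starRingEnd ℂ) A.trace :=
    theta_trace_span hcc hac θ hadd hsmul hmul hθ1 rf hrf σ hθc S₁ S₂ hdisj hne₁ hne₂ hS hspan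
  rw [h3, Complex.mul_conj] at h2
  have ht : (A * θ A).trace = (((Complex.normSq A.trace / N : ℝ)) : ℂ) := by
    rw [Complex.ofReal_div]
    rw [eq_div_iff (by exact_mod_cast hN : ((N : ℝ) : ℂ) ≠ 0)]
    push_cast
    linear_combination h2
  rw [ht]
  constructor
  · rw [Complex.ofReal_re]
    exact div_nonneg (Complex.normSq_nonneg _) (Nat.cast_nonneg N)
  · rw [Complex.ofReal_im]

end RPAux

namespace RPC

variable {ν L N : ℕ}

/-- Majorana operators associated with `ψ`. -/
def maj (ψ : Site ν L → Matrix (Fin N) (Fin N) ℂ) (p : Site ν L × Bool) :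
    Matrix (Fin N) (Fin N) ℂ :=
  cond p.2 (Complex.I • (ψ p.1 - star (ψ p.1))) (ψ p.1 + star (ψ p.1))

lemma maj_ff {ψ : Site ν L → Matrix (Fin N) (Fin N) ℂ} {x : Site ν L} :
    maj ψ (x, false) = ψ x + star (ψ x) := rfl

lemma maj_tt {ψ : Site ν L → Matrix (Fin N) (Fin N) ℂ} {x : Site ν L} :
    maj ψ (x, true) = Complex.I • (ψ x - star (ψ x)) := rfl

section psirel

variable {ψ : Site ν L → Matrix (Fin N) (Fin N) ℂ} (hCAR : CAR ψ)

include hCAR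

lemma psi_sq (x : Site ν L) : ψ x * ψ x = 0 := by
  have h := hCAR.2 x x
  have e : ψ x * ψ x = (1/2 : ℂ) • (ψ x * ψ x + ψ x * ψ x) := by module
  rw [e, h, smul_zero]

lemma psis_sq (x : Site ν L) : star (ψ x) * star (ψ x) = 0 := by
  have := congrArg star (psi_sq hCAR x)
  rwa [Matrix.star_mul, star_zero] at this

lemma psi_mix (x : Site ν L) : ψ x * star (ψ x) + star (ψ x) * ψ x = 1 := by
  have h := hCAR.1 x x
  rw [if_pos rfl] at h
  exact h

lemma psi_r1 (x y : Site ν L) : ψ y * ψ x = -(ψ x * ψ y) :=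
  ((add_eq_zero_iff_neg_eq.mp (hCAR.2 x y)).symm)

lemma psi_r2 {x y : Site ν L} (h : y ≠ x) : ψ y * star (ψ x) = -(star (ψ x) * ψ y) := by
  have := hCAR.1 y x
  rw [if_neg h] at this
  exact add_eq_zero_iff_eq_neg.mp this

lemma psi_r3 {x y : Site ν L} (h : x ≠ y) : star (ψ y) * ψ x = -(ψ x * star (ψ y)) := by
  have := hCAR.1 x y
  rw [if_neg h] at this
  exact (add_eq_zero_iff_neg_eq.mp this).symm

lemma psi_r4 (x y : Site ν L) : star (ψ y) * star (ψ x) = -(star (ψ x) * star (ψ y)) := by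
  have h := congrArg star (hCAR.2 y x)
  rw [star_add, Matrix.star_mul, Matrix.star_mul, star_zero] at h
  exact (add_eq_zero_iff_neg_eq.mp h).symm

lemma maj_cc : ∀ p, maj ψ p * maj ψ p = 1 := by
  rintro ⟨x, b⟩
  cases b
  · rw [maj_ff]
    have e : (ψ x + star (ψ x)) * (ψ x + star (ψ x))
        = ψ x * star (ψ x) + star (ψ x) * ψ x := by
      simp only [add_mul, mul_add, psi_sq hCAR, psis_sq hCAR, zero_add, add_zero]
      abel
    rw [e, psi_mix hCAR x]
  · rw [maj_tt, smul_mul_smul_comm, Complex.I_mul_I]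
    have e : (ψ x - star (ψ x)) * (ψ x - star (ψ x))
        = -(ψ x * star (ψ x) + star (ψ x) * ψ x) := by
      simp only [sub_mul, mul_sub, psi_sq hCAR, psis_sq hCAR]
      abel
    rw [e, psi_mix hCAR x]
    simp

lemma maj_ac : ∀ p q, p ≠ q → maj ψ p * maj ψ q = -(maj ψ q * maj ψ p) := by
  rintro ⟨x, bx⟩ ⟨y, byy⟩ hne
  by_cases hxy : x = y
  · subst hxy
    have hbb : bx ≠ byy := fun h => hne (by rw [h])
    have e1 : (ψ x + star (ψ x)) * (ψ x - star (ψ x))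
        = star (ψ x) * ψ x - ψ x * star (ψ x) := by
      simp only [add_mul, mul_sub, psi_sq hCAR, psis_sq hCAR]
      abel
    have e2 : (ψ x - star (ψ x)) * (ψ x + star (ψ x))
        = ψ x * star (ψ x) - star (ψ x) * ψ x := by
      simp only [sub_mul, mul_add, psi_sq hCAR, psis_sq hCAR]
      abel
    cases bx <;> cases byy
    · exact absurd rfl hbb
    · rw [maj_ff, maj_tt, mul_smul_comm, smul_mul_assoc, e1, e2]
      rw [← smul_neg, neg_sub]
    · rw [maj_ff, maj_tt, mul_smul_comm, smul_mul_assoc, e1, e2]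
      rw [← smul_neg, neg_sub]
    · exact absurd rfl hbb
  · have rr1 : ψ y * ψ x = -(ψ x * ψ y) := psi_r1 hCAR x y
    have rr1' : ψ x * ψ y = -(ψ y * ψ x) := psi_r1 hCAR y x
    have rr2 : ψ y * star (ψ x) = -(star (ψ x) * ψ y) := psi_r2 hCAR (Ne.symm hxy)
    have rr2' : ψ x * star (ψ y) = -(star (ψ y) * ψ x) := psi_r2 hCAR hxy
    have rr3 : star (ψ y) * ψ x = -(ψ x * star (ψ y)) := psi_r3 hCAR hxy
    have rr4 : star (ψ y) * star (ψ x) = -(star (ψ x) * star (ψ y)) := psi_r4 hCAR x y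
    cases bx <;> cases byy <;>
      simp only [maj_ff, maj_tt, mul_smul_comm, smul_mul_assoc, add_mul, mul_add,
        sub_mul, mul_sub, smul_mul_smul_comm] <;>
      rw [rr1, rr2, rr3, rr4] <;>
      module

end psirel

section geom

variable [NeZero ν]

lemma val_one_sub (hL : 1 ≤ L) {z : ZMod (2*L)} (hz : 2 ≤ z.val) :
    (1 - z).val = 2*L + 1 - z.val := by
  haveI : NeZero (2*L) := ⟨by omega⟩
  have hlt : z.val < 2*L := ZMod.val_lt z
  have hz' : ((z.val : ℕ) : ZMod (2*L)) = z := ZMod.natCast_zmod_val z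
  have e1 : ((2*L + 1 - z.val : ℕ) : ZMod (2*L))
      = ((2*L + 1 : ℕ) : ZMod (2*L)) - ((z.val : ℕ) : ZMod (2*L)) :=
    Nat.cast_sub (by omega)
  have e2 : ((2*L + 1 : ℕ) : ZMod (2*L)) = 1 := by
    rw [Nat.cast_add, ZMod.natCast_self]
    simp
  have key : (1 : ZMod (2*L)) - z = ((2*L + 1 - z.val : ℕ) : ZMod (2*L)) := by
    rw [e1, e2, hz']
  rw [key, ZMod.val_cast_of_lt (by omega)]

lemma refl_apply_zero (x : Site ν L) : reflMap ν L x 0 = 1 - x 0 := by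
  simp [reflMap]

lemma refl_mem_plus (hL : 1 ≤ L) {x : Site ν L} (hx : x ∈ LambdaMinus ν L) :
    reflMap ν L x ∈ LambdaPlus ν L := by
  haveI : NeZero (2*L) := ⟨by omega⟩
  haveI : Fact (1 < 2*L) := ⟨by omega⟩
  simp only [LambdaMinus, Set.mem_setOf_eq] at hx
  simp only [LambdaPlus, Set.mem_setOf_eq]
  rcases hx with hx | hx
  · have hx0 : x 0 = 0 := (ZMod.val_eq_zero (x 0)).mp hx
    rw [refl_apply_zero, hx0, sub_zero, ZMod.val_one]
    exact ⟨le_refl 1, hL⟩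
  · have hlt : (x 0).val < 2*L := ZMod.val_lt _
    have hv := val_one_sub hL (z := x 0) (by omega)
    rw [refl_apply_zero, hv]
    omega

lemma refl_mem_minus (hL : 1 ≤ L) {x : Site ν L} (hx : x ∈ LambdaPlus ν L) :
    reflMap ν L x ∈ LambdaMinus ν L := by
  haveI : NeZero (2*L) := ⟨by omega⟩
  simp only [LambdaPlus, Set.mem_setOf_eq] at hx
  simp only [LambdaMinus, Set.mem_setOf_eq]
  obtain ⟨h1, h2⟩ := hx
  by_cases hv : (x 0).val = 1
  · left
    have hx0 : x 0 = 1 := by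
      have h := ZMod.natCast_zmod_val (x 0)
      rw [← h, hv, Nat.cast_one]
    rw [refl_apply_zero, hx0, sub_self, ZMod.val_zero]
  · right
    have hlt : (x 0).val < 2*L := ZMod.val_lt _
    have hv2 := val_one_sub hL (z := x 0) (by omega)
    rw [refl_apply_zero, hv2]
    omega

lemma reflMap_invol (x : Site ν L) : reflMap ν L (reflMap ν L x) = x := by
  funext i
  by_cases h : i = 0
  · subst h
    simp [reflMap]
  · simp [reflMap, h]

end geom

section thetac

variable [NeZero ν] {ψ : Site ν L → Matrix (Fin N) (Fin N) ℂ}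
  (ϑ : Matrix (Fin N) (Fin N) ℂ → Matrix (Fin N) (Fin N) ℂ)
  (hadd : ∀ A B, ϑ (A + B) = ϑ A + ϑ B)
  (hsmul : ∀ (a : ℂ) (A), ϑ (a • A) = (starRingEnd ℂ a) • ϑ A)
  (hmul : ∀ A B, ϑ (A * B) = ϑ A * ϑ B)
  (hψ : ∀ x, ϑ (ψ x) = ψ (reflMap ν L x))
  (hψstar : ∀ x, ϑ (star (ψ x)) = star (ψ (reflMap ν L x)))

include hadd hsmul hψ hψstar in
lemma theta_maj : ∀ p : Site ν L × Bool,
    ϑ (maj ψ p) = (cond p.2 (-1 : ℂ) 1) • maj ψ (reflMap ν L p.1, p.2) := by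
  rintro ⟨x, b⟩
  cases b
  · rw [maj_ff, hadd, hψ x, hψstar x]
    simp only [Bool.cond_false, one_smul, maj_ff]
  · rw [maj_tt]
    have e : ψ x - star (ψ x) = ψ x + (-1 : ℂ) • star (ψ x) := by module
    rw [hsmul, e, hadd, hsmul, hψ x, hψstar x, Complex.conj_I,
      (by simp : (starRingEnd ℂ) (-1 : ℂ) = -1)]
    simp only [Bool.cond_true, maj_tt]
    module

include hadd hsmul hmul hψ hψstar in
lemma theta_one (hCAR : CAR ψ) : ϑ (1 : Matrix (Fin N) (Fin N) ℂ) = 1 := by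
  have h := maj_cc hCAR ((fun _ => (0 : ZMod (2*L)) : Site ν L), false)
  have h2 := theta_maj ϑ hadd hsmul hψ hψstar ((fun _ => (0 : ZMod (2*L)) : Site ν L), false)
  simp only [Bool.cond_false, one_smul] at h2
  conv_lhs => rw [← h]
  rw [hmul, h2, maj_cc hCAR]

end thetac

lemma gen_mem_span [NeZero ν] {ψ : Site ν L → Matrix (Fin N) (Fin N) ℂ}
    (S : Set (Site ν L)) {M : Matrix (Fin N) (Fin N) ℂ}
    (hM : ∃ x ∈ S, M = ψ x ∨ M = star (ψ x)) :
    M ∈ RPAux.wordSpan (maj ψ) {p : Site ν L × Bool | p.1 ∈ S} := by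
  obtain ⟨x, hx, hM⟩ := hM
  have hff : maj ψ (x, false) ∈ RPAux.wordSpan (maj ψ) {p : Site ν L × Bool | p.1 ∈ S} := by
    refine Submodule.subset_span ⟨[(x, false)], ?_, RPAux.word_single.symm⟩
    intro a ha
    rw [List.mem_singleton] at ha
    subst ha
    exact hx
  have htt : maj ψ (x, true) ∈ RPAux.wordSpan (maj ψ) {p : Site ν L × Bool | p.1 ∈ S} := by
    refine Submodule.subset_span ⟨[(x, true)], ?_, RPAux.word_single.symm⟩
    intro a ha
    rw [List.mem_singleton] at ha
    subst ha
    exact hx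
  rcases hM with rfl | rfl
  · have e : ψ x = (1/2 : ℂ) • maj ψ (x, false) + (-(Complex.I)/2) • maj ψ (x, true) := by
      rw [maj_ff, maj_tt, smul_smul]
      have h2 : (-(Complex.I)/2) * Complex.I = 1/2 := by
        rw [div_mul_eq_mul_div, neg_mul, Complex.I_mul_I, neg_neg]
      rw [h2]
      module
    rw [e]
    exact add_mem (Submodule.smul_mem _ _ hff) (Submodule.smul_mem _ _ htt)
  · have e : star (ψ x) = (1/2 : ℂ) • maj ψ (x, false) + (Complex.I/2) • maj ψ (x, true) := by
      rw [maj_ff, maj_tt, smul_smul]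
      have h2 : (Complex.I/2) * Complex.I = -(1/2 : ℂ) := by
        rw [div_mul_eq_mul_div, Complex.I_mul_I]
        norm_num
      rw [h2]
      module
    rw [e]
    exact add_mem (Submodule.smul_mem _ _ hff) (Submodule.smul_mem _ _ htt)

end RPC

/-- **Reflection positivity** (Lemma 3.2): for the antilinear reflection `ϑ`
(multiplicative, star-preserving, sending `ψ(x)` to `ψ(r(x))`), any `A` in the
subalgebra `𝒜₋` generated by `{ψ(x), ψ(x)* : x ∈ Λ₋}` satisfies `tr(A ϑ(A)) ≥ 0`
(the trace is real and nonnegative); the same holds for `A ∈ 𝒜₊`. -/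
theorem reflection_positivity (ν L N : ℕ) [NeZero ν]
    (hν : 2 ≤ ν) (hL : 1 ≤ L) (hN : 1 ≤ N)
    (ψ : Site ν L → Matrix (Fin N) (Fin N) ℂ) (hCAR : CAR ψ)
    (ϑ : Matrix (Fin N) (Fin N) ℂ → Matrix (Fin N) (Fin N) ℂ)
    (hadd : ∀ A B, ϑ (A + B) = ϑ A + ϑ B)
    (hsmul : ∀ (c : ℂ) (A), ϑ (c • A) = (starRingEnd ℂ c) • ϑ A)
    (hmul : ∀ A B, ϑ (A * B) = ϑ A * ϑ B)
    (hstar : ∀ A, ϑ (star A) = star (ϑ A))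
    (hψ : ∀ x, ϑ (ψ x) = ψ (reflMap ν L x))
    (hψstar : ∀ x, ϑ (star (ψ x)) = star (ψ (reflMap ν L x))) :
    (∀ A ∈ algMinus ν L N ψ,
        0 ≤ (A * ϑ A).trace.re ∧ (A * ϑ A).trace.im = 0) ∧
    (∀ A ∈ algPlus ν L N ψ,
        0 ≤ (A * ϑ A).trace.re ∧ (A * ϑ A).trace.im = 0) := by
  haveI : NeZero (2*L) := ⟨by omega⟩
  haveI : Fact (1 < 2*L) := ⟨by omega⟩
  classical
  have hcc := RPC.maj_cc hCAR
  have hac := RPC.maj_ac hCAR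
  have hθc := RPC.theta_maj ϑ hadd hsmul hψ hψstar
  have hθ1 := RPC.theta_one ϑ hadd hsmul hmul hψ hψstar hCAR
  set S₁ : Set (Site ν L × Bool) := {p | p.1 ∈ LambdaMinus ν L} with hS₁def
  set S₂ : Set (Site ν L × Bool) := {p | p.1 ∈ LambdaPlus ν L} with hS₂def
  have hdisj : ∀ p : Site ν L × Bool, p ∈ S₁ → p ∈ S₂ → False := by
    rintro p h1 h2
    simp only [hS₁def, hS₂def, Set.mem_setOf_eq, LambdaMinus, LambdaPlus] at h1 h2
    omega
  have hne₁ : ∃ d, d ∈ S₁ := by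
    refine ⟨((fun _ => (0 : ZMod (2*L)) : Site ν L), false), ?_⟩
    show ((fun _ => (0 : ZMod (2*L)) : Site ν L) 0).val = 0 ∨ _
    left
    exact ZMod.val_zero
  have hne₂ : ∃ d, d ∈ S₂ := by
    refine ⟨((fun _ => (1 : ZMod (2*L)) : Site ν L), false), ?_⟩
    show 1 ≤ ((fun _ => (1 : ZMod (2*L)) : Site ν L) 0).val ∧ _ ≤ L
    rw [show ((fun _ => (1 : ZMod (2*L)) : Site ν L) 0) = (1 : ZMod (2*L)) from rfl,
      ZMod.val_one]
    exact ⟨le_refl 1, hL⟩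
  set F₁ : Finset (Site ν L × Bool) :=
    (Finset.univ.filter (fun x : Site ν L => x ∈ LambdaMinus ν L)) ×ˢ Finset.univ with hF₁def
  set F₂ : Finset (Site ν L × Bool) :=
    (Finset.univ.filter (fun x : Site ν L => x ∈ LambdaPlus ν L)) ×ˢ Finset.univ with hF₂def
  have hF₁mem : ∀ p : Site ν L × Bool, p ∈ F₁ ↔ p ∈ S₁ := by
    intro p
    simp [hF₁def, hS₁def]
  have hF₂mem : ∀ p : Site ν L × Bool, p ∈ F₂ ↔ p ∈ S₂ := by
    intro p
    simp [hF₂def, hS₂def]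
  have hF₁even : Even F₁.card := by
    rw [hF₁def, Finset.card_product, Finset.card_univ, Fintype.card_bool]
    exact Nat.even_mul.mpr (Or.inr (by norm_num))
  have hF₂even : Even F₂.card := by
    rw [hF₂def, Finset.card_product, Finset.card_univ, Fintype.card_bool]
    exact Nat.even_mul.mpr (Or.inr (by norm_num))
  have hodd₁ : ∀ m : List (Site ν L × Bool), m.Nodup → (∀ a ∈ m, a ∈ S₁) →
      Odd m.length → ∃ d, d ∈ S₁ ∧ d ∉ m := by
    intro m hm hsub ho
    obtain ⟨d, hd, hdm⟩ :=
      RPAux.spare_exists hF₁even hm (fun a ha => (hF₁mem a).mpr (hsub a ha)) ho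
    exact ⟨d, (hF₁mem d).mp hd, hdm⟩
  have hodd₂ : ∀ m : List (Site ν L × Bool), m.Nodup → (∀ a ∈ m, a ∈ S₂) →
      Odd m.length → ∃ d, d ∈ S₂ ∧ d ∉ m := by
    intro m hm hsub ho
    obtain ⟨d, hd, hdm⟩ :=
      RPAux.spare_exists hF₂even hm (fun a ha => (hF₂mem a).mpr (hsub a ha)) ho
    exact ⟨d, (hF₂mem d).mp hd, hdm⟩
  have hrfinj : Function.Injective (fun p : Site ν L × Bool => (reflMap ν L p.1, p.2)) := by
    have hinv : ∀ p : Site ν L × Bool,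
        (fun p : Site ν L × Bool => (reflMap ν L p.1, p.2))
          ((fun p : Site ν L × Bool => (reflMap ν L p.1, p.2)) p) = p := by
      rintro ⟨x, b⟩
      simp [RPC.reflMap_invol]
    exact Function.Involutive.injective hinv
  have hN0 : (N : ℂ) ≠ 0 := Nat.cast_ne_zero.mpr (by omega)
  have hS12 : ∀ p : Site ν L × Bool, p ∈ S₁ →
      (fun p : Site ν L × Bool => (reflMap ν L p.1, p.2)) p ∈ S₂ := by
    rintro ⟨x, b⟩ hx
    exact RPC.refl_mem_plus hL hx
  have hS21 : ∀ p : Site ν L × Bool, p ∈ S₂ →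
      (fun p : Site ν L × Bool => (reflMap ν L p.1, p.2)) p ∈ S₁ := by
    rintro ⟨x, b⟩ hx
    exact RPC.refl_mem_minus hL hx
  constructor
  · exact RPAux.rp_final hcc hac ϑ hadd hsmul hmul hθ1
      (fun p : Site ν L × Bool => (reflMap ν L p.1, p.2)) hrfinj
      (fun p : Site ν L × Bool => cond p.2 (-1 : ℂ) 1) hθc
      S₁ S₂ hdisj hne₁ hne₂ hodd₁ hodd₂ hS12 hN0 _
      (fun M hM => RPC.gen_mem_span (LambdaMinus ν L) hM)
  · exact RPAux.rp_final hcc hac ϑ hadd hsmul hmul hθ1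
      (fun p : Site ν L × Bool => (reflMap ν L p.1, p.2)) hrfinj
      (fun p : Site ν L × Bool => cond p.2 (-1 : ℂ) 1) hθc
      S₂ S₁ (fun p h2 h1 => hdisj p h1 h2) hne₂ hne₁ hodd₂ hodd₁ hS21 hN0 _
      (fun M hM => RPC.gen_mem_span (LambdaPlus ν L) hM)

end
end

section
/- Cauchy–Schwarz inequality for the reflection form: for all operators A, B in the subalgebra 𝒜₋ generated by {ψ(x), ψ(x)* : x ∈ Λ₋}, it holds that |tr(A ϑ(B))|² ≤ tr(A ϑ(A)) · tr(B ϑ(B)). -/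
open Matrix

noncomputable section

variable {ν L N : ℕ}

set_option linter.unusedSectionVars false

namespace RCS

abbrev Mat (N : ℕ) := Matrix (Fin N) (Fin N) ℂ

variable [NeZero ν] (ψ : Site ν L → Mat N)

/-- generators: `gen (x, false) = ψ x`, `gen (x, true) = ψ x *`. -/
def gen (p : Site ν L × Bool) : Mat N := if p.2 then star (ψ p.1) else ψ p.1

@[simp] lemma gen_ff (x : Site ν L) : gen ψ (x, false) = ψ x := rfl
@[simp] lemma gen_tt (x : Site ν L) : gen ψ (x, true) = star (ψ x) := rfl

def proj (y : Site ν L) (c : Bool) : Mat N := gen ψ (y, c) * gen ψ (y, !c)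

def uu (y : Site ν L) : Mat N := proj ψ y false - proj ψ y true

def mono (l : List (Site ν L × Bool)) : Mat N := (l.map (gen ψ)).prod

def PP (q : List (Site ν L × Bool)) : Mat N := (q.map (fun p => proj ψ p.1 p.2)).prod

@[simp] lemma mono_nil : mono ψ [] = 1 := rfl
lemma mono_cons (a l) : mono ψ (a :: l) = gen ψ a * mono ψ l := by
  simp [mono]
lemma mono_append (l₁ l₂) : mono ψ (l₁ ++ l₂) = mono ψ l₁ * mono ψ l₂ := by
  simp [mono]
@[simp] lemma PP_nil : PP ψ [] = 1 := rfl
lemma PP_cons (a q) : PP ψ (a :: q) = proj ψ a.1 a.2 * PP ψ q := by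
  simp [PP]

section CARlemmas
variable (hCAR : CAR ψ)
include hCAR

lemma psi_sq (x : Site ν L) : ψ x * ψ x = 0 := by
  have h := hCAR.2 x x
  have h2 : (2 : ℂ) • (ψ x * ψ x) = 0 := by
    rw [two_smul]; exact h
  have := smul_eq_zero.mp h2
  simpa using this

lemma psis_sq (x : Site ν L) : star (ψ x) * star (ψ x) = 0 := by
  have h := psi_sq ψ hCAR x
  calc star (ψ x) * star (ψ x) = star (ψ x * ψ x) := (Matrix.star_mul _ _).symm
  _ = 0 := by rw [h, star_zero]

lemma ccr (x : Site ν L) : ψ x * star (ψ x) + star (ψ x) * ψ x = 1 := by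
  have := hCAR.1 x x
  simpa using this

lemma nplus (y : Site ν L) : ψ y * star (ψ y) = 1 - star (ψ y) * ψ y :=
  eq_sub_of_add_eq (ccr ψ hCAR y)

lemma nminus (y : Site ν L) : star (ψ y) * ψ y = 1 - ψ y * star (ψ y) :=
  eq_sub_of_add_eq' (ccr ψ hCAR y)

lemma gen_ac {p q : Site ν L × Bool} (h : p.1 ≠ q.1) :
    gen ψ p * gen ψ q = -(gen ψ q * gen ψ p) := by
  obtain ⟨x, b⟩ := p
  obtain ⟨y, c⟩ := q
  simp only [ne_eq] at h
  cases b <;> cases c <;> simp only [gen_ff, gen_tt]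
  · exact eq_neg_of_add_eq_zero_left (hCAR.2 x y)
  · have := hCAR.1 x y
    rw [if_neg h] at this
    exact eq_neg_of_add_eq_zero_left this
  · have := hCAR.1 y x
    rw [if_neg (Ne.symm h)] at this
    exact eq_neg_of_add_eq_zero_right this
  · have h0 : star (ψ x * ψ y + ψ y * ψ x) = star (0 : Mat N) := by rw [hCAR.2 x y]
    simp only [star_add, Matrix.star_mul, star_zero] at h0
    exact eq_neg_of_add_eq_zero_right h0

lemma gen_mul_same (y : Site ν L) (c : Bool) : gen ψ (y, c) * gen ψ (y, c) = 0 := by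
  cases c
  · exact psi_sq ψ hCAR y
  · exact psis_sq ψ hCAR y

lemma proj_sum (y : Site ν L) : proj ψ y false + proj ψ y true = 1 := by
  simpa [proj] using ccr ψ hCAR y

lemma proj_idem (y : Site ν L) (c : Bool) : proj ψ y c * proj ψ y c = proj ψ y c := by
  cases c
  · simp only [proj, Bool.not_false, gen_ff, gen_tt]
    calc ψ y * star (ψ y) * (ψ y * star (ψ y))
        = ψ y * (star (ψ y) * ψ y) * star (ψ y) := by noncomm_ring
      _ = ψ y * (1 - ψ y * star (ψ y)) * star (ψ y) := by rw [nminus ψ hCAR y]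
      _ = ψ y * star (ψ y) - ψ y * ψ y * (star (ψ y) * star (ψ y)) := by noncomm_ring
      _ = ψ y * star (ψ y) := by rw [psi_sq ψ hCAR y]; simp
  · simp only [proj, Bool.not_true, gen_ff, gen_tt]
    calc star (ψ y) * ψ y * (star (ψ y) * ψ y)
        = star (ψ y) * (ψ y * star (ψ y)) * ψ y := by noncomm_ring
      _ = star (ψ y) * (1 - star (ψ y) * ψ y) * ψ y := by rw [nplus ψ hCAR y]
      _ = star (ψ y) * ψ y - star (ψ y) * star (ψ y) * (ψ y * ψ y) := by noncomm_ring
      _ = star (ψ y) * ψ y := by rw [psis_sq ψ hCAR y]; simp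

lemma proj_opp (y : Site ν L) {c d : Bool} (h : c ≠ d) : proj ψ y c * proj ψ y d = 0 := by
  have hd : d = !c := by cases c <;> cases d <;> simp_all
  subst hd
  cases c
  · simp only [proj, Bool.not_false, Bool.not_true, gen_ff, gen_tt]
    calc ψ y * star (ψ y) * (star (ψ y) * ψ y)
        = ψ y * (star (ψ y) * star (ψ y)) * ψ y := by noncomm_ring
      _ = 0 := by rw [psis_sq ψ hCAR y]; simp
  · simp only [proj, Bool.not_false, Bool.not_true, gen_ff, gen_tt]
    calc star (ψ y) * ψ y * (ψ y * star (ψ y))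
        = star (ψ y) * (ψ y * ψ y) * star (ψ y) := by noncomm_ring
      _ = 0 := by rw [psi_sq ψ hCAR y]; simp

end CARlemmas

section CARlemmas2
variable (hCAR : CAR ψ)
include hCAR

omit hCAR in
lemma comm_pair {a b g : Mat N} (ha : a * g = -(g * a)) (hb : b * g = -(g * b)) :
    a * b * g = g * (a * b) := by
  calc a * b * g = a * (b * g) := by rw [mul_assoc]
    _ = a * -(g * b) := by rw [hb]
    _ = -(a * g) * b := by noncomm_ring
    _ = -(-(g * a)) * b := by rw [ha]
    _ = g * (a * b) := by noncomm_ring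

lemma proj_comm_gen {z : Site ν L} {c : Bool} {q : Site ν L × Bool} (h : z ≠ q.1) :
    proj ψ z c * gen ψ q = gen ψ q * proj ψ z c :=
  comm_pair (gen_ac ψ hCAR h) (gen_ac ψ hCAR h)

lemma proj_comm_proj (z : Site ν L) (c : Bool) (y : Site ν L) (d : Bool) :
    proj ψ z c * proj ψ y d = proj ψ y d * proj ψ z c := by
  by_cases hzy : z = y
  · subst hzy
    by_cases hcd : c = d
    · subst hcd; rfl
    · rw [proj_opp ψ hCAR z hcd, proj_opp ψ hCAR z (Ne.symm hcd)]
  · calc proj ψ z c * proj ψ y d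
        = proj ψ z c * gen ψ (y, d) * gen ψ (y, !d) :=
          (mul_assoc (proj ψ z c) (gen ψ (y, d)) (gen ψ (y, !d))).symm
      _ = gen ψ (y, d) * (proj ψ z c * gen ψ (y, !d)) := by
          rw [proj_comm_gen ψ hCAR (q := (y, d)) hzy, mul_assoc]
      _ = gen ψ (y, d) * gen ψ (y, !d) * proj ψ z c := by
          rw [proj_comm_gen ψ hCAR (q := (y, !d)) hzy, mul_assoc]
      _ = proj ψ y d * proj ψ z c := rfl

lemma uu_sq (y : Site ν L) : uu ψ y * uu ψ y = 1 := by
  have e : uu ψ y * uu ψ y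
      = proj ψ y false * proj ψ y false - proj ψ y false * proj ψ y true
        - proj ψ y true * proj ψ y false + proj ψ y true * proj ψ y true := by
    simp only [uu]; noncomm_ring
  rw [e, proj_idem ψ hCAR, proj_idem ψ hCAR,
    proj_opp ψ hCAR y (by simp : (false : Bool) ≠ true),
    proj_opp ψ hCAR y (by simp : (true : Bool) ≠ false)]
  rw [sub_zero, sub_zero, proj_sum ψ hCAR]

lemma uu_anti (y : Site ν L) (b : Bool) :
    uu ψ y * gen ψ (y, b) = -(gen ψ (y, b) * uu ψ y) := by
  cases b
  · simp only [uu, proj, Bool.not_false, Bool.not_true, gen_ff, gen_tt]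
    have e1 : (ψ y * star (ψ y) - star (ψ y) * ψ y) * ψ y
        = ψ y * star (ψ y) * ψ y - star (ψ y) * (ψ y * ψ y) := by noncomm_ring
    have e2 : ψ y * (ψ y * star (ψ y) - star (ψ y) * ψ y)
        = ψ y * ψ y * star (ψ y) - ψ y * star (ψ y) * ψ y := by noncomm_ring
    rw [e1, e2, psi_sq ψ hCAR y]
    simp
  · simp only [uu, proj, Bool.not_false, Bool.not_true, gen_ff, gen_tt]
    have e1 : (ψ y * star (ψ y) - star (ψ y) * ψ y) * star (ψ y)
        = ψ y * (star (ψ y) * star (ψ y)) - star (ψ y) * ψ y * star (ψ y) := by noncomm_ring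
    have e2 : star (ψ y) * (ψ y * star (ψ y) - star (ψ y) * ψ y)
        = star (ψ y) * ψ y * star (ψ y) - star (ψ y) * star (ψ y) * ψ y := by noncomm_ring
    rw [e1, e2, psis_sq ψ hCAR y]
    simp

lemma uu_comm_gen {y : Site ν L} {q : Site ν L × Bool} (h : y ≠ q.1) :
    uu ψ y * gen ψ q = gen ψ q * uu ψ y := by
  simp only [uu, sub_mul, mul_sub]
  rw [proj_comm_gen ψ hCAR h, proj_comm_gen ψ hCAR h]

lemma uu_comm_proj (y z : Site ν L) (d : Bool) :
    uu ψ y * proj ψ z d = proj ψ z d * uu ψ y := by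
  rw [uu, sub_mul, proj_comm_proj ψ hCAR y false z d, proj_comm_proj ψ hCAR y true z d,
    ← mul_sub, ← uu]

lemma uu_comm_uu (y z : Site ν L) : uu ψ y * uu ψ z = uu ψ z * uu ψ y := by
  show uu ψ y * (proj ψ z false - proj ψ z true) = (proj ψ z false - proj ψ z true) * uu ψ y
  rw [mul_sub, sub_mul, uu_comm_proj ψ hCAR y z false, uu_comm_proj ψ hCAR y z true]

omit hCAR in
lemma trace_zero_conj {u Z : Mat N} (hu : u * u = 1) (h : u * Z * u = -Z) :
    Z.trace = 0 := by
  have h1 : (u * Z * u).trace = Z.trace := by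
    rw [mul_assoc, Matrix.trace_mul_comm, mul_assoc, hu, mul_one]
  rw [h] at h1
  simp only [Matrix.trace_neg] at h1
  have h2 : (2 : ℂ) * Z.trace = 0 := by linear_combination -h1
  have := mul_eq_zero.mp h2
  simpa using this

/-- halving identity -/
lemma halving {y : Site ν L} {X : Mat N} (h1 : X * ψ y = ψ y * X)
    (h2 : X * star (ψ y) = star (ψ y) * X) (c : Bool) :
    2 * (X * proj ψ y c).trace = X.trace := by
  have key : (X * proj ψ y false).trace = (X * proj ψ y true).trace := by
    simp only [proj, Bool.not_false, Bool.not_true, gen_ff, gen_tt]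
    calc (X * (ψ y * star (ψ y))).trace
        = ((X * ψ y) * star (ψ y)).trace := by rw [mul_assoc]
      _ = (star (ψ y) * (X * ψ y)).trace := by rw [Matrix.trace_mul_comm]
      _ = ((star (ψ y) * X) * ψ y).trace := by rw [mul_assoc]
      _ = ((X * star (ψ y)) * ψ y).trace := by rw [h2]
      _ = (X * (star (ψ y) * ψ y)).trace := by rw [mul_assoc]
  have hsum : (X * proj ψ y false).trace + (X * proj ψ y true).trace = X.trace := by
    rw [← Matrix.trace_add, ← mul_add, proj_sum ψ hCAR, mul_one]
  cases c
  · rw [two_mul]; nth_rewrite 2 [key]; exact hsum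
  · rw [two_mul]; nth_rewrite 1 [← key]; exact hsum

end CARlemmas2

/-! ### list product commutation helpers -/

lemma comm_listprod {G : List (Mat N)} {X : Mat N} (h : ∀ g ∈ G, X * g = g * X) :
    X * G.prod = G.prod * X :=
  (Commute.list_prod_right G X (fun g hg => (h g hg))).eq

def CommP (X : Mat N) : Prop :=
  ∀ y ∈ LambdaPlus ν L, X * ψ y = ψ y * X ∧ X * star (ψ y) = star (ψ y) * X

lemma commP_one : CommP ψ (1 : Mat N) := by
  intro y _; constructor <;> simp

lemma commP_gen {X : Mat N} (hX : CommP ψ X) {q : Site ν L × Bool} (hq : q.1 ∈ LambdaPlus ν L) :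
    X * gen ψ q = gen ψ q * X := by
  obtain ⟨y, b⟩ := q
  cases b
  · exact (hX y hq).1
  · exact (hX y hq).2

section Lists
variable (hCAR : CAR ψ)
include hCAR

lemma PP_comm_gen {q : List (Site ν L × Bool)} {b : Site ν L × Bool}
    (h : ∀ p ∈ q, p.1 ≠ b.1) : PP ψ q * gen ψ b = gen ψ b * PP ψ q := by
  refine (comm_listprod ?_).symm
  intro g hg
  obtain ⟨p, hp, rfl⟩ := List.mem_map.mp hg
  exact (proj_comm_gen ψ hCAR (h p hp)).symm

lemma PP_comm_proj (q : List (Site ν L × Bool)) (z : Site ν L) (d : Bool) :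
    PP ψ q * proj ψ z d = proj ψ z d * PP ψ q := by
  refine (comm_listprod ?_).symm
  intro g hg
  obtain ⟨p, hp, rfl⟩ := List.mem_map.mp hg
  exact proj_comm_proj ψ hCAR z d p.1 p.2

lemma PP_comm_uu (q : List (Site ν L × Bool)) (y : Site ν L) :
    uu ψ y * PP ψ q = PP ψ q * uu ψ y := by
  apply comm_listprod
  intro g hg
  obtain ⟨p, hp, rfl⟩ := List.mem_map.mp hg
  exact uu_comm_proj ψ hCAR y p.1 p.2

lemma mono_comm_uu {l : List (Site ν L × Bool)} {y : Site ν L}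
    (h : ∀ p ∈ l, p.1 ≠ y) : uu ψ y * mono ψ l = mono ψ l * uu ψ y := by
  apply comm_listprod
  intro g hg
  obtain ⟨p, hp, rfl⟩ := List.mem_map.mp hg
  exact uu_comm_gen ψ hCAR (Ne.symm (h p hp))

lemma PP_append (q₁ q₂ : List (Site ν L × Bool)) :
    PP ψ (q₁ ++ q₂) = PP ψ q₁ * PP ψ q₂ := by
  simp [PP]

lemma PP_extract (q₁ q₂ : List (Site ν L × Bool)) (c : Site ν L × Bool) :
    PP ψ (q₁ ++ c :: q₂) = proj ψ c.1 c.2 * PP ψ (q₁ ++ q₂) := by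
  rw [PP_append ψ hCAR, PP_cons, PP_append ψ hCAR, ← mul_assoc, ← mul_assoc,
    PP_comm_proj ψ hCAR q₁ c.1 c.2]

lemma mono_swap {b : Site ν L × Bool} :
    ∀ (t : List (Site ν L × Bool)), (∀ p ∈ t, p.1 ≠ b.1) →
    mono ψ t * gen ψ b = ((-1 : ℂ) ^ t.length) • (gen ψ b * mono ψ t) := by
  intro t
  induction t with
  | nil => intro _; simp
  | cons c T IH =>
    intro h
    have hc : c.1 ≠ b.1 := h c (by simp)
    have hT : ∀ p ∈ T, p.1 ≠ b.1 := fun p hp => h p (by simp [hp])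
    rw [mono_cons, mul_assoc, IH hT]
    rw [mul_smul_comm, ← mul_assoc, gen_ac ψ hCAR hc]
    rw [List.length_cons, pow_succ]
    calc ((-1:ℂ) ^ T.length) • (-(gen ψ b * gen ψ c) * mono ψ T)
        = ((-1:ℂ) ^ T.length) • (-(gen ψ b * (gen ψ c * mono ψ T))) := by
          rw [neg_mul, mul_assoc]
      _ = ((-1:ℂ) ^ T.length * -1) • (gen ψ b * (gen ψ c * mono ψ T)) := by
          rw [smul_neg, mul_neg_one, neg_smul]
      _ = ((-1:ℂ) ^ T.length * -1) • (gen ψ b * mono ψ (c :: T)) := by rw [mono_cons]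

lemma parity_trace {y : Site ν L} {b : Bool} {t : List (Site ν L × Bool)} {W : Mat N}
    (hW : W * uu ψ y = uu ψ y * W) (ht : ∀ p ∈ t, p.1 ≠ y) :
    (W * (gen ψ (y, b) * mono ψ t)).trace = 0 := by
  apply trace_zero_conj (uu_sq ψ hCAR y)
  have h1 : uu ψ y * (W * (gen ψ (y, b) * mono ψ t)) * uu ψ y
      = W * ((uu ψ y * gen ψ (y, b)) * (mono ψ t * uu ψ y)) := by
    rw [← mul_assoc, ← hW]
    noncomm_ring
  rw [h1, uu_anti ψ hCAR y b, ← mono_comm_uu ψ hCAR ht]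
  calc W * (-(gen ψ (y, b) * uu ψ y) * (uu ψ y * mono ψ t))
      = -(W * (gen ψ (y, b) * ((uu ψ y * uu ψ y) * mono ψ t))) := by noncomm_ring
    _ = -(W * (gen ψ (y, b) * mono ψ t)) := by rw [uu_sq ψ hCAR y, one_mul]

lemma base_trace :
    ∀ (q : List (Site ν L × Bool)), (∀ p ∈ q, p.1 ∈ LambdaPlus ν L) →
    (q.map Prod.fst).Nodup → ∀ X : Mat N, CommP ψ X →
    (2 : ℂ) ^ q.length * (X * PP ψ q).trace = X.trace := by
  intro q
  induction q with
  | nil => intro _ _ X _; simp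
  | cons a T IH =>
    intro hmem hnd X hX
    have haT : ∀ p ∈ T, p.1 ≠ a.1 := by
      intro p hp
      have := (List.nodup_cons.mp hnd).1
      intro he
      exact this (he ▸ List.mem_map_of_mem (f := Prod.fst) hp)
    have hcomm : (X * PP ψ T) * ψ a.1 = ψ a.1 * (X * PP ψ T) := by
      have h1 : PP ψ T * ψ a.1 = ψ a.1 * PP ψ T := by
        have := PP_comm_gen ψ hCAR (q := T) (b := (a.1, false)) haT
        simpa using this
      have h2 := commP_gen ψ hX (q := (a.1, false)) (hmem a (by simp))
      simp only [gen_ff] at h2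
      rw [mul_assoc, h1, ← mul_assoc, h2, mul_assoc]
    have hcomms : (X * PP ψ T) * star (ψ a.1) = star (ψ a.1) * (X * PP ψ T) := by
      have h1 : PP ψ T * star (ψ a.1) = star (ψ a.1) * PP ψ T := by
        have := PP_comm_gen ψ hCAR (q := T) (b := (a.1, true)) haT
        simpa using this
      have h2 := commP_gen ψ hX (q := (a.1, true)) (hmem a (by simp))
      simp only [gen_tt] at h2
      rw [mul_assoc, h1, ← mul_assoc, h2, mul_assoc]
    have harr : X * PP ψ (a :: T) = (X * PP ψ T) * proj ψ a.1 a.2 := by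
      rw [PP_cons, ← PP_comm_proj ψ hCAR T a.1 a.2, ← mul_assoc]
    rw [harr, List.length_cons, pow_succ]
    have hhalf := halving ψ hCAR hcomm hcomms a.2
    calc (2:ℂ) ^ T.length * 2 * ((X * PP ψ T) * proj ψ a.1 a.2).trace
        = (2:ℂ) ^ T.length * (2 * ((X * PP ψ T) * proj ψ a.1 a.2).trace) := by ring
      _ = (2:ℂ) ^ T.length * (X * PP ψ T).trace := by rw [hhalf]
      _ = X.trace := IH (fun p hp => hmem p (by simp [hp])) (List.nodup_cons.mp hnd).2 X hX

lemma base_combined (q : List (Site ν L × Bool)) (hmem : ∀ p ∈ q, p.1 ∈ LambdaPlus ν L)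
    (hnd : (q.map Prod.fst).Nodup) (X : Mat N) (hX : CommP ψ X) :
    (N : ℂ) * (X * PP ψ q).trace = X.trace * (PP ψ q).trace := by
  have h1 := base_trace ψ hCAR q hmem hnd X hX
  have h2 := base_trace ψ hCAR q hmem hnd 1 (commP_one ψ)
  rw [one_mul, Matrix.trace_one] at h2
  have hne : ((2:ℂ) ^ q.length) ≠ 0 := pow_ne_zero _ two_ne_zero
  apply mul_left_cancel₀ hne
  calc (2:ℂ) ^ q.length * ((N:ℂ) * (X * PP ψ q).trace)
      = (N : ℂ) * ((2:ℂ) ^ q.length * (X * PP ψ q).trace) := by ring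
    _ = (N : ℂ) * X.trace := by rw [h1]
    _ = X.trace * (Fintype.card (Fin N) : ℂ) := by simp [mul_comm]
    _ = X.trace * ((2:ℂ) ^ q.length * (PP ψ q).trace) := by rw [h2]
    _ = (2:ℂ) ^ q.length * (X.trace * (PP ψ q).trace) := by ring

lemma uu_anti' (a : Site ν L × Bool) :
    uu ψ a.1 * gen ψ a = -(gen ψ a * uu ψ a.1) := by
  obtain ⟨y, b⟩ := a
  exact uu_anti ψ hCAR y b

lemma parity_trace' {a : Site ν L × Bool} {t : List (Site ν L × Bool)}
    {W : Mat N} (hW : W * uu ψ a.1 = uu ψ a.1 * W) (ht : ∀ p ∈ t, p.1 ≠ a.1) :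
    (W * (gen ψ a * mono ψ t)).trace = 0 := by
  apply trace_zero_conj (uu_sq ψ hCAR a.1)
  have h1 : uu ψ a.1 * (W * (gen ψ a * mono ψ t)) * uu ψ a.1
      = W * ((uu ψ a.1 * gen ψ a) * (mono ψ t * uu ψ a.1)) := by
    rw [← mul_assoc, ← hW]
    noncomm_ring
  rw [h1, uu_anti' ψ hCAR a, ← mono_comm_uu ψ hCAR ht]
  calc W * (-(gen ψ a * uu ψ a.1) * (uu ψ a.1 * mono ψ t))
      = -(W * (gen ψ a * ((uu ψ a.1 * uu ψ a.1) * mono ψ t))) := by noncomm_ring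
    _ = -(W * (gen ψ a * mono ψ t)) := by rw [uu_sq ψ hCAR a.1, one_mul]

omit hCAR in
lemma commP_proj {X : Mat N} (hX : CommP ψ X) {y : Site ν L} (hy : y ∈ LambdaPlus ν L)
    (c : Bool) : X * proj ψ y c = proj ψ y c * X := by
  have h1 := commP_gen ψ hX (q := (y, c)) hy
  have h2 := commP_gen ψ hX (q := (y, !c)) hy
  show X * (gen ψ (y, c) * gen ψ (y, !c)) = gen ψ (y, c) * gen ψ (y, !c) * X
  rw [← mul_assoc, h1, mul_assoc, h2, ← mul_assoc]

omit hCAR in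
lemma commP_uu {X : Mat N} (hX : CommP ψ X) {y : Site ν L} (hy : y ∈ LambdaPlus ν L) :
    X * uu ψ y = uu ψ y * X := by
  show X * (proj ψ y false - proj ψ y true) = (proj ψ y false - proj ψ y true) * X
  rw [mul_sub, sub_mul, commP_proj ψ hX hy false, commP_proj ψ hX hy true]

omit hCAR in
lemma first_split {y : Site ν L} :
    ∀ (t : List (Site ν L × Bool)), (∃ p ∈ t, p.1 = y) →
    ∃ t₁ b t₂, t = t₁ ++ b :: t₂ ∧ b.1 = y ∧ ∀ p ∈ t₁, p.1 ≠ y := by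
  intro t
  induction t with
  | nil => rintro ⟨p, hp, _⟩; cases hp
  | cons a T IH =>
    intro h
    by_cases ha : a.1 = y
    · exact ⟨[], a, T, by simp, ha, by simp⟩
    · obtain ⟨p, hp, hpy⟩ := h
      have hpT : p ∈ T := by
        rcases List.mem_cons.mp hp with h1 | h1
        · exact absurd (h1 ▸ hpy) ha
        · exact h1
      obtain ⟨t₁, b, t₂, he, hb, ht₁⟩ := IH ⟨p, hpT, hpy⟩
      refine ⟨a :: t₁, b, t₂, by simp [he], hb, ?_⟩
      intro q hq
      rcases List.mem_cons.mp hq with rfl | hq'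
      · exact ha
      · exact ht₁ q hq'

lemma core :
    ∀ (n : ℕ) (l : List (Site ν L × Bool)), l.length = n →
    (∀ p ∈ l, p.1 ∈ LambdaPlus ν L) →
    ∀ (q : List (Site ν L × Bool)), (∀ p ∈ q, p.1 ∈ LambdaPlus ν L) →
    (q.map Prod.fst).Nodup →
    ∀ X : Mat N, CommP ψ X →
    (N : ℂ) * (X * (PP ψ q * mono ψ l)).trace = X.trace * (PP ψ q * mono ψ l).trace := by
  intro n
  induction n using Nat.strong_induction_on with
  | _ n IH =>
  intro l hln hlmem q hqmem hqnd X hX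
  cases l with
  | nil =>
    simp only [mono_nil, mul_one]
    exact base_combined ψ hCAR q hqmem hqnd X hX
  | cons a t =>
    have hay : a.1 ∈ LambdaPlus ν L := hlmem a (by simp)
    by_cases hex : ∃ p ∈ t, p.1 = a.1
    · -- second occurrence of the mode of `a` exists in `t`
      obtain ⟨t₁, b, t₂, hteq, hb, ht₁⟩ := first_split t hex
      subst hteq
      have hbt : ∀ p ∈ t₁, p.1 ≠ b.1 := fun p hp => hb ▸ ht₁ p hp
      set ε : ℂ := (-1 : ℂ) ^ t₁.length with hεdef
      have hml : mono ψ (a :: (t₁ ++ b :: t₂))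
          = ε • ((gen ψ a * gen ψ b) * mono ψ (t₁ ++ t₂)) := by
        rw [mono_cons, mono_append, mono_cons, ← mul_assoc (mono ψ t₁),
          mono_swap ψ hCAR t₁ hbt, smul_mul_assoc, mul_smul_comm, mono_append]
        rw [mul_assoc (gen ψ b), ← mul_assoc (gen ψ a), ← hεdef]
      have hm'len : (t₁ ++ t₂).length < n := by
        simp only [List.length_cons, List.length_append] at hln ⊢
        omega
      have hm'mem : ∀ p ∈ t₁ ++ t₂, p.1 ∈ LambdaPlus ν L := by
        intro p hp
        rcases List.mem_append.mp hp with h | h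
        · exact hlmem p (by simp [h])
        · exact hlmem p (by simp [h])
      -- common finishing move
      have finish : ∀ q' : List (Site ν L × Bool), (∀ p ∈ q', p.1 ∈ LambdaPlus ν L) →
          ((q'.map Prod.fst).Nodup) →
          PP ψ q * mono ψ (a :: (t₁ ++ b :: t₂)) = ε • (PP ψ q' * mono ψ (t₁ ++ t₂)) →
          (N : ℂ) * (X * (PP ψ q * mono ψ (a :: (t₁ ++ b :: t₂)))).trace
            = X.trace * (PP ψ q * mono ψ (a :: (t₁ ++ b :: t₂))).trace := by
        intro q' hq'mem hq'nd heq
        have hrec := IH (t₁ ++ t₂).length hm'len (t₁ ++ t₂) rfl hm'mem q' hq'mem hq'nd X hX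
        rw [heq, mul_smul_comm, Matrix.trace_smul, Matrix.trace_smul]
        simp only [smul_eq_mul]
        linear_combination ε * hrec
      by_cases hab : a.2 = b.2
      · -- gen a * gen b = 0
        have hbeq : b = (a.1, a.2) := by
          apply Prod.ext
          · exact hb
          · exact hab.symm
        have h0 : gen ψ a * gen ψ b = 0 := by
          rw [hbeq, show a = (a.1, a.2) from rfl]
          exact gen_mul_same ψ hCAR a.1 a.2
        rw [hml, h0]
        simp only [zero_mul, smul_zero, mul_zero, Matrix.trace_zero]
      · -- gen a * gen b = proj a.1 a.2
        have hbeq : b = (a.1, !a.2) := by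
          apply Prod.ext
          · exact hb
          · exact Bool.eq_not_iff.mpr (fun h => hab h.symm)
        have hp : gen ψ a * gen ψ b = proj ψ a.1 a.2 := by
          rw [hbeq, show a = (a.1, a.2) from rfl]
          rfl
        by_cases hmemq : a.1 ∈ q.map Prod.fst
        · -- mode of `a` already in the projection list
          have : ∃ p ∈ q, p.1 = a.1 := by
            obtain ⟨p, hp', he⟩ := List.mem_map.mp hmemq
            exact ⟨p, hp', he⟩
          obtain ⟨q₁, c, q₂, hqeq, hc, _⟩ := first_split q this
          have hqext : PP ψ q = proj ψ c.1 c.2 * PP ψ (q₁ ++ q₂) := by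
            rw [hqeq]; exact PP_extract ψ hCAR q₁ q₂ c
          by_cases hcc : c.2 = a.2
          · -- absorbed: PP q * proj = PP q
            have habs : PP ψ q * proj ψ a.1 a.2 = PP ψ q := by
              rw [hqext, mul_assoc, PP_comm_proj ψ hCAR (q₁ ++ q₂) a.1 a.2, ← mul_assoc]
              rw [hc, hcc, proj_idem ψ hCAR]
            apply finish q hqmem hqnd
            rw [hml, mul_smul_comm, hp, ← mul_assoc, habs]
          · -- killed: PP q * proj = 0
            have habs : PP ψ q * proj ψ a.1 a.2 = 0 := by
              rw [hqext, mul_assoc, PP_comm_proj ψ hCAR (q₁ ++ q₂) a.1 a.2, ← mul_assoc]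
              rw [hc, proj_opp ψ hCAR a.1 hcc]
              simp
            have hz : PP ψ q * mono ψ (a :: (t₁ ++ b :: t₂)) = 0 := by
              rw [hml, mul_smul_comm, hp, ← mul_assoc, habs]
              simp
            rw [hz]
            simp only [mul_zero, Matrix.trace_zero]
        · -- new mode: extend the projection list
          apply finish ((a.1, a.2) :: q)
          · intro p hp'
            rcases List.mem_cons.mp hp' with rfl | h
            · exact hay
            · exact hqmem p h
          · simp only [List.map_cons, List.nodup_cons]
            exact ⟨hmemq, hqnd⟩
          · rw [hml, mul_smul_comm, hp, ← mul_assoc, PP_comm_proj ψ hCAR q a.1 a.2]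
            rw [← PP_cons ψ ((a.1, a.2)) q]
    · -- parity: the mode of `a` occurs exactly once
      push_neg at hex
      have e1 : X * (PP ψ q * mono ψ (a :: t)) = (X * PP ψ q) * (gen ψ a * mono ψ t) := by
        rw [mono_cons, ← mul_assoc, mul_assoc]
      have e2 : PP ψ q * mono ψ (a :: t) = PP ψ q * (gen ψ a * mono ψ t) := by
        rw [mono_cons]
      have hWX : (X * PP ψ q) * uu ψ a.1 = uu ψ a.1 * (X * PP ψ q) := by
        rw [mul_assoc, ← PP_comm_uu ψ hCAR q a.1, ← mul_assoc, commP_uu ψ hX hay, mul_assoc]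
      have hW2 : PP ψ q * uu ψ a.1 = uu ψ a.1 * PP ψ q := (PP_comm_uu ψ hCAR q a.1).symm
      rw [e1, e2, parity_trace' ψ hCAR hWX hex, parity_trace' ψ hCAR hW2 hex]
      simp only [mul_zero]

end Lists

/-! ### the global minus-parity operator -/

lemma halves_disjoint {x y : Site ν L} (hx : x ∈ LambdaMinus ν L)
    (hy : y ∈ LambdaPlus ν L) : x ≠ y := by
  intro he
  subst he
  obtain ⟨h1, h2⟩ := hy
  rcases hx with h | h
  · omega
  · omega

section Gamma
variable (hCAR : CAR ψ)
include hCAR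

lemma uuprod_comm {ℓ : List (Site ν L)} {Z : Mat N}
    (h : ∀ x ∈ ℓ, Z * uu ψ x = uu ψ x * Z) :
    Z * (ℓ.map (uu ψ)).prod = (ℓ.map (uu ψ)).prod * Z := by
  apply comm_listprod
  intro g hg
  obtain ⟨x, hx, rfl⟩ := List.mem_map.mp hg
  exact h x hx

lemma uuprod_sq : ∀ ℓ : List (Site ν L),
    (ℓ.map (uu ψ)).prod * (ℓ.map (uu ψ)).prod = 1 := by
  intro ℓ
  induction ℓ with
  | nil => simp
  | cons x T IH =>
    have hc : (T.map (uu ψ)).prod * uu ψ x = uu ψ x * (T.map (uu ψ)).prod :=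
      (uuprod_comm ψ hCAR (fun z _ => uu_comm_uu ψ hCAR x z)).symm
    simp only [List.map_cons, List.prod_cons]
    calc uu ψ x * (T.map (uu ψ)).prod * (uu ψ x * (T.map (uu ψ)).prod)
        = uu ψ x * ((T.map (uu ψ)).prod * uu ψ x) * (T.map (uu ψ)).prod := by noncomm_ring
      _ = (uu ψ x * uu ψ x) * ((T.map (uu ψ)).prod * (T.map (uu ψ)).prod) := by
          rw [hc]; noncomm_ring
      _ = 1 := by rw [uu_sq ψ hCAR, IH, one_mul]

lemma uuprod_anti {p : Site ν L × Bool} :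
    ∀ (ℓ : List (Site ν L)), ℓ.Nodup → p.1 ∈ ℓ →
    (ℓ.map (uu ψ)).prod * gen ψ p = -(gen ψ p * (ℓ.map (uu ψ)).prod) := by
  intro ℓ
  induction ℓ with
  | nil => intro _ h; cases h
  | cons x T IH =>
    intro hnd hp
    simp only [List.map_cons, List.prod_cons]
    have hndT := (List.nodup_cons.mp hnd).2
    rcases List.mem_cons.mp hp with he | hT
    · -- p.1 = x
      have hxT : x ∉ T := (List.nodup_cons.mp hnd).1
      have hcomm : (T.map (uu ψ)).prod * gen ψ p = gen ψ p * (T.map (uu ψ)).prod := by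
        refine (comm_listprod ?_).symm
        intro g hg
        obtain ⟨z, hz, rfl⟩ := List.mem_map.mp hg
        have hzx : z ≠ p.1 := by
          intro hzz; exact hxT ((hzz.trans he) ▸ hz)
        exact (uu_comm_gen ψ hCAR hzx).symm
      have hanti : uu ψ x * gen ψ p = -(gen ψ p * uu ψ x) := by
        rw [← he]; exact uu_anti' ψ hCAR p
      calc uu ψ x * (T.map (uu ψ)).prod * gen ψ p
          = uu ψ x * (gen ψ p * (T.map (uu ψ)).prod) := by rw [mul_assoc, hcomm]
        _ = (uu ψ x * gen ψ p) * (T.map (uu ψ)).prod := by rw [mul_assoc]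
        _ = -(gen ψ p * (uu ψ x * (T.map (uu ψ)).prod)) := by
            rw [hanti]; noncomm_ring
    · -- p.1 ∈ T
      by_cases hxp : x = p.1
      · exfalso; exact (List.nodup_cons.mp hnd).1 (hxp ▸ hT)
      · calc uu ψ x * (T.map (uu ψ)).prod * gen ψ p
            = uu ψ x * ((T.map (uu ψ)).prod * gen ψ p) := by rw [mul_assoc]
          _ = uu ψ x * -(gen ψ p * (T.map (uu ψ)).prod) := by rw [IH hndT hT]
          _ = -((uu ψ x * gen ψ p) * (T.map (uu ψ)).prod) := by noncomm_ring
          _ = -(gen ψ p * (uu ψ x * (T.map (uu ψ)).prod)) := by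
              rw [uu_comm_gen ψ hCAR hxp]; noncomm_ring

lemma uuprod_comm_gen {p : Site ν L × Bool} {ℓ : List (Site ν L)} (hp : p.1 ∉ ℓ) :
    (ℓ.map (uu ψ)).prod * gen ψ p = gen ψ p * (ℓ.map (uu ψ)).prod := by
  refine (comm_listprod ?_).symm
  intro g hg
  obtain ⟨z, hz, rfl⟩ := List.mem_map.mp hg
  have : z ≠ p.1 := fun h => hp (h ▸ hz)
  exact (uu_comm_gen ψ hCAR this).symm

lemma gen_mem_minus {x : Site ν L} (hx : x ∈ LambdaMinus ν L) (b : Bool) :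
    gen ψ (x, b) ∈ algMinus ν L N ψ := by
  apply Algebra.subset_adjoin
  cases b
  · exact ⟨x, hx, Or.inl rfl⟩
  · exact ⟨x, hx, Or.inr rfl⟩

lemma uu_mem_minus {x : Site ν L} (hx : x ∈ LambdaMinus ν L) :
    uu ψ x ∈ algMinus ν L N ψ := by
  apply sub_mem <;>
    exact mul_mem (gen_mem_minus ψ hCAR hx _) (gen_mem_minus ψ hCAR hx _)

lemma uuprod_mem_minus {ℓ : List (Site ν L)} (hmem : ∀ x ∈ ℓ, x ∈ LambdaMinus ν L) :
    (ℓ.map (uu ψ)).prod ∈ algMinus ν L N ψ := by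
  induction ℓ with
  | nil => simpa using one_mem _
  | cons x T IH =>
    simp only [List.map_cons, List.prod_cons]
    exact mul_mem (uu_mem_minus ψ hCAR (hmem x (by simp)))
      (IH (fun z hz => hmem z (by simp [hz])))

omit hCAR in
lemma comm_algPlus {Z : Mat N}
    (hgen : ∀ p : Site ν L × Bool, p.1 ∈ LambdaPlus ν L → Z * gen ψ p = gen ψ p * Z) :
    ∀ C ∈ algPlus ν L N ψ, Z * C = C * Z := by
  intro C hC
  induction hC using Algebra.adjoin_induction with
  | mem M hM =>
    obtain ⟨x, hx, hM'⟩ := hM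
    rcases hM' with rfl | rfl
    · exact hgen (x, false) hx
    · exact hgen (x, true) hx
  | algebraMap r => exact (Algebra.commutes r Z).symm
  | add u v hu hv ihu ihv => rw [mul_add, add_mul, ihu, ihv]
  | mul u v hu hv ihu ihv => rw [← mul_assoc, ihu, mul_assoc, ihv, ← mul_assoc]

/-- two involutions anticommuting with all the minus generators implement the same
conjugation on `𝒜₋` -/
lemma flip_eq {e G : Mat N} (he : e * e = 1) (hG : G * G = 1)
    (hgen : ∀ p : Site ν L × Bool, p.1 ∈ LambdaMinus ν L → e * gen ψ p = -(gen ψ p * e))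
    (hgenG : ∀ p : Site ν L × Bool, p.1 ∈ LambdaMinus ν L → G * gen ψ p = -(gen ψ p * G)) :
    ∀ A ∈ algMinus ν L N ψ, e * A * e = G * A * G := by
  intro A hA
  induction hA using Algebra.adjoin_induction with
  | mem M hM =>
    obtain ⟨x, hx, hM'⟩ := hM
    have key : ∀ (u : Mat N), u * u = 1 →
        (∀ p : Site ν L × Bool, p.1 ∈ LambdaMinus ν L → u * gen ψ p = -(gen ψ p * u)) →
        ∀ b, u * gen ψ (x, b) * u = -(gen ψ (x, b)) := by
      intro u hu hgu b
      calc u * gen ψ (x, b) * u = -(gen ψ (x, b) * u) * u := by rw [hgu (x, b) hx]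
        _ = -(gen ψ (x, b) * (u * u)) := by noncomm_ring
        _ = -(gen ψ (x, b)) := by rw [hu, mul_one]
    rcases hM' with rfl | rfl
    · rw [show ψ x = gen ψ (x, false) from rfl, key e he hgen false, key G hG hgenG false]
    · rw [show star (ψ x) = gen ψ (x, true) from rfl, key e he hgen true, key G hG hgenG true]
  | algebraMap r =>
    have : ∀ u : Mat N, u * u = 1 → u * algebraMap ℂ (Mat N) r * u = algebraMap ℂ (Mat N) r := by
      intro u hu
      rw [← Algebra.commutes r u, mul_assoc, hu, mul_one]
    rw [this e he, this G hG]
  | add u v hu hv ihu ihv => rw [mul_add, add_mul, mul_add, add_mul, ihu, ihv]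
  | mul u v hu hv ihu ihv =>
    have expand : ∀ w : Mat N, w * w = 1 → w * (u * v) * w = (w * u * w) * (w * v * w) := by
      intro w hw
      calc w * (u * v) * w = w * u * (w * w) * v * w := by rw [hw]; noncomm_ring
        _ = (w * u * w) * (w * v * w) := by noncomm_ring
    rw [expand e he, expand G hG, ihu, ihv]

end Gamma

/-! ### the unitaries vv, ww and the even part -/

def vv (y : Site ν L) : Mat N := ψ y + star (ψ y)
def ww (y : Site ν L) : Mat N := Complex.I • (ψ y - star (ψ y))

section VW
variable (hCAR : CAR ψ)
include hCAR

lemma vv_sq (y : Site ν L) : vv ψ y * vv ψ y = 1 := by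
  have e : vv ψ y * vv ψ y
      = ψ y * ψ y + (ψ y * star (ψ y) + star (ψ y) * ψ y)
        + star (ψ y) * star (ψ y) := by
    simp only [vv]; noncomm_ring
  rw [e, psi_sq ψ hCAR, psis_sq ψ hCAR, ccr ψ hCAR]
  simp

lemma ww_sq (y : Site ν L) : ww ψ y * ww ψ y = 1 := by
  have e : ww ψ y * ww ψ y
      = (Complex.I * Complex.I) • ((ψ y - star (ψ y)) * (ψ y - star (ψ y))) := by
    simp only [ww, smul_mul_assoc, mul_smul_comm, smul_smul]
  have e2 : (ψ y - star (ψ y)) * (ψ y - star (ψ y))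
      = ψ y * ψ y - (ψ y * star (ψ y) + star (ψ y) * ψ y) + star (ψ y) * star (ψ y) := by
    noncomm_ring
  rw [e, e2, psi_sq ψ hCAR, psis_sq ψ hCAR, ccr ψ hCAR, Complex.I_mul_I]
  simp

lemma vv_anti {y : Site ν L} {p : Site ν L × Bool} (h : p.1 ≠ y) :
    vv ψ y * gen ψ p = -(gen ψ p * vv ψ y) := by
  have h1 : gen ψ (y, false) * gen ψ p = -(gen ψ p * gen ψ (y, false)) :=
    gen_ac ψ hCAR (by simpa using Ne.symm h)
  have h2 : gen ψ (y, true) * gen ψ p = -(gen ψ p * gen ψ (y, true)) :=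
    gen_ac ψ hCAR (by simpa using Ne.symm h)
  have e : vv ψ y = gen ψ (y, false) + gen ψ (y, true) := rfl
  rw [e, add_mul, h1, h2, mul_add]
  exact (neg_add _ _).symm

lemma ww_anti {y : Site ν L} {p : Site ν L × Bool} (h : p.1 ≠ y) :
    ww ψ y * gen ψ p = -(gen ψ p * ww ψ y) := by
  have h1 : gen ψ (y, false) * gen ψ p = -(gen ψ p * gen ψ (y, false)) :=
    gen_ac ψ hCAR (by simpa using Ne.symm h)
  have h2 : gen ψ (y, true) * gen ψ p = -(gen ψ p * gen ψ (y, true)) :=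
    gen_ac ψ hCAR (by simpa using Ne.symm h)
  have e : ww ψ y = Complex.I • (gen ψ (y, false) - gen ψ (y, true)) := rfl
  rw [e, smul_mul_assoc, sub_mul, h1, h2, mul_smul_comm, mul_sub]
  rw [neg_sub_neg, ← smul_neg, neg_sub]

omit hCAR in
lemma psi_from_vw (y : Site ν L) :
    ψ y = (1/2 : ℂ) • (vv ψ y - Complex.I • ww ψ y) := by
  have h1 : Complex.I • ww ψ y = -(ψ y - star (ψ y)) := by
    rw [ww, smul_smul, Complex.I_mul_I, neg_smul, one_smul]
  rw [h1, sub_neg_eq_add, vv]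
  have h2 : ψ y + star (ψ y) + (ψ y - star (ψ y)) = (2 : ℂ) • ψ y := by
    rw [two_smul]; abel
  rw [h2, smul_smul]
  norm_num

omit hCAR in
lemma psis_from_vw (y : Site ν L) :
    star (ψ y) = (1/2 : ℂ) • (vv ψ y + Complex.I • ww ψ y) := by
  have h1 : Complex.I • ww ψ y = -(ψ y - star (ψ y)) := by
    rw [ww, smul_smul, Complex.I_mul_I, neg_smul, one_smul]
  rw [h1, vv]
  have h2 : ψ y + star (ψ y) + -(ψ y - star (ψ y)) = (2 : ℂ) • star (ψ y) := by
    rw [two_smul]; abel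
  rw [h2, smul_smul]
  norm_num

/-- an element of `𝒜₋` fixed by the Γ-conjugation commutes with everything in the
plus modes -/
lemma fixed_commP {ℓ : List (Site ν L)} (hnd : ℓ.Nodup)
    (hmem : ∀ x : Site ν L, x ∈ ℓ ↔ x ∈ LambdaMinus ν L)
    {A : Mat N} (hA : A ∈ algMinus ν L N ψ)
    (hfix : (ℓ.map (uu ψ)).prod * A * (ℓ.map (uu ψ)).prod = A) :
    CommP ψ A := by
  set G : Mat N := (ℓ.map (uu ψ)).prod with hG
  have hGsq : G * G = 1 := uuprod_sq ψ hCAR ℓ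
  have hGanti : ∀ p : Site ν L × Bool, p.1 ∈ LambdaMinus ν L →
      G * gen ψ p = -(gen ψ p * G) :=
    fun p hp => uuprod_anti ψ hCAR ℓ hnd ((hmem p.1).mpr hp)
  intro y hy
  have hyy : ∀ p : Site ν L × Bool, p.1 ∈ LambdaMinus ν L → p.1 ≠ y :=
    fun p hp => halves_disjoint hp hy
  have hv := flip_eq ψ hCAR (vv_sq ψ hCAR y) hGsq
    (fun p hp => vv_anti ψ hCAR (hyy p hp)) hGanti A hA
  have hw := flip_eq ψ hCAR (ww_sq ψ hCAR y) hGsq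
    (fun p hp => ww_anti ψ hCAR (hyy p hp)) hGanti A hA
  rw [hfix] at hv hw
  -- from e * A * e = A and e * e = 1 deduce commutation
  have comm_of_fix : ∀ e : Mat N, e * e = 1 → e * A * e = A → A * e = e * A := by
    intro e he hf
    calc A * e = (e * A * e) * e := by rw [hf]
      _ = e * A * (e * e) := by noncomm_ring
      _ = e * A := by rw [he, mul_one]
  have hva := comm_of_fix (vv ψ y) (vv_sq ψ hCAR y) hv
  have hwa := comm_of_fix (ww ψ y) (ww_sq ψ hCAR y) hw
  constructor
  · rw [psi_from_vw ψ y, mul_smul_comm, smul_mul_assoc, mul_sub, sub_mul, hva,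
      mul_smul_comm, smul_mul_assoc, hwa]
  · rw [psis_from_vw ψ y, mul_smul_comm, smul_mul_assoc, mul_add, add_mul, hva,
      mul_smul_comm, smul_mul_assoc, hwa]

end VW

/-! ### the master factorization -/

lemma list_to_pairs :
    ∀ (lG : List (Mat N)),
      (∀ g ∈ lG, g ∈ {M : Mat N | ∃ x ∈ LambdaPlus ν L, M = ψ x ∨ M = star (ψ x)}) →
      ∃ lp : List (Site ν L × Bool),
        (∀ p ∈ lp, p.1 ∈ LambdaPlus ν L) ∧ mono ψ lp = lG.prod := by
  intro lG
  induction lG with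
  | nil => exact fun _ => ⟨[], by simp, by simp⟩
  | cons g T IH =>
    intro h
    obtain ⟨lp, hlp, hprod⟩ := IH (fun g' hg' => h g' (by simp [hg']))
    obtain ⟨x, hx, hg⟩ := h g (by simp)
    rcases hg with rfl | rfl
    · exact ⟨(x, false) :: lp, by
        intro p hp
        rcases List.mem_cons.mp hp with rfl | hp'
        · exact hx
        · exact hlp p hp', by rw [mono_cons, hprod]; simp⟩
    · exact ⟨(x, true) :: lp, by
        intro p hp
        rcases List.mem_cons.mp hp with rfl | hp'
        · exact hx
        · exact hlp p hp', by rw [mono_cons, hprod]; simp⟩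

lemma factor_commP (hCAR : CAR ψ) {X : Mat N} (hX : CommP ψ X) :
    ∀ C ∈ algPlus ν L N ψ, (N : ℂ) * (X * C).trace = X.trace * C.trace := by
  intro C hC
  have hC' : C ∈ Submodule.span ℂ
      (Submonoid.closure {M : Mat N | ∃ x ∈ LambdaPlus ν L, M = ψ x ∨ M = star (ψ x)} :
        Set (Mat N)) := by
    rw [← Algebra.adjoin_eq_span]
    exact hC
  clear hC
  induction hC' using Submodule.span_induction with
  | mem m hm =>
    obtain ⟨lG, hlG, hprod⟩ := Submonoid.exists_list_of_mem_closure hm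
    obtain ⟨lp, hlp, hmono⟩ := list_to_pairs ψ lG hlG
    have := core ψ hCAR lp.length lp rfl hlp [] (by simp) (by simp) X hX
    rw [PP_nil, one_mul, hmono, hprod] at this
    exact this
  | zero => simp
  | add u v hu hv ihu ihv =>
    rw [mul_add, Matrix.trace_add, Matrix.trace_add]
    linear_combination ihu + ihv
  | smul c u hu ihu =>
    rw [mul_smul_comm, Matrix.trace_smul, Matrix.trace_smul]
    simp only [smul_eq_mul]
    linear_combination c * ihu

lemma master (hCAR : CAR ψ) {ℓ : List (Site ν L)} (hnd : ℓ.Nodup)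
    (hmem : ∀ x : Site ν L, x ∈ ℓ ↔ x ∈ LambdaMinus ν L) :
    ∀ A ∈ algMinus ν L N ψ, ∀ C ∈ algPlus ν L N ψ,
      (N : ℂ) * (A * C).trace = A.trace * C.trace := by
  intro A hA C hC
  set G : Mat N := (ℓ.map (uu ψ)).prod with hGdef
  have hGsq : G * G = 1 := uuprod_sq ψ hCAR ℓ
  have hGmem : G ∈ algMinus ν L N ψ :=
    uuprod_mem_minus ψ hCAR (fun x hx => (hmem x).mp hx)
  set Ae : Mat N := (1/2 : ℂ) • (A + G * A * G) with hAe
  set Ao : Mat N := (1/2 : ℂ) • (A - G * A * G) with hAo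
  have hsum : A = Ae + Ao := by
    rw [hAe, hAo, ← smul_add]
    have : A + G * A * G + (A - G * A * G) = (2 : ℂ) • A := by
      rw [two_smul]; abel
    rw [this, smul_smul]
    norm_num
  have hGAG : G * (G * A * G) * G = A := by
    calc G * (G * A * G) * G = (G * G) * A * (G * G) := by noncomm_ring
      _ = A := by rw [hGsq, one_mul, mul_one]
  have hAefix : G * Ae * G = Ae := by
    rw [hAe, mul_smul_comm, smul_mul_assoc]
    congr 1
    rw [mul_add, add_mul, hGAG]
    rw [add_comm]
  have hAoflip : G * Ao * G = -Ao := by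
    rw [hAo, mul_smul_comm, smul_mul_assoc, ← smul_neg]
    congr 1
    rw [mul_sub, sub_mul, hGAG, neg_sub]
  have hAemem : Ae ∈ algMinus ν L N ψ := by
    rw [hAe]
    exact Subalgebra.smul_mem _ (add_mem hA (mul_mem (mul_mem hGmem hA) hGmem)) _
  have hAeComm : CommP ψ Ae := fixed_commP ψ hCAR hnd hmem hAemem hAefix
  have hGC : G * C = C * G := by
    refine comm_algPlus ψ ?_ C hC
    intro p hp
    exact uuprod_comm_gen ψ hCAR (fun hmem' => halves_disjoint ((hmem p.1).mp hmem') hp rfl)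
  have htrAo : Ao.trace = 0 := trace_zero_conj hGsq hAoflip
  have htrAoC : (Ao * C).trace = 0 := by
    apply trace_zero_conj hGsq
    calc G * (Ao * C) * G = (G * Ao) * (C * G) := by noncomm_ring
      _ = (G * Ao) * (G * C) := by rw [hGC]
      _ = (G * Ao * G) * C := by noncomm_ring
      _ = -Ao * C := by rw [hAoflip]
      _ = -(Ao * C) := by rw [neg_mul]
  have hfac := factor_commP ψ hCAR hAeComm C hC
  have expand : A * C = Ae * C + Ao * C := by rw [hsum, add_mul]
  rw [expand, Matrix.trace_add, htrAoC, add_zero, hfac]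
  have : A.trace = Ae.trace + Ao.trace := by rw [hsum, Matrix.trace_add]
  rw [this, htrAo, add_zero]

/-! ### reflection maps the minus half into the plus half -/

lemma refl_mem (hL : 1 ≤ L) {x : Site ν L} (hx : x ∈ LambdaMinus ν L) :
    reflMap ν L x ∈ LambdaPlus ν L := by
  haveI : NeZero (2 * L) := ⟨by omega⟩
  haveI : Fact (1 < 2 * L) := ⟨by omega⟩
  have hre : (reflMap ν L x) 0 = 1 - x 0 := by simp [reflMap]
  rcases hx with h0 | hup
  · have hx0 : x 0 = 0 := (ZMod.val_eq_zero _).mp h0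
    have : (reflMap ν L x) 0 = 1 := by rw [hre, hx0, sub_zero]
    refine ⟨?_, ?_⟩ <;> rw [this, ZMod.val_one] <;> omega
  · have hvlt : (x 0).val < 2 * L := ZMod.val_lt _
    set v := (x 0).val with hv
    have hxv : ((v : ℕ) : ZMod (2 * L)) = x 0 := ZMod.natCast_zmod_val (x 0)
    have hsum : x 0 + ((2 * L + 1 - v : ℕ) : ZMod (2 * L)) = 1 := by
      rw [← hxv, ← Nat.cast_add]
      have he : v + (2 * L + 1 - v) = 2 * L + 1 := by omega
      rw [he]
      have : ((2 * L + 1 : ℕ) : ZMod (2 * L)) = ((2 * L : ℕ) : ZMod (2 * L)) + 1 := by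
        push_cast; ring
      rw [this, ZMod.natCast_self, zero_add]
    have hcast : (reflMap ν L x) 0 = ((2 * L + 1 - v : ℕ) : ZMod (2 * L)) := by
      rw [hre, eq_sub_of_add_eq' hsum]
    have hval : ((reflMap ν L x) 0).val = 2 * L + 1 - v := by
      rw [hcast, ZMod.val_cast_of_lt (by omega)]
    refine ⟨?_, ?_⟩ <;> rw [hval] <;> omega

/-! ### the antilinear reflection -/

section Theta
variable (hCAR : CAR ψ)
variable (ϑ : Mat N → Mat N)
variable (hadd : ∀ A B, ϑ (A + B) = ϑ A + ϑ B)
variable (hsmul : ∀ (c : ℂ) (A), ϑ (c • A) = (starRingEnd ℂ c) • ϑ A)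
variable (hmul : ∀ A B, ϑ (A * B) = ϑ A * ϑ B)
variable (hψ : ∀ x, ϑ (ψ x) = ψ (reflMap ν L x))
variable (hψstar : ∀ x, ϑ (star (ψ x)) = star (ψ (reflMap ν L x)))

include hCAR hadd hmul hψ hψstar in
lemma theta_one : ϑ (1 : Mat N) = 1 := by
  set x0 : Site ν L := fun _ => 0 with hx0
  have h := ccr ψ hCAR x0
  calc ϑ (1 : Mat N) = ϑ (ψ x0 * star (ψ x0) + star (ψ x0) * ψ x0) := by rw [h]
    _ = ϑ (ψ x0 * star (ψ x0)) + ϑ (star (ψ x0) * ψ x0) := hadd _ _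
    _ = ϑ (ψ x0) * ϑ (star (ψ x0)) + ϑ (star (ψ x0)) * ϑ (ψ x0) := by rw [hmul, hmul]
    _ = ψ (reflMap ν L x0) * star (ψ (reflMap ν L x0))
        + star (ψ (reflMap ν L x0)) * ψ (reflMap ν L x0) := by rw [hψ, hψstar]
    _ = 1 := ccr ψ hCAR _

include hCAR hadd hsmul hmul hψ hψstar in
lemma theta_mem (hL : 1 ≤ L) : ∀ A ∈ algMinus ν L N ψ, ϑ A ∈ algPlus ν L N ψ := by
  intro A hA
  induction hA using Algebra.adjoin_induction with
  | mem M hM =>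
    obtain ⟨x, hx, hM'⟩ := hM
    have hrx : reflMap ν L x ∈ LambdaPlus ν L := refl_mem hL hx
    rcases hM' with rfl | rfl
    · rw [hψ]
      exact Algebra.subset_adjoin ⟨reflMap ν L x, hrx, Or.inl rfl⟩
    · rw [hψstar]
      exact Algebra.subset_adjoin ⟨reflMap ν L x, hrx, Or.inr rfl⟩
  | algebraMap r =>
    have e : algebraMap ℂ (Mat N) r = r • (1 : Mat N) := by
      rw [Algebra.algebraMap_eq_smul_one]
    rw [e, hsmul, theta_one ψ hCAR ϑ hadd hmul hψ hψstar]
    exact Subalgebra.smul_mem _ (one_mem _) _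
  | add u v hu hv ihu ihv => rw [hadd]; exact add_mem ihu ihv
  | mul u v hu hv ihu ihv => rw [hmul]; exact mul_mem ihu ihv

include hadd hsmul hmul hCAR hψ hψstar in
lemma trace_theta (hN : 1 ≤ N) :
    ∀ X : Mat N, (ϑ X).trace = starRingEnd ℂ X.trace := by
  have hone : ϑ (1 : Mat N) = 1 := theta_one ψ hCAR ϑ hadd hmul hψ hψstar
  set g : Mat N → ℂ := fun X => starRingEnd ℂ (ϑ X).trace with hgdef
  have gadd : ∀ X Y, g (X + Y) = g X + g Y := by
    intro X Y; simp only [hgdef, hadd, Matrix.trace_add, map_add]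
  have gsmul : ∀ (c : ℂ) (X), g (c • X) = c * g X := by
    intro c X
    simp only [hgdef, hsmul, Matrix.trace_smul, smul_eq_mul]
    rw [map_mul (starRingEnd ℂ), Complex.conj_conj]
  have gtr : ∀ X Y, g (X * Y) = g (Y * X) := by
    intro X Y
    simp only [hgdef, hmul]
    rw [Matrix.trace_mul_comm]
  have gone : g 1 = N := by
    simp only [hgdef, hone, Matrix.trace_one]
    simp
  -- package g as a linear map
  let gl : Mat N →ₗ[ℂ] ℂ :=
    { toFun := g
      map_add' := gadd
      map_smul' := by intro c X; simp only [gsmul, smul_eq_mul, RingHom.id_apply] }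
  have hgl : ∀ X, gl X = g X := fun _ => rfl
  have g0 : g 0 = 0 := by
    have := gsmul 0 0
    simpa using this
  set k0 : Fin N := ⟨0, by omega⟩ with hk0
  set c₀ : ℂ := g (Matrix.single k0 k0 (1 : ℂ)) with hc₀
  have hoff : ∀ i j : Fin N, i ≠ j → g (Matrix.single i j (1 : ℂ)) = 0 := by
    intro i j hij
    have e1 : Matrix.single i j (1 : ℂ)
        = Matrix.single i j (1 : ℂ) * Matrix.single j j (1 : ℂ) := by
      rw [Matrix.single_mul_single_same, one_mul]
    rw [e1, gtr, Matrix.single_mul_single_of_ne (h := Ne.symm hij), g0]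
  have hdiag : ∀ i : Fin N, g (Matrix.single i i (1 : ℂ)) = c₀ := by
    intro i
    have e1 : Matrix.single i i (1 : ℂ)
        = Matrix.single i k0 (1 : ℂ) * Matrix.single k0 i (1 : ℂ) := by
      rw [Matrix.single_mul_single_same, one_mul]
    rw [e1, gtr, Matrix.single_mul_single_same, one_mul, hc₀]
  have gsum : ∀ X : Mat N, g X = (∑ i : Fin N, X i i) * c₀ := by
    intro X
    have hX := Matrix.matrix_eq_sum_single X
    have : g X = ∑ i : Fin N, ∑ j : Fin N, g (Matrix.single i j (X i j)) := by
      conv_lhs => rw [← hgl, hX]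
      rw [map_sum]
      apply Finset.sum_congr rfl
      intro i _
      rw [map_sum]
      rfl
    rw [this]
    have hterm : ∀ i j : Fin N, g (Matrix.single i j (X i j))
        = X i j * g (Matrix.single i j (1 : ℂ)) := by
      intro i j
      rw [← gsmul, Matrix.smul_single, smul_eq_mul, mul_one]
    calc ∑ i : Fin N, ∑ j : Fin N, g (Matrix.single i j (X i j))
        = ∑ i : Fin N, ∑ j : Fin N, X i j * g (Matrix.single i j (1 : ℂ)) := by
          apply Finset.sum_congr rfl; intro i _; apply Finset.sum_congr rfl; intro j _
          exact hterm i j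
      _ = ∑ i : Fin N, X i i * c₀ := by
          apply Finset.sum_congr rfl; intro i _
          rw [Finset.sum_eq_single i]
          · rw [hdiag]
          · intro j _ hji; rw [hoff i j (Ne.symm hji), mul_zero]
          · intro h; exact absurd (Finset.mem_univ i) h
      _ = (∑ i : Fin N, X i i) * c₀ := by rw [Finset.sum_mul]
  have hc₀1 : c₀ = 1 := by
    have h1 := gsum 1
    rw [gone] at h1
    have : (∑ i : Fin N, (1 : Mat N) i i) = (N : ℂ) := by
      simp [Matrix.one_apply_eq]
    rw [this] at h1
    have hNne : (N : ℂ) ≠ 0 := by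
      simp only [ne_eq, Nat.cast_eq_zero]
      omega
    have h2 : (N : ℂ) * 1 = (N : ℂ) * c₀ := by rw [mul_one]; exact h1
    exact (mul_left_cancel₀ hNne h2).symm
  intro X
  have hgX : g X = X.trace := by
    rw [gsum X, hc₀1, mul_one]
    simp [Matrix.trace, Matrix.diag]
  calc (ϑ X).trace = starRingEnd ℂ (starRingEnd ℂ (ϑ X).trace) := (Complex.conj_conj _).symm
    _ = starRingEnd ℂ (g X) := by rw [hgdef]
    _ = starRingEnd ℂ X.trace := by rw [hgX]

end Theta

end RCS

/-- **Cauchy–Schwarz inequality for the reflection form**: for the antilinear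
reflection `ϑ : 𝒜₋ → 𝒜₊` and all `A, B` in the subalgebra `𝒜₋` generated by
`{ψ(x), ψ(x)* : x ∈ Λ₋}`, one has `|tr(A ϑ(B))|² ≤ tr(A ϑ(A)) · tr(B ϑ(B))`. -/
theorem reflection_cauchy_schwarz (ν L N : ℕ) [NeZero ν]
    (hν : 2 ≤ ν) (hL : 1 ≤ L) (hN : 1 ≤ N)
    (ψ : Site ν L → Matrix (Fin N) (Fin N) ℂ) (hCAR : CAR ψ)
    (ϑ : Matrix (Fin N) (Fin N) ℂ → Matrix (Fin N) (Fin N) ℂ)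
    (hadd : ∀ A B, ϑ (A + B) = ϑ A + ϑ B)
    (hsmul : ∀ (c : ℂ) (A), ϑ (c • A) = (starRingEnd ℂ c) • ϑ A)
    (hmul : ∀ A B, ϑ (A * B) = ϑ A * ϑ B)
    (hstar : ∀ A, ϑ (star A) = star (ϑ A))
    (hψ : ∀ x, ϑ (ψ x) = ψ (reflMap ν L x))
    (hψstar : ∀ x, ϑ (star (ψ x)) = star (ψ (reflMap ν L x))) :
    ∀ A ∈ algMinus ν L N ψ, ∀ B ∈ algMinus ν L N ψ,
      ‖(A * ϑ B).trace‖ ^ 2 ≤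
        (A * ϑ A).trace.re * (B * ϑ B).trace.re := by
  intro A hA B hB
  haveI : NeZero (2 * L) := ⟨by omega⟩
  classical
  set ℓ : List (Site ν L) := (Finset.univ.filter (fun x => x ∈ LambdaMinus ν L)).toList
    with hℓ
  have hnd : ℓ.Nodup := Finset.nodup_toList _
  have hmem : ∀ x : Site ν L, x ∈ ℓ ↔ x ∈ LambdaMinus ν L := by
    intro x
    rw [hℓ, Finset.mem_toList, Finset.mem_filter]
    simp
  have hmaster := RCS.master ψ hCAR hnd hmem
  have htheta := RCS.trace_theta ψ hCAR ϑ hadd hsmul hmul hψ hψstar hN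
  have hthetamem := RCS.theta_mem ψ hCAR ϑ hadd hsmul hmul hψ hψstar hL
  have key : ∀ A' ∈ algMinus ν L N ψ, ∀ B' ∈ algMinus ν L N ψ,
      (N : ℂ) * (A' * ϑ B').trace = A'.trace * starRingEnd ℂ (B'.trace) := by
    intro A' hA' B' hB'
    rw [hmaster A' hA' (ϑ B') (hthetamem B' hB'), htheta]
  have hNne : (N : ℂ) ≠ 0 := by
    simp only [ne_eq, Nat.cast_eq_zero]
    omega
  have hNposR : (0 : ℝ) < (N : ℝ) := by
    have : (1 : ℝ) ≤ (N : ℝ) := by exact_mod_cast hN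
    linarith
  have eAB : (A * ϑ B).trace = A.trace * starRingEnd ℂ B.trace / (N : ℂ) := by
    rw [eq_div_iff hNne]
    linear_combination key A hA B hB
  have ediag : ∀ C ∈ algMinus ν L N ψ,
      (C * ϑ C).trace = ((Complex.normSq C.trace / N : ℝ) : ℂ) := by
    intro C hC
    have h1 : (C * ϑ C).trace = C.trace * starRingEnd ℂ C.trace / (N : ℂ) := by
      rw [eq_div_iff hNne]
      linear_combination key C hC C hC
    rw [h1, Complex.mul_conj]
    push_cast
    ring
  have habs : ‖(A * ϑ B).trace‖
      = ‖A.trace‖ * ‖B.trace‖ / (N : ℝ) := by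
    rw [eAB, norm_div, norm_mul, Complex.norm_conj, Complex.norm_natCast]
  rw [habs, ediag A hA, ediag B hB, Complex.ofReal_re, Complex.ofReal_re,
    ← Complex.sq_norm, ← Complex.sq_norm]
  apply le_of_eq
  field_simp

end
end

section
/- Particle-hole invariance: the particle-hole transformation U_PH := ∏_{x∈Λ} u(x) (product in a fixed order) satisfies (U_PH)* ψ(x) U_PH = ψ(x)* for all x ∈ Λ, (U_PH)* ρ(x) U_PH = −ρ(x) for all x ∈ Λ, and (U_PH)* H(0) U_PH = H(0), where H(0) is the Hamiltonian with zero mass parameter. -/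
open Matrix Filter MeasureTheory

noncomputable section

/-- The `μ`-th standard unit vector of the lattice. -/
def eVec (ν L : ℕ) (μ : Fin ν) : Site ν L := fun i => if i = μ then 1 else 0

/-- The staggered sign `(-1)^{x⁽¹⁾+⋯+x⁽ᵛ⁾}`. -/
def sgn {ν L : ℕ} (x : Site ν L) : ℂ := (-1 : ℂ) ^ (∑ i, (x i).val)

/-- The exponents `θ_μ(x)` of the staggered hopping amplitudes. -/
def theta {ν L : ℕ} (μ : Fin ν) (x : Site ν L) : ℕ :=
  (∑ i : Fin ν, if (i : ℕ) < (μ : ℕ) then (x i).val else 0) +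
    (if x μ = (L : ZMod (2 * L)) then 1 else 0)

variable {ν L N : ℕ}

/-- The charge density `ρ(x) = ψ(x)*ψ(x) - 1/2`. -/
def rho (ψ : Site ν L → Matrix (Fin N) (Fin N) ℂ) (x : Site ν L) :
    Matrix (Fin N) (Fin N) ℂ :=
  star (ψ x) * ψ x - (1 / 2 : ℂ) • 1

/-- The staggered hopping Hamiltonian `H_K`. -/
def HK [NeZero (2 * L)] (κ : ℝ) (ψ : Site ν L → Matrix (Fin N) (Fin N) ℂ) :
    Matrix (Fin N) (Fin N) ℂ :=
  (Complex.I * (κ : ℂ)) • ∑ x : Site ν L, ∑ μ : Fin ν,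
    ((-1 : ℂ) ^ theta μ x) •
      (star (ψ x) * ψ (x + eVec ν L μ) - star (ψ (x + eVec ν L μ)) * ψ x)

/-- The order parameter `O = Σ_x (-1)^{x⁽¹⁾+⋯+x⁽ᵛ⁾} ρ(x)`. -/
def orderOp [NeZero (2 * L)] (ψ : Site ν L → Matrix (Fin N) (Fin N) ℂ) :
    Matrix (Fin N) (Fin N) ℂ :=
  ∑ x : Site ν L, sgn x • rho ψ x

/-- The four-fermion interaction `Σ_x Σ_μ ρ(x) ρ(x+e_μ)`. -/
def Hint [NeZero (2 * L)] (ψ : Site ν L → Matrix (Fin N) (Fin N) ℂ) :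
    Matrix (Fin N) (Fin N) ℂ :=
  ∑ x : Site ν L, ∑ μ : Fin ν, rho ψ x * rho ψ (x + eVec ν L μ)

/-- The Hamiltonian `H(m) = H_K + m·O + g·H_int`. -/
def Ham [NeZero (2 * L)] (κ m g : ℝ) (ψ : Site ν L → Matrix (Fin N) (Fin N) ℂ) :
    Matrix (Fin N) (Fin N) ℂ :=
  HK κ ψ + (m : ℂ) • orderOp ψ + (g : ℂ) • Hint ψ

/-- The thermal expectation `⟨A⟩ = tr(A e^{-βH}) / tr(e^{-βH})`. -/
def thermal (β : ℝ) (H A : Matrix (Fin N) (Fin N) ℂ) : ℂ :=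
  (A * NormedSpace.exp ((-(β : ℂ)) • H)).trace /
    (NormedSpace.exp ((-(β : ℂ)) • H)).trace


/-- The number operator `n(y) = ψ(y)*ψ(y)`. -/
def numOp (ψ : Site ν L → Matrix (Fin N) (Fin N) ℂ) (y : Site ν L) :
    Matrix (Fin N) (Fin N) ℂ :=
  star (ψ y) * ψ y

/-- The parity factor `exp(iπ n(y))`. -/
def parityFactor (ψ : Site ν L → Matrix (Fin N) (Fin N) ℂ) (y : Site ν L) :
    Matrix (Fin N) (Fin N) ℂ :=
  NormedSpace.exp ((Complex.I * (Real.pi : ℂ)) • numOp ψ y)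

/-- The operator `u(x) = [∏_{y ≠ x} exp(iπ n(y))] (ψ(x)* + ψ(x))`, the product being
taken in a fixed order (the one given by `Finset.toList`). -/
def uOp [NeZero (2 * L)] (ψ : Site ν L → Matrix (Fin N) (Fin N) ℂ)
    (x : Site ν L) : Matrix (Fin N) (Fin N) ℂ :=
  (((Finset.univ.erase x).toList).map (parityFactor ψ)).prod * (star (ψ x) + ψ x)

/-- The particle-hole transformation `U_PH = ∏_{x ∈ Λ} u(x)`, the product being
taken in a fixed order. -/
def UPH [NeZero (2 * L)] (ψ : Site ν L → Matrix (Fin N) (Fin N) ℂ) :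
    Matrix (Fin N) (Fin N) ℂ :=
  (((Finset.univ : Finset (Site ν L)).toList).map (uOp ψ)).prod

set_option maxHeartbeats 1000000 in

lemma exp_idem {N : ℕ} (P : Matrix (Fin N) (Fin N) ℂ) (hP : P * P = P) (c : ℂ) :
    NormedSpace.exp (c • P) = 1 + (Complex.exp c - 1) • P := by
  letI : SeminormedRing (Matrix (Fin N) (Fin N) ℂ) := Matrix.linftyOpSemiNormedRing
  letI : NormedRing (Matrix (Fin N) (Fin N) ℂ) := Matrix.linftyOpNormedRing
  letI : NormedAlgebra ℂ (Matrix (Fin N) (Fin N) ℂ) := Matrix.linftyOpNormedAlgebra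
  have hPn : ∀ n : ℕ, P ^ (n + 1) = P := by
    intro n; induction n with
    | zero => simp
    | succ k ih => rw [pow_succ, ih, hP]
  have hsum : Summable (fun n : ℕ => ((n.factorial : ℂ))⁻¹ • (c • P) ^ n) :=
    NormedSpace.expSeries_summable' (c • P)
  have hsumc : Summable (fun n : ℕ => ((n.factorial : ℂ))⁻¹ * c ^ n) := by
    simpa using NormedSpace.expSeries_summable' (𝕂 := ℂ) c
  have hsumc' : Summable (fun n : ℕ => (((n+1).factorial : ℂ))⁻¹ * c ^ (n+1)) :=
    (summable_nat_add_iff 1).2 hsumc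
  rw [NormedSpace.exp_eq_tsum (𝕂 := ℂ)]
  beta_reduce
  rw [Summable.tsum_eq_zero_add hsum]
  have h1 : ∀ n : ℕ, (((n+1).factorial : ℂ))⁻¹ • (c • P) ^ (n+1)
      = (((n+1).factorial : ℂ)⁻¹ * c ^ (n+1)) • P := by
    intro n
    rw [smul_pow, hPn, smul_smul]
  simp only [h1]
  rw [Summable.tsum_smul_const hsumc']
  have hc : (∑' n : ℕ, (((n+1).factorial : ℂ))⁻¹ * c ^ (n+1)) = Complex.exp c - 1 := by
    have : Complex.exp c = ∑' n : ℕ, ((n.factorial : ℂ))⁻¹ * c ^ n := by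
      rw [Complex.exp_eq_exp_ℂ, NormedSpace.exp_eq_tsum (𝕂 := ℂ)]
      simp [smul_eq_mul]
    rw [this, Summable.tsum_eq_zero_add hsumc]
    simp
  rw [hc]
  simp

namespace PH

variable {ν L N : ℕ}

section CARlemmas

variable {ψ : Site ν L → Matrix (Fin N) (Fin N) ℂ}

lemma psi_psi (h : CAR ψ) (x y : Site ν L) : ψ x * ψ y = -(ψ y * ψ x) :=
  eq_neg_of_add_eq_zero_left (h.2 x y)

lemma psi_sq (h : CAR ψ) (x : Site ν L) : ψ x * ψ x = 0 := by
  have h2 : (2 : ℂ) • (ψ x * ψ x) = 0 := by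
    rw [two_smul]; exact h.2 x x
  have := smul_eq_zero.mp h2
  exact this.resolve_left (by norm_num)

lemma star_sq (h : CAR ψ) (x : Site ν L) : star (ψ x) * star (ψ x) = 0 := by
  rw [← StarMul.star_mul, psi_sq h, star_zero]

lemma starPsi (h : CAR ψ) (x y : Site ν L) :
    star (ψ x) * star (ψ y) = -(star (ψ y) * star (ψ x)) := by
  rw [← StarMul.star_mul, ← StarMul.star_mul, psi_psi h y x, star_neg]

lemma psi_star_ne (h : CAR ψ) {x y : Site ν L} (hxy : x ≠ y) :
    ψ x * star (ψ y) = -(star (ψ y) * ψ x) := by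
  have := h.1 x y
  rw [if_neg hxy] at this
  exact eq_neg_of_add_eq_zero_left this

lemma psi_star_self (h : CAR ψ) (x : Site ν L) :
    ψ x * star (ψ x) = 1 - star (ψ x) * ψ x := by
  have := h.1 x x
  rw [if_pos rfl] at this
  exact eq_sub_of_add_eq this

lemma numOp_idem (h : CAR ψ) (x : Site ν L) : numOp ψ x * numOp ψ x = numOp ψ x := by
  unfold numOp
  calc star (ψ x) * ψ x * (star (ψ x) * ψ x)
      = star (ψ x) * (ψ x * star (ψ x)) * ψ x := by noncomm_ring
    _ = star (ψ x) * (1 - star (ψ x) * ψ x) * ψ x := by rw [psi_star_self h]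
    _ = star (ψ x) * ψ x - star (ψ x) * star (ψ x) * (ψ x * ψ x) := by noncomm_ring
    _ = star (ψ x) * ψ x := by rw [psi_sq h, mul_zero, sub_zero]

lemma star_numOp (x : Site ν L) : star (numOp ψ x) = numOp ψ x := by
  unfold numOp; rw [StarMul.star_mul, star_star]

lemma psi_numOp_ne (h : CAR ψ) {x y : Site ν L} (hxy : x ≠ y) :
    ψ x * numOp ψ y = numOp ψ y * ψ x := by
  unfold numOp
  calc ψ x * (star (ψ y) * ψ y) = (ψ x * star (ψ y)) * ψ y := by rw [mul_assoc]
    _ = -(star (ψ y) * ψ x) * ψ y := by rw [psi_star_ne h hxy]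
    _ = -(star (ψ y) * (ψ x * ψ y)) := by noncomm_ring
    _ = -(star (ψ y) * (-(ψ y * ψ x))) := by rw [psi_psi h x y]
    _ = star (ψ y) * ψ y * ψ x := by noncomm_ring

lemma starPsi_numOp_ne (h : CAR ψ) {x y : Site ν L} (hxy : x ≠ y) :
    star (ψ x) * numOp ψ y = numOp ψ y * star (ψ x) := by
  unfold numOp
  have h1 : star (ψ y) * star (ψ x) = -(star (ψ x) * star (ψ y)) := starPsi h y x
  have h2 : ψ y * star (ψ x) = -(star (ψ x) * ψ y) := psi_star_ne h (Ne.symm hxy)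
  calc star (ψ x) * (star (ψ y) * ψ y)
      = (star (ψ x) * star (ψ y)) * ψ y := by rw [mul_assoc]
    _ = -(star (ψ y) * star (ψ x)) * ψ y := by rw [starPsi h x y]
    _ = -(star (ψ y) * (star (ψ x) * ψ y)) := by noncomm_ring
    _ = -(star (ψ y) * (-(ψ y * star (ψ x)))) := by
        rw [show star (ψ x) * ψ y = -(ψ y * star (ψ x)) from by rw [h2, neg_neg]]
    _ = star (ψ y) * ψ y * star (ψ x) := by noncomm_ring

lemma psi_numOp_self (h : CAR ψ) (x : Site ν L) : ψ x * numOp ψ x = ψ x := by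
  unfold numOp
  calc ψ x * (star (ψ x) * ψ x) = (ψ x * star (ψ x)) * ψ x := by rw [mul_assoc]
    _ = (1 - star (ψ x) * ψ x) * ψ x := by rw [psi_star_self h]
    _ = ψ x - star (ψ x) * (ψ x * ψ x) := by noncomm_ring
    _ = ψ x := by rw [psi_sq h, mul_zero, sub_zero]

lemma numOp_psi_self (h : CAR ψ) (x : Site ν L) : numOp ψ x * ψ x = 0 := by
  unfold numOp
  rw [mul_assoc, psi_sq h, mul_zero]

lemma starPsi_numOp_self (h : CAR ψ) (x : Site ν L) : star (ψ x) * numOp ψ x = 0 := by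
  unfold numOp
  rw [← mul_assoc, star_sq h, zero_mul]

lemma numOp_starPsi_self (h : CAR ψ) (x : Site ν L) :
    numOp ψ x * star (ψ x) = star (ψ x) := by
  unfold numOp
  calc star (ψ x) * ψ x * star (ψ x) = star (ψ x) * (ψ x * star (ψ x)) := by rw [mul_assoc]
    _ = star (ψ x) * (1 - star (ψ x) * ψ x) := by rw [psi_star_self h]
    _ = star (ψ x) - star (ψ x) * star (ψ x) * ψ x := by noncomm_ring
    _ = star (ψ x) := by rw [star_sq h, zero_mul, sub_zero]

lemma numOp_comm (h : CAR ψ) (y z : Site ν L) :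
    numOp ψ y * numOp ψ z = numOp ψ z * numOp ψ y := by
  rcases eq_or_ne y z with rfl | hyz
  · rfl
  · calc numOp ψ y * numOp ψ z = star (ψ y) * (ψ y * numOp ψ z) := by
          rw [numOp, mul_assoc]
      _ = star (ψ y) * (numOp ψ z * ψ y) := by rw [psi_numOp_ne h hyz]
      _ = (star (ψ y) * numOp ψ z) * ψ y := by rw [mul_assoc]
      _ = (numOp ψ z * star (ψ y)) * ψ y := by rw [starPsi_numOp_ne h hyz]
      _ = numOp ψ z * numOp ψ y := by rw [mul_assoc]; rfl

/-- The parity factor in closed form. -/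
def pf (ψ : Site ν L → Matrix (Fin N) (Fin N) ℂ) (y : Site ν L) :
    Matrix (Fin N) (Fin N) ℂ :=
  1 - (2 : ℂ) • numOp ψ y

lemma parityFactor_eq (h : CAR ψ) (y : Site ν L) : parityFactor ψ y = pf ψ y := by
  rw [parityFactor, exp_idem _ (numOp_idem h y),
    show Complex.I * (Real.pi : ℂ) = Real.pi * Complex.I from mul_comm _ _,
    Complex.exp_pi_mul_I, pf]
  rw [show (-1 - 1 : ℂ) = -2 from by norm_num, neg_smul, ← sub_eq_add_neg]
lemma pf_psi_self (h : CAR ψ) (x : Site ν L) : pf ψ x * ψ x = ψ x := by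
  rw [pf, sub_mul, one_mul, smul_mul_assoc, numOp_psi_self h, smul_zero, sub_zero]

lemma psi_pf_self (h : CAR ψ) (x : Site ν L) : ψ x * pf ψ x = -ψ x := by
  rw [pf, mul_sub, mul_one, mul_smul_comm, psi_numOp_self h, two_smul]
  abel

lemma pf_starPsi_self (h : CAR ψ) (x : Site ν L) : pf ψ x * star (ψ x) = -star (ψ x) := by
  rw [pf, sub_mul, one_mul, smul_mul_assoc, numOp_starPsi_self h, two_smul]
  abel

lemma starPsi_pf_self (h : CAR ψ) (x : Site ν L) : star (ψ x) * pf ψ x = star (ψ x) := by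
  rw [pf, mul_sub, mul_one, mul_smul_comm, starPsi_numOp_self h, smul_zero, sub_zero]

lemma psi_pf_ne (h : CAR ψ) {x y : Site ν L} (hxy : x ≠ y) :
    ψ x * pf ψ y = pf ψ y * ψ x := by
  rw [pf, mul_sub, sub_mul, mul_one, one_mul, mul_smul_comm, smul_mul_assoc,
    psi_numOp_ne h hxy]

lemma starPsi_pf_ne (h : CAR ψ) {x y : Site ν L} (hxy : x ≠ y) :
    star (ψ x) * pf ψ y = pf ψ y * star (ψ x) := by
  rw [pf, mul_sub, sub_mul, mul_one, one_mul, mul_smul_comm, smul_mul_assoc,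
    starPsi_numOp_ne h hxy]

lemma pf_comm (h : CAR ψ) (y z : Site ν L) : pf ψ y * pf ψ z = pf ψ z * pf ψ y := by
  simp only [pf, mul_sub, sub_mul, mul_one, one_mul, mul_smul_comm, smul_mul_assoc,
    numOp_comm h y z]
  module

lemma pf_star (h : CAR ψ) (y : Site ν L) : star (pf ψ y) = pf ψ y := by
  rw [pf, star_sub, star_one, star_smul, star_numOp]
  norm_num

lemma pf_sq (h : CAR ψ) (y : Site ν L) : pf ψ y * pf ψ y = 1 := by
  rw [pf]
  simp only [mul_sub, sub_mul, mul_one, one_mul, mul_smul_comm, smul_mul_assoc,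
    numOp_idem h, smul_smul]
  module

/-- Product of parity factors over a list. -/
def Q (ψ : Site ν L → Matrix (Fin N) (Fin N) ℂ) (l : List (Site ν L)) :
    Matrix (Fin N) (Fin N) ℂ :=
  (l.map (pf ψ)).prod

@[simp] lemma Q_nil : Q ψ ([] : List (Site ν L)) = 1 := rfl

lemma Q_cons (a : Site ν L) (l : List (Site ν L)) : Q ψ (a :: l) = pf ψ a * Q ψ l := by
  simp [Q]

lemma pf_Q_comm (h : CAR ψ) (a : Site ν L) (l : List (Site ν L)) :
    pf ψ a * Q ψ l = Q ψ l * pf ψ a := by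
  induction l with
  | nil => simp
  | cons b l ih =>
    rw [Q_cons, ← mul_assoc, pf_comm h a b, mul_assoc, ih, ← mul_assoc]

lemma Q_star (h : CAR ψ) (l : List (Site ν L)) : star (Q ψ l) = Q ψ l := by
  induction l with
  | nil => simp
  | cons b l ih =>
    rw [Q_cons, StarMul.star_mul, ih, pf_star h, pf_Q_comm h]

lemma Q_sq (h : CAR ψ) (l : List (Site ν L)) : Q ψ l * Q ψ l = 1 := by
  induction l with
  | nil => simp
  | cons b l ih =>
    rw [Q_cons, mul_assoc, ← mul_assoc (Q ψ l), ← pf_Q_comm h, ← mul_assoc,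
      ← mul_assoc, pf_sq h, one_mul, ih]

lemma psi_Q_comm (h : CAR ψ) {x : Site ν L} {l : List (Site ν L)} (hx : x ∉ l) :
    ψ x * Q ψ l = Q ψ l * ψ x := by
  induction l with
  | nil => simp
  | cons b l ih =>
    have hxb : x ≠ b := fun hh => hx (hh ▸ List.mem_cons_self)
    have hxl : x ∉ l := fun hh => hx (List.mem_cons_of_mem b hh)
    rw [Q_cons, ← mul_assoc, psi_pf_ne h hxb, mul_assoc, ih hxl, ← mul_assoc]

lemma starPsi_Q_comm (h : CAR ψ) {x : Site ν L} {l : List (Site ν L)} (hx : x ∉ l) :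
    star (ψ x) * Q ψ l = Q ψ l * star (ψ x) := by
  induction l with
  | nil => simp
  | cons b l ih =>
    have hxb : x ≠ b := fun hh => hx (hh ▸ List.mem_cons_self)
    have hxl : x ∉ l := fun hh => hx (List.mem_cons_of_mem b hh)
    rw [Q_cons, ← mul_assoc, starPsi_pf_ne h hxb, mul_assoc, ih hxl, ← mul_assoc]

lemma psi_Q_anti (h : CAR ψ) {x : Site ν L} {l : List (Site ν L)}
    (hnd : l.Nodup) (hx : x ∈ l) : ψ x * Q ψ l = -(Q ψ l * ψ x) := by
  induction l with
  | nil => simp at hx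
  | cons b l ih =>
    rw [Q_cons]
    rcases List.mem_cons.mp hx with rfl | hxl
    · have hxl : x ∉ l := (List.nodup_cons.mp hnd).1
      calc ψ x * (pf ψ x * Q ψ l) = (ψ x * pf ψ x) * Q ψ l := by rw [mul_assoc]
        _ = -(ψ x * Q ψ l) := by rw [psi_pf_self h, neg_mul]
        _ = -(Q ψ l * ψ x) := by rw [psi_Q_comm h hxl]
        _ = -(pf ψ x * Q ψ l * ψ x) := by
            rw [pf_Q_comm h, mul_assoc, pf_psi_self h]
    · have hxb : x ≠ b := fun hh => ((List.nodup_cons.mp hnd).1 (hh ▸ hxl)).elim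
      calc ψ x * (pf ψ b * Q ψ l) = (ψ x * pf ψ b) * Q ψ l := by rw [mul_assoc]
        _ = pf ψ b * (ψ x * Q ψ l) := by rw [psi_pf_ne h hxb, mul_assoc]
        _ = pf ψ b * -(Q ψ l * ψ x) := by rw [ih (List.nodup_cons.mp hnd).2 hxl]
        _ = -(pf ψ b * Q ψ l * ψ x) := by rw [mul_neg, mul_assoc]
lemma starPsi_Q_anti (h : CAR ψ) {x : Site ν L} {l : List (Site ν L)}
    (hnd : l.Nodup) (hx : x ∈ l) : star (ψ x) * Q ψ l = -(Q ψ l * star (ψ x)) := by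
  induction l with
  | nil => simp at hx
  | cons b l ih =>
    rw [Q_cons]
    rcases List.mem_cons.mp hx with rfl | hxl
    · have hxl : x ∉ l := (List.nodup_cons.mp hnd).1
      calc star (ψ x) * (pf ψ x * Q ψ l) = (star (ψ x) * pf ψ x) * Q ψ l := by
            rw [mul_assoc]
        _ = star (ψ x) * Q ψ l := by rw [starPsi_pf_self h]
        _ = Q ψ l * star (ψ x) := by rw [starPsi_Q_comm h hxl]
        _ = -(pf ψ x * Q ψ l * star (ψ x)) := by
            rw [pf_Q_comm h, mul_assoc, pf_starPsi_self h, mul_neg, neg_neg]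
    · have hxb : x ≠ b := fun hh => ((List.nodup_cons.mp hnd).1 (hh ▸ hxl)).elim
      calc star (ψ x) * (pf ψ b * Q ψ l) = (star (ψ x) * pf ψ b) * Q ψ l := by
            rw [mul_assoc]
        _ = pf ψ b * (star (ψ x) * Q ψ l) := by rw [starPsi_pf_ne h hxb, mul_assoc]
        _ = pf ψ b * -(Q ψ l * star (ψ x)) := by
            rw [ih (List.nodup_cons.mp hnd).2 hxl]
        _ = -(pf ψ b * Q ψ l * star (ψ x)) := by rw [mul_neg, mul_assoc]

/-- The self-adjoint field `ψ(x)* + ψ(x)`. -/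
def Av (ψ : Site ν L → Matrix (Fin N) (Fin N) ℂ) (x : Site ν L) :
    Matrix (Fin N) (Fin N) ℂ :=
  star (ψ x) + ψ x

lemma Av_star (x : Site ν L) : star (Av ψ x) = Av ψ x := by
  rw [Av, star_add, star_star, add_comm]

lemma Av_sq (h : CAR ψ) (x : Site ν L) : Av ψ x * Av ψ x = 1 := by
  rw [Av, add_mul, mul_add, mul_add, star_sq h, psi_sq h, psi_star_self h]
  abel

lemma psi_Av_anti (h : CAR ψ) {x y : Site ν L} (hxy : y ≠ x) :
    ψ y * Av ψ x = -(Av ψ x * ψ y) := by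
  rw [Av, mul_add, add_mul, psi_star_ne h hxy, psi_psi h y x]
  abel

lemma starPsi_Av_anti (h : CAR ψ) {x y : Site ν L} (hxy : y ≠ x) :
    star (ψ y) * Av ψ x = -(Av ψ x * star (ψ y)) := by
  have h2 : ψ x * star (ψ y) = -(star (ψ y) * ψ x) := psi_star_ne h (Ne.symm hxy)
  rw [Av, mul_add, add_mul, starPsi h y x,
    show star (ψ y) * ψ x = -(ψ x * star (ψ y)) from by rw [h2, neg_neg]]
  abel

lemma Av_Q_comm (h : CAR ψ) {x : Site ν L} {l : List (Site ν L)} (hx : x ∉ l) :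
    Av ψ x * Q ψ l = Q ψ l * Av ψ x := by
  rw [Av, add_mul, mul_add, psi_Q_comm h hx, starPsi_Q_comm h hx]

lemma Av_psi_Av (h : CAR ψ) (x : Site ν L) :
    Av ψ x * ψ x * Av ψ x = star (ψ x) := by
  rw [Av, add_mul, psi_sq h, add_zero, mul_add, mul_assoc, mul_assoc,
    psi_star_self h, psi_sq h, mul_zero, add_zero, mul_sub, mul_one,
    ← mul_assoc, star_sq h, zero_mul, sub_zero]

lemma Av_starPsi_Av (h : CAR ψ) (x : Site ν L) :
    Av ψ x * star (ψ x) * Av ψ x = ψ x := by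
  rw [Av, add_mul, star_sq h, zero_add, psi_star_self h, sub_mul, one_mul,
    mul_add, mul_assoc, mul_assoc, psi_star_self h, psi_sq h, mul_zero,
    add_zero, mul_sub, mul_one, ← mul_assoc, star_sq h, zero_mul, sub_zero]
  abel
section Uops

variable [NeZero (2 * L)]

lemma uOp_eq (h : CAR ψ) (x : Site ν L) :
    uOp ψ x = Q ψ ((Finset.univ.erase x).toList) * Av ψ x := by
  rw [uOp, Q, Av, List.map_congr_left (fun a _ => parityFactor_eq h a)]

lemma notmem_erase_toList (x : Site ν L) : x ∉ (Finset.univ.erase x).toList := by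
  rw [Finset.mem_toList]
  simp

lemma mem_erase_toList {x y : Site ν L} (hyx : y ≠ x) :
    y ∈ (Finset.univ.erase x).toList := by
  rw [Finset.mem_toList]
  simp [hyx]

lemma u_star (h : CAR ψ) (x : Site ν L) : star (uOp ψ x) = uOp ψ x := by
  rw [uOp_eq h, StarMul.star_mul, Av_star, Q_star h,
    Av_Q_comm h (notmem_erase_toList x)]

lemma u_sq (h : CAR ψ) (x : Site ν L) : uOp ψ x * uOp ψ x = 1 := by
  rw [uOp_eq h]
  set Qx := Q ψ ((Finset.univ.erase x).toList) with hQx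
  have e3 : Av ψ x * (Qx * Av ψ x) = Qx * (Av ψ x * Av ψ x) := by
    rw [← mul_assoc, Av_Q_comm h (notmem_erase_toList x), mul_assoc]
  simp only [mul_assoc]
  rw [e3, Av_sq h, mul_one, Q_sq h]

lemma u_conj_psi_self (h : CAR ψ) (x : Site ν L) :
    uOp ψ x * ψ x * uOp ψ x = star (ψ x) := by
  rw [uOp_eq h]
  set Qx := Q ψ ((Finset.univ.erase x).toList) with hQx
  have e1 : ∀ t, ψ x * (Qx * t) = Qx * (ψ x * t) := fun t => by
    rw [← mul_assoc, psi_Q_comm h (notmem_erase_toList x), mul_assoc]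
  have e3 : ∀ t, Av ψ x * (Qx * t) = Qx * (Av ψ x * t) := fun t => by
    rw [← mul_assoc, Av_Q_comm h (notmem_erase_toList x), mul_assoc]
  have e4 : ∀ t, Qx * (Qx * t) = t := fun t => by
    rw [← mul_assoc, Q_sq h, one_mul]
  simp only [mul_assoc]
  rw [e1, e3, e4, ← mul_assoc, Av_psi_Av h]

lemma u_conj_starPsi_self (h : CAR ψ) (x : Site ν L) :
    uOp ψ x * star (ψ x) * uOp ψ x = ψ x := by
  rw [uOp_eq h]
  set Qx := Q ψ ((Finset.univ.erase x).toList) with hQx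
  have e1 : ∀ t, star (ψ x) * (Qx * t) = Qx * (star (ψ x) * t) := fun t => by
    rw [← mul_assoc, starPsi_Q_comm h (notmem_erase_toList x), mul_assoc]
  have e3 : ∀ t, Av ψ x * (Qx * t) = Qx * (Av ψ x * t) := fun t => by
    rw [← mul_assoc, Av_Q_comm h (notmem_erase_toList x), mul_assoc]
  have e4 : ∀ t, Qx * (Qx * t) = t := fun t => by
    rw [← mul_assoc, Q_sq h, one_mul]
  simp only [mul_assoc]
  rw [e1, e3, e4, ← mul_assoc, Av_starPsi_Av h]

lemma u_conj_psi_ne (h : CAR ψ) {x y : Site ν L} (hyx : y ≠ x) :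
    uOp ψ x * ψ y * uOp ψ x = ψ y := by
  rw [uOp_eq h]
  set Qx := Q ψ ((Finset.univ.erase x).toList) with hQx
  have e1 : ∀ t, ψ y * (Qx * t) = -(Qx * (ψ y * t)) := fun t => by
    rw [← mul_assoc, psi_Q_anti h (Finset.nodup_toList _) (mem_erase_toList hyx),
      neg_mul, mul_assoc]
  have e2 : ∀ t, Av ψ x * (ψ y * t) = -(ψ y * (Av ψ x * t)) := fun t => by
    have : Av ψ x * ψ y = -(ψ y * Av ψ x) := by rw [psi_Av_anti h hyx, neg_neg]
    rw [← mul_assoc, this, neg_mul, mul_assoc]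
  have e3 : ∀ t, Av ψ x * (Qx * t) = Qx * (Av ψ x * t) := fun t => by
    rw [← mul_assoc, Av_Q_comm h (notmem_erase_toList x), mul_assoc]
  have e4 : ∀ t, Qx * (Qx * t) = t := fun t => by
    rw [← mul_assoc, Q_sq h, one_mul]
  simp only [mul_assoc]
  rw [e1, mul_neg, mul_neg, e3, e4, e2, neg_neg, Av_sq h, mul_one]

lemma u_conj_starPsi_ne (h : CAR ψ) {x y : Site ν L} (hyx : y ≠ x) :
    uOp ψ x * star (ψ y) * uOp ψ x = star (ψ y) := by
  rw [uOp_eq h]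
  set Qx := Q ψ ((Finset.univ.erase x).toList) with hQx
  have e1 : ∀ t, star (ψ y) * (Qx * t) = -(Qx * (star (ψ y) * t)) := fun t => by
    rw [← mul_assoc,
      starPsi_Q_anti h (Finset.nodup_toList _) (mem_erase_toList hyx),
      neg_mul, mul_assoc]
  have e2 : ∀ t, Av ψ x * (star (ψ y) * t) = -(star (ψ y) * (Av ψ x * t)) :=
    fun t => by
    have : Av ψ x * star (ψ y) = -(star (ψ y) * Av ψ x) := by
      rw [starPsi_Av_anti h hyx, neg_neg]
    rw [← mul_assoc, this, neg_mul, mul_assoc]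
  have e3 : ∀ t, Av ψ x * (Qx * t) = Qx * (Av ψ x * t) := fun t => by
    rw [← mul_assoc, Av_Q_comm h (notmem_erase_toList x), mul_assoc]
  have e4 : ∀ t, Qx * (Qx * t) = t := fun t => by
    rw [← mul_assoc, Q_sq h, one_mul]
  simp only [mul_assoc]
  rw [e1, mul_neg, mul_neg, e3, e4, e2, neg_neg, Av_sq h, mul_one]

end Uops
section Ulevel

variable [NeZero (2 * L)]

/-- Partial product of `u`-operators. -/
def UL (ψ : Site ν L → Matrix (Fin N) (Fin N) ℂ) (l : List (Site ν L)) :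
    Matrix (Fin N) (Fin N) ℂ :=
  (l.map (uOp ψ)).prod

@[simp] lemma UL_nil : UL ψ ([] : List (Site ν L)) = 1 := rfl

lemma UL_cons (a : Site ν L) (l : List (Site ν L)) :
    UL ψ (a :: l) = uOp ψ a * UL ψ l := by simp [UL]

lemma UL_star_cons (h : CAR ψ) (a : Site ν L) (l : List (Site ν L)) :
    star (UL ψ (a :: l)) = star (UL ψ l) * uOp ψ a := by
  rw [UL_cons, StarMul.star_mul, u_star h]

lemma UL_star_mul (h : CAR ψ) (l : List (Site ν L)) :
    star (UL ψ l) * UL ψ l = 1 := by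
  induction l with
  | nil => simp
  | cons a l ih =>
    rw [UL_star_cons h, UL_cons]
    calc star (UL ψ l) * uOp ψ a * (uOp ψ a * UL ψ l)
        = star (UL ψ l) * ((uOp ψ a * uOp ψ a) * UL ψ l) := by
          simp only [mul_assoc]
      _ = star (UL ψ l) * UL ψ l := by rw [u_sq h, one_mul]
      _ = 1 := ih

lemma UL_mul_star (h : CAR ψ) (l : List (Site ν L)) :
    UL ψ l * star (UL ψ l) = 1 := by
  induction l with
  | nil => simp
  | cons a l ih =>
    rw [UL_star_cons h, UL_cons]
    calc uOp ψ a * UL ψ l * (star (UL ψ l) * uOp ψ a)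
        = uOp ψ a * ((UL ψ l * star (UL ψ l)) * uOp ψ a) := by
          simp only [mul_assoc]
      _ = uOp ψ a * uOp ψ a := by rw [ih, one_mul]
      _ = 1 := u_sq h a

lemma UL_conj_psi_notmem (h : CAR ψ) {x : Site ν L} {l : List (Site ν L)}
    (hx : x ∉ l) : star (UL ψ l) * ψ x * UL ψ l = ψ x := by
  induction l with
  | nil => simp
  | cons a l ih =>
    have hxa : x ≠ a := fun hh => hx (hh ▸ List.mem_cons_self)
    have hxl : x ∉ l := fun hh => hx (List.mem_cons_of_mem a hh)
    rw [UL_star_cons h, UL_cons]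
    calc star (UL ψ l) * uOp ψ a * ψ x * (uOp ψ a * UL ψ l)
        = star (UL ψ l) * ((uOp ψ a * ψ x * uOp ψ a) * UL ψ l) := by
          simp only [mul_assoc]
      _ = star (UL ψ l) * (ψ x * UL ψ l) := by rw [u_conj_psi_ne h hxa]
      _ = ψ x := by rw [← mul_assoc]; exact ih hxl

lemma UL_conj_starPsi_notmem (h : CAR ψ) {x : Site ν L} {l : List (Site ν L)}
    (hx : x ∉ l) : star (UL ψ l) * star (ψ x) * UL ψ l = star (ψ x) := by
  induction l with
  | nil => simp
  | cons a l ih =>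
    have hxa : x ≠ a := fun hh => hx (hh ▸ List.mem_cons_self)
    have hxl : x ∉ l := fun hh => hx (List.mem_cons_of_mem a hh)
    rw [UL_star_cons h, UL_cons]
    calc star (UL ψ l) * uOp ψ a * star (ψ x) * (uOp ψ a * UL ψ l)
        = star (UL ψ l) * ((uOp ψ a * star (ψ x) * uOp ψ a) * UL ψ l) := by
          simp only [mul_assoc]
      _ = star (UL ψ l) * (star (ψ x) * UL ψ l) := by
          rw [u_conj_starPsi_ne h hxa]
      _ = star (ψ x) := by rw [← mul_assoc]; exact ih hxl

lemma UL_conj_psi_mem (h : CAR ψ) {x : Site ν L} {l : List (Site ν L)}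
    (hnd : l.Nodup) (hx : x ∈ l) :
    star (UL ψ l) * ψ x * UL ψ l = star (ψ x) := by
  induction l with
  | nil => simp at hx
  | cons a l ih =>
    rw [UL_star_cons h, UL_cons]
    rcases List.mem_cons.mp hx with rfl | hxl
    · have hxl : x ∉ l := (List.nodup_cons.mp hnd).1
      calc star (UL ψ l) * uOp ψ x * ψ x * (uOp ψ x * UL ψ l)
          = star (UL ψ l) * ((uOp ψ x * ψ x * uOp ψ x) * UL ψ l) := by
            simp only [mul_assoc]
        _ = star (UL ψ l) * (star (ψ x) * UL ψ l) := by rw [u_conj_psi_self h]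
        _ = star (ψ x) := by rw [← mul_assoc]; exact UL_conj_starPsi_notmem h hxl
    · have hxa : x ≠ a := fun hh => ((List.nodup_cons.mp hnd).1 (hh ▸ hxl)).elim
      calc star (UL ψ l) * uOp ψ a * ψ x * (uOp ψ a * UL ψ l)
          = star (UL ψ l) * ((uOp ψ a * ψ x * uOp ψ a) * UL ψ l) := by
            simp only [mul_assoc]
        _ = star (UL ψ l) * (ψ x * UL ψ l) := by rw [u_conj_psi_ne h hxa]
        _ = star (ψ x) := by
            rw [← mul_assoc]; exact ih (List.nodup_cons.mp hnd).2 hxl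

lemma UL_conj_starPsi_mem (h : CAR ψ) {x : Site ν L} {l : List (Site ν L)}
    (hnd : l.Nodup) (hx : x ∈ l) :
    star (UL ψ l) * star (ψ x) * UL ψ l = ψ x := by
  induction l with
  | nil => simp at hx
  | cons a l ih =>
    rw [UL_star_cons h, UL_cons]
    rcases List.mem_cons.mp hx with rfl | hxl
    · have hxl : x ∉ l := (List.nodup_cons.mp hnd).1
      calc star (UL ψ l) * uOp ψ x * star (ψ x) * (uOp ψ x * UL ψ l)
          = star (UL ψ l) * ((uOp ψ x * star (ψ x) * uOp ψ x) * UL ψ l) := by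
            simp only [mul_assoc]
        _ = star (UL ψ l) * (ψ x * UL ψ l) := by rw [u_conj_starPsi_self h]
        _ = ψ x := by rw [← mul_assoc]; exact UL_conj_psi_notmem h hxl
    · have hxa : x ≠ a := fun hh => ((List.nodup_cons.mp hnd).1 (hh ▸ hxl)).elim
      calc star (UL ψ l) * uOp ψ a * star (ψ x) * (uOp ψ a * UL ψ l)
          = star (UL ψ l) * ((uOp ψ a * star (ψ x) * uOp ψ a) * UL ψ l) := by
            simp only [mul_assoc]
        _ = star (UL ψ l) * (star (ψ x) * UL ψ l) := by
            rw [u_conj_starPsi_ne h hxa]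
        _ = ψ x := by
            rw [← mul_assoc]; exact ih (List.nodup_cons.mp hnd).2 hxl

lemma UPH_eq : UPH ψ = UL ψ (Finset.univ : Finset (Site ν L)).toList := rfl

lemma UPH_star_mul (h : CAR ψ) : star (UPH ψ) * UPH ψ = 1 := by
  rw [UPH_eq]; exact UL_star_mul h _

lemma UPH_mul_star (h : CAR ψ) : UPH ψ * star (UPH ψ) = 1 := by
  rw [UPH_eq]; exact UL_mul_star h _

lemma UPH_conj_psi (h : CAR ψ) (x : Site ν L) :
    star (UPH ψ) * ψ x * UPH ψ = star (ψ x) := by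
  rw [UPH_eq]
  exact UL_conj_psi_mem h (Finset.nodup_toList _)
    (Finset.mem_toList.2 (Finset.mem_univ x))

lemma UPH_conj_starPsi (h : CAR ψ) (x : Site ν L) :
    star (UPH ψ) * star (ψ x) * UPH ψ = ψ x := by
  rw [UPH_eq]
  exact UL_conj_starPsi_mem h (Finset.nodup_toList _)
    (Finset.mem_toList.2 (Finset.mem_univ x))

end Ulevel
section Final

variable [NeZero (2 * L)]

lemma conj_mul (h : CAR ψ) (A B : Matrix (Fin N) (Fin N) ℂ) :
    star (UPH ψ) * (A * B) * UPH ψ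
      = (star (UPH ψ) * A * UPH ψ) * (star (UPH ψ) * B * UPH ψ) := by
  set U := UPH ψ
  calc star U * (A * B) * U
      = star U * (A * ((U * star U) * (B * U))) := by
        rw [UPH_mul_star h, one_mul]; simp only [mul_assoc]
    _ = (star U * A * U) * (star U * B * U) := by simp only [mul_assoc]

lemma conj_smul (c : ℂ) (A : Matrix (Fin N) (Fin N) ℂ) :
    star (UPH ψ) * (c • A) * UPH ψ = c • (star (UPH ψ) * A * UPH ψ) := by
  rw [mul_smul_comm, smul_mul_assoc]

lemma conj_one (h : CAR ψ) :
    star (UPH ψ) * (1 : Matrix (Fin N) (Fin N) ℂ) * UPH ψ = 1 := by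
  rw [mul_one, UPH_star_mul h]

lemma conj_rho (h : CAR ψ) (x : Site ν L) :
    star (UPH ψ) * rho ψ x * UPH ψ = -rho ψ x := by
  rw [rho, mul_sub, sub_mul, conj_smul, conj_one h, conj_mul h,
    UPH_conj_starPsi h, UPH_conj_psi h, psi_star_self h]
  module

lemma conj_sub (A B : Matrix (Fin N) (Fin N) ℂ) :
    star (UPH ψ) * (A - B) * UPH ψ
      = star (UPH ψ) * A * UPH ψ - star (UPH ψ) * B * UPH ψ := by
  rw [mul_sub, sub_mul]

lemma conj_sum {ι : Type*} (s : Finset ι) (f : ι → Matrix (Fin N) (Fin N) ℂ) :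
    star (UPH ψ) * (∑ i ∈ s, f i) * UPH ψ
      = ∑ i ∈ s, star (UPH ψ) * f i * UPH ψ := by
  rw [Finset.mul_sum, Finset.sum_mul]

lemma conj_hop (h : CAR ψ) {x y : Site ν L} (hxy : x ≠ y) :
    star (UPH ψ) * (star (ψ x) * ψ y - star (ψ y) * ψ x) * UPH ψ
      = star (ψ x) * ψ y - star (ψ y) * ψ x := by
  rw [conj_sub, conj_mul h, conj_mul h, UPH_conj_starPsi h, UPH_conj_starPsi h,
    UPH_conj_psi h, UPH_conj_psi h, psi_star_ne h hxy, psi_star_ne h hxy.symm]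
  abel

lemma eVec_add_ne [Fact (1 < 2 * L)] (x : Site ν L) (μ : Fin ν) :
    x ≠ x + eVec ν L μ := by
  intro heq
  have := congrFun heq μ
  simp only [Pi.add_apply, eVec, if_pos rfl] at this
  exact one_ne_zero (left_eq_add.mp this)

lemma conj_HK [Fact (1 < 2 * L)] (h : CAR ψ) (κ : ℝ) :
    star (UPH ψ) * HK κ ψ * UPH ψ = HK κ ψ := by
  rw [HK, conj_smul, conj_sum]
  congr 1
  refine Finset.sum_congr rfl fun x _ => ?_
  rw [conj_sum]
  refine Finset.sum_congr rfl fun μ _ => ?_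
  rw [conj_smul, conj_hop h (eVec_add_ne x μ)]

lemma conj_Hint (h : CAR ψ) :
    star (UPH ψ) * Hint ψ * UPH ψ = Hint ψ := by
  rw [Hint, conj_sum]
  refine Finset.sum_congr rfl fun x _ => ?_
  rw [conj_sum]
  refine Finset.sum_congr rfl fun μ _ => ?_
  rw [conj_mul h, conj_rho h, conj_rho h, neg_mul_neg]

end Final

end CARlemmas
end PH

/-- **Particle-hole invariance**: `U_PH* ψ(x) U_PH = ψ(x)*`,
`U_PH* ρ(x) U_PH = -ρ(x)` and `U_PH* H(0) U_PH = H(0)`. -/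
theorem particle_hole_invariance (ν L N : ℕ) [NeZero (2 * L)]
    (hν : 2 ≤ ν) (hL : 1 ≤ L) (hN : 1 ≤ N)
    (ψ : Site ν L → Matrix (Fin N) (Fin N) ℂ) (hCAR : CAR ψ)
    (κ g : ℝ) (hg : 0 ≤ g) :
    (∀ x : Site ν L, star (UPH ψ) * ψ x * UPH ψ = star (ψ x)) ∧
    (∀ x : Site ν L, star (UPH ψ) * rho ψ x * UPH ψ = -rho ψ x) ∧
    star (UPH ψ) * Ham κ 0 g ψ * UPH ψ = Ham κ 0 g ψ := by
  haveI : Fact (1 < 2 * L) := ⟨by omega⟩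
  refine ⟨PH.UPH_conj_psi hCAR, PH.conj_rho hCAR, ?_⟩
  rw [Ham, Complex.ofReal_zero, zero_smul, add_zero]
  rw [mul_add, add_mul, PH.conj_smul, PH.conj_HK hCAR, PH.conj_Hint hCAR]

end
end

section
/- Vanishing of the order parameter at zero mass: for every β > 0 and every x ∈ Λ, the thermal expectation of the charge density vanishes, ⟨ρ(x)⟩_{β,0} = 0. -/
open Matrix Filter MeasureTheory

noncomputable section

variable {ν L N : ℕ}

section ParticleHole

variable {ν L N : ℕ}

/-- Single-site particle–hole reflection `V_x = ψ(x) + ψ(x)*`. -/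
def Vop (ψ : Site ν L → Matrix (Fin N) (Fin N) ℂ) (x : Site ν L) :
    Matrix (Fin N) (Fin N) ℂ := ψ x + star (ψ x)

variable {ψ : Site ν L → Matrix (Fin N) (Fin N) ℂ} (h : CAR ψ)

include h

lemma car_same (x : Site ν L) : ψ x * star (ψ x) + star (ψ x) * ψ x = 1 := by
  simpa using h.1 x x

lemma car_ne {x y : Site ν L} (hxy : x ≠ y) :
    ψ x * star (ψ y) + star (ψ y) * ψ x = 0 := by
  simpa [hxy] using h.1 x y

lemma psi_mul_self (x : Site ν L) : ψ x * ψ x = 0 := by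
  have h2 : ψ x * ψ x + ψ x * ψ x = 0 := h.2 x x
  have : (2 : ℂ) • (ψ x * ψ x) = 0 := by rw [two_smul]; exact h2
  simpa using (smul_eq_zero.mp this).resolve_left (by norm_num)

lemma star_psi_mul_self (x : Site ν L) : star (ψ x) * star (ψ x) = 0 := by
  have : star (ψ x * ψ x) = star (0 : Matrix (Fin N) (Fin N) ℂ) := by
    rw [psi_mul_self h]
  simpa [StarMul.star_mul] using this

lemma psi_star_anti {x y : Site ν L} (hxy : x ≠ y) :
    ψ x * star (ψ y) = -(star (ψ y) * ψ x) :=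
  eq_neg_of_add_eq_zero_left (car_ne h hxy)

lemma star_psi_anti {x y : Site ν L} (hxy : x ≠ y) :
    star (ψ x) * ψ y = -(ψ y * star (ψ x)) :=
  eq_neg_of_add_eq_zero_right (car_ne h hxy.symm)

lemma psi_anti (x y : Site ν L) : ψ x * ψ y = -(ψ y * ψ x) :=
  eq_neg_of_add_eq_zero_left (h.2 x y)

lemma star_star_anti (x y : Site ν L) :
    star (ψ x) * star (ψ y) = -(star (ψ y) * star (ψ x)) := by
  have := congrArg star (psi_anti h y x)
  simpa [StarMul.star_mul] using this

lemma Vop_psi_ne {x y : Site ν L} (hxy : x ≠ y) :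
    Vop ψ x * ψ y = -(ψ y * Vop ψ x) := by
  unfold Vop
  rw [add_mul, mul_add, psi_anti h x y, star_psi_anti h hxy]
  abel

lemma Vop_star_ne {x y : Site ν L} (hxy : x ≠ y) :
    Vop ψ x * star (ψ y) = -(star (ψ y) * Vop ψ x) := by
  unfold Vop
  rw [add_mul, mul_add, psi_star_anti h hxy, star_star_anti h x y]
  abel

lemma Vop_psi_self (x : Site ν L) : Vop ψ x * ψ x = star (ψ x) * Vop ψ x := by
  unfold Vop
  rw [add_mul, mul_add, psi_mul_self h, star_psi_mul_self h, zero_add, add_zero]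

lemma Vop_star_self (x : Site ν L) :
    Vop ψ x * star (ψ x) = ψ x * Vop ψ x := by
  unfold Vop
  rw [add_mul, mul_add, psi_mul_self h, star_psi_mul_self h, zero_add, add_zero]

lemma Vop_sq (x : Site ν L) : Vop ψ x * Vop ψ x = 1 := by
  unfold Vop
  rw [add_mul, mul_add, mul_add, psi_mul_self h, star_psi_mul_self h, zero_add, add_zero]
  exact car_same h x

lemma Vop_star (x : Site ν L) : star (Vop ψ x) = Vop ψ x := by
  unfold Vop; rw [star_add, star_star, add_comm]

/-- Conjugation of `ψ y`, `ψ y*` by a product of `V`'s over a list not containing `y`. -/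
lemma prod_conj_notmem (l : List (Site ν L)) (y : Site ν L) (hy : y ∉ l) :
    (l.map (Vop ψ)).prod * ψ y = ((-1 : ℂ) ^ l.length) • (ψ y * (l.map (Vop ψ)).prod) ∧
    (l.map (Vop ψ)).prod * star (ψ y)
      = ((-1 : ℂ) ^ l.length) • (star (ψ y) * (l.map (Vop ψ)).prod) := by
  induction l with
  | nil => simp
  | cons a l ih =>
    have hya : y ≠ a := by simp only [List.mem_cons] at hy; tauto
    have hyl : y ∉ l := by simp only [List.mem_cons] at hy; tauto
    obtain ⟨ih1, ih2⟩ := ih hyl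
    simp only [List.map_cons, List.prod_cons, List.length_cons]
    constructor
    · rw [mul_assoc, ih1, mul_smul_comm, ← mul_assoc, Vop_psi_ne h hya.symm, neg_mul,
        smul_neg, ← neg_smul, mul_assoc, pow_succ]
      ring_nf
    · rw [mul_assoc, ih2, mul_smul_comm, ← mul_assoc, Vop_star_ne h hya.symm, neg_mul,
        smul_neg, ← neg_smul, mul_assoc, pow_succ]
      ring_nf

/-- Conjugation of `ψ y`, `ψ y*` by a product of `V`'s over a duplicate-free list
containing `y`. -/
lemma prod_conj_mem (l : List (Site ν L)) (hl : l.Nodup) (y : Site ν L) (hy : y ∈ l) :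
    (l.map (Vop ψ)).prod * ψ y
      = ((-1 : ℂ) ^ (l.length - 1)) • (star (ψ y) * (l.map (Vop ψ)).prod) ∧
    (l.map (Vop ψ)).prod * star (ψ y)
      = ((-1 : ℂ) ^ (l.length - 1)) • (ψ y * (l.map (Vop ψ)).prod) := by
  induction l with
  | nil => simp at hy
  | cons a l ih =>
    have ha : a ∉ l := (List.nodup_cons.mp hl).1
    have hl' : l.Nodup := (List.nodup_cons.mp hl).2
    simp only [List.map_cons, List.prod_cons, List.length_cons, Nat.add_sub_cancel]
    rcases List.mem_cons.mp hy with rfl | hyl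
    · obtain ⟨h1, h2⟩ := prod_conj_notmem h l y ha
      constructor
      · rw [mul_assoc, h1, mul_smul_comm, ← mul_assoc, Vop_psi_self h, mul_assoc]
      · rw [mul_assoc, h2, mul_smul_comm, ← mul_assoc, Vop_star_self h, mul_assoc]
    · have hya : y ≠ a := fun hh => ha (hh ▸ hyl)
      have hlen : l.length - 1 + 1 = l.length :=
        Nat.succ_pred_eq_of_pos (List.length_pos_of_mem hyl)
      obtain ⟨ih1, ih2⟩ := ih hl' hyl
      constructor
      · rw [mul_assoc, ih1, mul_smul_comm, ← mul_assoc, Vop_star_ne h hya.symm, neg_mul,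
          smul_neg, ← neg_smul, mul_assoc]
        congr 1
        conv_rhs => rw [← hlen]
        rw [pow_succ]; ring
      · rw [mul_assoc, ih2, mul_smul_comm, ← mul_assoc, Vop_psi_ne h hya.symm, neg_mul,
          smul_neg, ← neg_smul, mul_assoc]
        congr 1
        conv_rhs => rw [← hlen]
        rw [pow_succ]; ring

lemma prod_mul_star (l : List (Site ν L)) :
    (l.map (Vop ψ)).prod * star ((l.map (Vop ψ)).prod) = 1 := by
  induction l with
  | nil => simp
  | cons a l ih =>
    simp only [List.map_cons, List.prod_cons, StarMul.star_mul, Vop_star h]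
    calc Vop ψ a * (l.map (Vop ψ)).prod * (star ((l.map (Vop ψ)).prod) * Vop ψ a)
        = Vop ψ a * ((l.map (Vop ψ)).prod * star ((l.map (Vop ψ)).prod)) * Vop ψ a := by
          noncomm_ring
      _ = 1 := by rw [ih, mul_one, Vop_sq h]

variable [NeZero (2 * L)]

/-- The particle–hole unitary `U = ∏_x V_x`. -/
def Uop (ψ : Site ν L → Matrix (Fin N) (Fin N) ℂ) [NeZero (2 * L)] :
    Matrix (Fin N) (Fin N) ℂ :=
  (((Finset.univ : Finset (Site ν L)).toList).map (Vop ψ)).prod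

omit h in
lemma univ_toList_length :
    ((Finset.univ : Finset (Site ν L)).toList).length = (2 * L) ^ ν := by
  rw [Finset.length_toList, Finset.card_univ]
  simp [ZMod.card]

lemma Uop_mul_star : Uop ψ * star (Uop ψ) = 1 := prod_mul_star h _

lemma Uop_psi (hν : 1 ≤ ν) (y : Site ν L) :
    Uop ψ * ψ y = -(star (ψ y) * Uop ψ) ∧
    Uop ψ * star (ψ y) = -(ψ y * Uop ψ) := by
  have hmem : y ∈ (Finset.univ : Finset (Site ν L)).toList :=
    Finset.mem_toList.mpr (Finset.mem_univ y)
  obtain ⟨h1, h2⟩ := prod_conj_mem h _ (Finset.nodup_toList _) y hmem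
  have hL1 : 1 ≤ 2 * L := Nat.one_le_iff_ne_zero.mpr (NeZero.ne _)
  have hcard : 1 ≤ (2 * L) ^ ν := Nat.one_le_pow _ _ (by omega)
  have heven : Even ((2 * L) ^ ν) :=
    Nat.even_pow.mpr ⟨even_two_mul L, by omega⟩
  have hodd : Odd (((Finset.univ : Finset (Site ν L)).toList).length - 1) := by
    rw [univ_toList_length]
    exact Nat.Even.sub_odd hcard heven odd_one
  have hsgn : ((-1 : ℂ) ^ (((Finset.univ : Finset (Site ν L)).toList).length - 1)) = -1 :=
    hodd.neg_one_pow
  rw [hsgn] at h1 h2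
  constructor
  · show (((Finset.univ : Finset (Site ν L)).toList).map (Vop ψ)).prod * ψ y = _
    rw [h1]; simp [Uop]
  · show (((Finset.univ : Finset (Site ν L)).toList).map (Vop ψ)).prod * star (ψ y) = _
    rw [h2]; simp [Uop]

lemma Uop_rho (hν : 1 ≤ ν) (x : Site ν L) :
    Uop ψ * rho ψ x = -(rho ψ x * Uop ψ) := by
  obtain ⟨hp, hs⟩ := Uop_psi h hν x
  have hps : ψ x * star (ψ x) = 1 - star (ψ x) * ψ x := eq_sub_of_add_eq (car_same h x)
  have key : Uop ψ * (star (ψ x) * ψ x) = (1 - star (ψ x) * ψ x) * Uop ψ := by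
    rw [← mul_assoc, hs, neg_mul, mul_assoc, hp, mul_neg, neg_neg, ← mul_assoc, hps]
  unfold rho
  rw [mul_sub, sub_mul, key, mul_smul_comm, smul_mul_assoc, mul_one, one_mul, sub_mul, one_mul]
  have h2 : Uop ψ = (1/2 : ℂ) • Uop ψ + (1/2 : ℂ) • Uop ψ := by
    rw [← add_smul]; norm_num
  nth_rewrite 1 [h2]
  abel

lemma Uop_commute_pair (hν : 1 ≤ ν) {x y : Site ν L} (hxy : x ≠ y) :
    Commute (Uop ψ) (star (ψ x) * ψ y - star (ψ y) * ψ x) := by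
  obtain ⟨hpx, hsx⟩ := Uop_psi h hν x
  obtain ⟨hpy, hsy⟩ := Uop_psi h hν y
  have k1 : Uop ψ * (star (ψ x) * ψ y) = -(star (ψ y) * ψ x * Uop ψ) := by
    rw [← mul_assoc, hsx, neg_mul, mul_assoc, hpy, mul_neg, neg_neg, ← mul_assoc,
      psi_star_anti h hxy, neg_mul]
  have k2 : Uop ψ * (star (ψ y) * ψ x) = -(star (ψ x) * ψ y * Uop ψ) := by
    rw [← mul_assoc, hsy, neg_mul, mul_assoc, hpx, mul_neg, neg_neg, ← mul_assoc,
      psi_star_anti h hxy.symm, neg_mul]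
  show Uop ψ * _ = _ * Uop ψ
  rw [mul_sub, k1, k2, sub_mul]
  abel

lemma Uop_commute_rho_pair (hν : 1 ≤ ν) (x y : Site ν L) :
    Commute (Uop ψ) (rho ψ x * rho ψ y) := by
  show Uop ψ * _ = _ * Uop ψ
  rw [← mul_assoc, Uop_rho h hν x, neg_mul, mul_assoc, Uop_rho h hν y, mul_neg, neg_neg,
    ← mul_assoc]

lemma Uop_commute_HK (hν : 1 ≤ ν)
    (hne : ∀ (y : Site ν L) (μ : Fin ν), y ≠ y + eVec ν L μ) (κ : ℝ) :
    Commute (Uop ψ) (HK κ ψ) := by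
  unfold HK
  refine Commute.smul_right ?_ _
  refine Commute.sum_right _ _ _ fun y _ => ?_
  refine Commute.sum_right _ _ _ fun μ _ => ?_
  exact Commute.smul_right (Uop_commute_pair h hν (hne y μ)) _

lemma Uop_commute_Hint (hν : 1 ≤ ν) : Commute (Uop ψ) (Hint ψ) := by
  unfold Hint
  refine Commute.sum_right _ _ _ fun y _ => ?_
  refine Commute.sum_right _ _ _ fun μ _ => ?_
  exact Uop_commute_rho_pair h hν y _

end ParticleHole



/-- **Vanishing of the order parameter at zero mass**: for every `β > 0` and every
site `x ∈ Λ`, the thermal expectation of the charge density vanishes,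
`⟨ρ(x)⟩_{β,0} = 0`. -/
theorem charge_density_vanishes_at_zero_mass (ν L N : ℕ) [NeZero (2 * L)]
    (hν : 2 ≤ ν) (hL : 1 ≤ L) (hN : 1 ≤ N)
    (ψ : Site ν L → Matrix (Fin N) (Fin N) ℂ) (hCAR : CAR ψ)
    (κ g : ℝ) (hg : 0 ≤ g) (β : ℝ) (hβ : 0 < β) (x : Site ν L) :
    thermal β (Ham κ 0 g ψ) (rho ψ x) = 0 := by
  classical
  have hν1 : 1 ≤ ν := le_trans (by norm_num) hν
  haveI : Fact (1 < 2 * L) := ⟨by omega⟩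
  have hne : ∀ (y : Site ν L) (μ : Fin ν), y ≠ y + eVec ν L μ := by
    intro y μ heq
    have h2 := congrFun heq μ
    simp only [Pi.add_apply, eVec, if_pos rfl] at h2
    exact one_ne_zero (left_eq_add.mp h2)
  have hComm : Commute (Uop ψ) (Ham κ 0 g ψ) := by
    unfold Ham
    refine Commute.add_right (Commute.add_right (Uop_commute_HK hCAR hν1 hne κ) ?_)
      (Commute.smul_right (Uop_commute_Hint hCAR hν1) _)
    simp only [Complex.ofReal_zero, zero_smul]
    exact Commute.zero_right _
  set U := Uop ψ with hUdef
  set E := NormedSpace.exp ((-(β : ℂ)) • Ham κ 0 g ψ) with hEdef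
  have hE : Commute U E := (hComm.smul_right _).exp_right
  have hUs : U * star U = 1 := Uop_mul_star hCAR
  have hsU : star U * U = 1 := mul_eq_one_comm.mp hUs
  have hUρ : U * rho ψ x = -(rho ψ x * U) := Uop_rho hCAR hν1 x
  have key : rho ψ x * E = -(star U * (rho ψ x * E) * U) := by
    calc rho ψ x * E = (star U * U) * (rho ψ x * E) := by rw [hsU, one_mul]
      _ = star U * ((U * rho ψ x) * E) := by noncomm_ring
      _ = star U * ((-(rho ψ x * U)) * E) := by rw [hUρ]
      _ = -(star U * (rho ψ x * (U * E))) := by noncomm_ring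
      _ = -(star U * (rho ψ x * (E * U))) := by rw [hE.eq]
      _ = -(star U * (rho ψ x * E) * U) := by noncomm_ring
  have htr : (rho ψ x * E).trace = 0 := by
    have h1 : (rho ψ x * E).trace = -(((star U * (rho ψ x * E)) * U).trace) := by
      conv_lhs => rw [key]
      rw [Matrix.trace_neg]
    have h2 : ((star U * (rho ψ x * E)) * U).trace = (rho ψ x * E).trace := by
      rw [Matrix.trace_mul_comm, ← mul_assoc, hUs, one_mul]
    have h3 : (rho ψ x * E).trace = -((rho ψ x * E).trace) := by rw [h2] at h1; exact h1
    have h4 : (2 : ℂ) * (rho ψ x * E).trace = 0 := by linear_combination h3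
    exact (mul_eq_zero.mp h4).resolve_left two_ne_zero
  unfold thermal
  rw [← hEdef, htr, zero_div]


end
end

section
/- Gaussian integral representation for matrix exponentials: for every Hermitian matrix D ∈ M_n(ℂ), exp(−D²) = (4π)^{−1/2} ∫_ℝ exp(ikD) · e^{−k²/4} dk, where the integral is the Bochner integral of the matrix-valued function k ↦ e^{−k²/4} exp(ikD). -/
open Matrix MeasureTheory

noncomputable section

attribute [local instance] Matrix.normedAddCommGroup Matrix.normedSpace

/-- **Gaussian integral representation for matrix exponentials**: for every
Hermitian matrix `D ∈ M_n(ℂ)`,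
`exp(-D²) = (4π)^{-1/2} ∫_ℝ e^{ikD} e^{-k²/4} dk`,
the integral being the Bochner integral of the matrix-valued function
`k ↦ e^{-k²/4} exp(ikD)`. -/
theorem gaussian_integral_matrix_exp (n : ℕ) (D : Matrix (Fin n) (Fin n) ℂ)
    (hD : Dᴴ = D) :
    NormedSpace.exp (-(D * D)) =
      (Real.sqrt (4 * Real.pi))⁻¹ •
        ∫ k : ℝ, Real.exp (-k ^ 2 / 4) •
          NormedSpace.exp ((Complex.I * (k : ℂ)) • D) := by
  have hH : D.IsHermitian := hD
  set U : Matrix (Fin n) (Fin n) ℂ := (hH.eigenvectorUnitary : Matrix (Fin n) (Fin n) ℂ) with hUdef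
  set lam : Fin n → ℝ := hH.eigenvalues with hlam
  have hUU : star U * U = 1 := Matrix.mem_unitaryGroup_iff'.mp hH.eigenvectorUnitary.2
  have hUU' : U * star U = 1 := Matrix.mem_unitaryGroup_iff.mp hH.eigenvectorUnitary.2
  have hUinv : U⁻¹ = star U := Matrix.inv_eq_left_inv hUU
  have hUnit : IsUnit U := ⟨⟨U, star U, hUU', hUU⟩, rfl⟩
  have hspec : D = U * diagonal (fun i => (lam i : ℂ)) * star U := by
    exact hH.spectral_theorem
  -- conjugation of exp
  have key : ∀ v : Fin n → ℂ,
      NormedSpace.exp (U * diagonal v * star U)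
        = U * diagonal (fun i => Complex.exp (v i)) * star U := by
    intro v
    rw [← hUinv, Matrix.exp_conj U (diagonal v) hUnit, Matrix.exp_diagonal,
      show NormedSpace.exp v = fun i => Complex.exp (v i) from
        funext fun i => by rw [Pi.coe_exp, Complex.exp_eq_exp_ℂ],
      hUinv]
  -- the conjugation-by-U map as a continuous linear map
  let Tl : (Fin n → ℂ) →ₗ[ℂ] Matrix (Fin n) (Fin n) ℂ :=
    (LinearMap.mulRight ℂ (star U)).comp
      ((LinearMap.mulLeft ℂ U).comp (Matrix.diagonalLinearMap (Fin n) ℂ ℂ))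
  let T : (Fin n → ℂ) →L[ℂ] Matrix (Fin n) (Fin n) ℂ := Tl.toContinuousLinearMap
  have hT : ∀ v, T v = U * diagonal v * star U := fun v => rfl
  -- the Gaussian family
  set g : ℝ → Fin n → ℂ :=
    fun k i => Complex.exp ((-(1/4) : ℂ) * (k:ℂ)^2 + (Complex.I * (lam i : ℂ)) * (k:ℂ) + 0)
    with hg
  have habs : ∀ (k : ℝ) (i : Fin n), ‖g k i‖ = Real.exp (-(1/4) * k^2) := by
    intro k i
    rw [hg, Complex.norm_exp]
    congr 1
    simp [Complex.add_re, Complex.mul_re, Complex.I_re, Complex.I_im, ← Complex.ofReal_pow]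
  have hgcont : Continuous g := by rw [hg]; fun_prop
  have hgint : Integrable g := by
    apply Integrable.mono' (g := fun k => Real.exp (-(1/4) * k^2))
      (integrable_exp_neg_mul_sq (by norm_num)) hgcont.aestronglyMeasurable
    filter_upwards with k
    apply (pi_norm_le_iff_of_nonneg (Real.exp_nonneg _)).2
    intro i
    rw [habs]
  -- the integrand is T ∘ g
  have hfg : ∀ k : ℝ,
      Real.exp (-k ^ 2 / 4) • NormedSpace.exp ((Complex.I * (k : ℂ)) • D) = T (g k) := by
    intro k
    have h1 : (Complex.I * (k : ℂ)) • D
        = U * diagonal (fun i => Complex.I * (k:ℂ) * (lam i : ℂ)) * star U := by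
      rw [hspec, ← Matrix.smul_mul, ← Matrix.mul_smul, ← Matrix.diagonal_smul]
      rfl
    have h2 : (Real.exp (-k ^ 2 / 4) • fun i : Fin n =>
        Complex.exp (Complex.I * (k:ℂ) * (lam i : ℂ))) = g k := by
      funext i
      show Real.exp (-k ^ 2 / 4) • Complex.exp (Complex.I * (k:ℂ) * (lam i : ℂ)) = g k i
      rw [Complex.real_smul, Complex.ofReal_exp, ← Complex.exp_add, hg]
      congr 1
      push_cast
      ring
    rw [h1, key, hT, ← Matrix.smul_mul, ← Matrix.mul_smul, ← Matrix.diagonal_smul, h2]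
  -- value of the scalar integrals
  have hπ : (0:ℝ) < 4 * Real.pi := by positivity
  have hsqrt : ((Real.sqrt (4 * Real.pi) : ℝ) : ℂ) = ((4 * Real.pi : ℝ) : ℂ) ^ (1/2 : ℂ) := by
    rw [Real.sqrt_eq_rpow, Complex.ofReal_cpow hπ.le]
    norm_num
  have hgval : (∫ k, g k)
      = ((Real.sqrt (4 * Real.pi) : ℝ) : ℂ) • fun i => Complex.exp (-((lam i : ℂ))^2) := by
    funext i
    have h1 : (∫ k, g k) i = ∫ k, g k i :=
      ((ContinuousLinearMap.proj (R := ℂ) (φ := fun _ : Fin n => ℂ) i).integral_comp_comm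
        hgint).symm
    have hb : (-(1/4) : ℂ).re < 0 := by norm_num
    rw [h1, hg]
    rw [integral_cexp_quadratic hb (Complex.I * (lam i : ℂ)) 0]
    simp only [Pi.smul_apply, smul_eq_mul]
    rw [hsqrt]
    congr 1
    · congr 1
      push_cast
      ring
    · congr 1
      have : (Complex.I * (lam i : ℂ))^2 = -((lam i : ℂ)^2) := by
        rw [mul_pow, Complex.I_sq]; ring
      rw [this]
      ring
  -- exp(-D²)
  have hsq : D * D = U * diagonal (fun i => ((lam i : ℂ))^2) * star U := by
    conv_lhs => rw [hspec]
    have h2 : (U * diagonal (fun i => (lam i:ℂ)) * star U)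
          * (U * diagonal (fun i => (lam i:ℂ)) * star U)
        = U * (diagonal (fun i => (lam i:ℂ)) * (star U * U)
            * diagonal (fun i => (lam i:ℂ))) * star U := by
      simp only [Matrix.mul_assoc]
    rw [h2, hUU, Matrix.mul_one, Matrix.diagonal_mul_diagonal]
    congr 2
    funext i
    ring
  have hexpDD : NormedSpace.exp (-(D * D))
      = T (fun i => Complex.exp (-((lam i : ℂ))^2)) := by
    rw [hsq, ← Matrix.neg_mul, ← Matrix.mul_neg, Matrix.diagonal_neg, key, hT]
  -- put everything together
  simp only [hfg]
  rw [show (∫ k, T (g k)) = T (∫ k, g k) from ContinuousLinearMap.integral_comp_comm T hgint, hgval, _root_.map_smul, hexpDD]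
  rw [show ((Real.sqrt (4 * Real.pi) : ℝ) : ℂ) • T (fun i => Complex.exp (-((lam i : ℂ))^2))
      = (Real.sqrt (4 * Real.pi)) • T (fun i => Complex.exp (-((lam i : ℂ))^2)) from
    by rw [← Complex.coe_algebraMap]; exact algebraMap_smul ℂ _ _]
  rw [smul_smul, inv_mul_cancel₀ (Real.sqrt_pos.mpr hπ).ne', one_smul]

end
end

section
/- Double commutator bound: for every dual momentum p ∈ Λ*, the double commutator with the zero-mass Hamiltonian satisfies [ρ̃_p, [H(0), ρ̃_{−p}]] = [ρ̃_p, [H_K, ρ̃_{−p}]] and its operator norm obeys ‖[ρ̃_p, [H(0), ρ̃_{−p}]]‖ ≤ 8|κ|ν. -/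
open Matrix Filter MeasureTheory

noncomputable section

variable {ν L N : ℕ}

/-- The dual momentum `p = (π n₁/L, …, π n_ν/L)` associated with `n ∈ Λ*`. -/
def momentum (ν L : ℕ) (n : Site ν L) : Fin ν → ℝ :=
  fun μ => Real.pi * ((n μ).val : ℝ) / (L : ℝ)

/-- The inner product `p · x` of a dual momentum `p` (labelled by `n`) with `x`. -/
def pdot (ν L : ℕ) (n x : Site ν L) : ℝ :=
  ∑ μ : Fin ν, momentum ν L n μ * ((x μ).val : ℝ)

/-- The Fourier mode `ρ̃_p = |Λ|^{-1/2} Σ_x e^{i p·x} ρ(x)` of the charge density. -/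
def rhoTilde [NeZero (2 * L)] (ψ : Site ν L → Matrix (Fin N) (Fin N) ℂ)
    (n : Site ν L) : Matrix (Fin N) (Fin N) ℂ :=
  ((Real.sqrt (Fintype.card (Site ν L)) : ℂ))⁻¹ •
    ∑ x : Site ν L, Complex.exp (Complex.I * ((pdot ν L n x : ℝ) : ℂ)) • rho ψ x

/-- The commutator `[A, B] = AB - BA`. -/
def commut (A B : Matrix (Fin N) (Fin N) ℂ) : Matrix (Fin N) (Fin N) ℂ :=
  A * B - B * A

section NormAux
lemma norm_le_one_of {N : ℕ} (u : EuclideanSpace ℂ (Fin N) →L[ℂ] EuclideanSpace ℂ (Fin N))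
    (h : u*u = 0) (h2 : u * star u + star u * u = 1) : ‖u‖ ≤ 1 := by
  have hs : star u * star u = 0 := by rw [← StarMul.star_mul, h]; exact star_zero (EuclideanSpace ℂ (Fin N) →L[ℂ] EuclideanSpace ℂ (Fin N))
  have ha : (star u * u) * (star u * u) = star u * u := by
    calc (star u * u) * (star u * u) = star u * (u * star u) * u := by noncomm_ring
    _ = star u * (1 - star u * u) * u := by rw [eq_sub_of_add_eq h2]
    _ = star u * u - (star u * star u) * (u * u) := by
        simp [mul_sub, sub_mul, mul_assoc]
    _ = star u * u := by rw [hs]; simp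
  have hn : ‖star u * u‖ ≤ 1 := by
    have := CStarRing.norm_star_mul_self (x := star u * u)
    rw [StarMul.star_mul, star_star, ha] at this
    nlinarith [norm_nonneg (star u * u)]
  have h3 : ‖u‖^2 ≤ 1 := by
    rw [sq, ← CStarRing.norm_star_mul_self]; exact hn
  nlinarith [norm_nonneg u]
end NormAux

section Aux
variable {ν L N : ℕ}

lemma commut_smul_right (A B : Matrix (Fin N) (Fin N) ℂ) (c : ℂ) :
    commut A (c • B) = c • commut A B := by
  simp [commut, mul_smul_comm, smul_mul_assoc, smul_sub]

lemma commut_smul_left (A B : Matrix (Fin N) (Fin N) ℂ) (c : ℂ) :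
    commut (c • A) B = c • commut A B := by
  simp [commut, mul_smul_comm, smul_mul_assoc, smul_sub]

lemma commut_sum_right {ι : Type*} (s : Finset ι) (A : Matrix (Fin N) (Fin N) ℂ)
    (B : ι → Matrix (Fin N) (Fin N) ℂ) :
    commut A (∑ i ∈ s, B i) = ∑ i ∈ s, commut A (B i) := by
  simp [commut, Finset.mul_sum, Finset.sum_mul, Finset.sum_sub_distrib]

lemma commut_sum_left {ι : Type*} (s : Finset ι) (A : ι → Matrix (Fin N) (Fin N) ℂ)
    (B : Matrix (Fin N) (Fin N) ℂ) :
    commut (∑ i ∈ s, A i) B = ∑ i ∈ s, commut (A i) B := by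
  simp [commut, Finset.mul_sum, Finset.sum_mul, Finset.sum_sub_distrib]

lemma commut_sub_right (A B C : Matrix (Fin N) (Fin N) ℂ) :
    commut A (B - C) = commut A B - commut A C := by
  simp only [commut, mul_sub, sub_mul]; abel

lemma commut_add_right (A B C : Matrix (Fin N) (Fin N) ℂ) :
    commut A (B + C) = commut A B + commut A C := by
  simp only [commut, mul_add, add_mul]; abel

lemma commut_add_left (A B C : Matrix (Fin N) (Fin N) ℂ) :
    commut (A + B) C = commut A C + commut B C := by
  simp only [commut, mul_add, add_mul]; abel

lemma commut_one_smul (A : Matrix (Fin N) (Fin N) ℂ) (c : ℂ) :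
    commut A (c • (1 : Matrix (Fin N) (Fin N) ℂ)) = 0 := by
  simp [commut, mul_smul_comm, smul_mul_assoc]

lemma commut_skew (A B : Matrix (Fin N) (Fin N) ℂ) : commut A B = - commut B A := by
  simp only [commut]; abel

lemma key_noncomm {R : Type*} [Ring R] (A B C D Zb Za : R)
    (hZb : ∀ M : R, M * Zb = Zb * M) (hZa : ∀ M : R, M * Za = Za * M)
    (hBC : B * C = Zb - C * B) (hAD : A * D = Za - D * A)
    (hAC : A * C = -(C * A)) (hBD : B * D = -(D * B)) :
    A*B*(C*D) - C*D*(A*B) = Zb*(A*D) - Za*(C*B) := by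
  have expand : A*B*(C*D) = Zb * (A*D) - Za * (C*B) + C*D*(A*B) := by
    calc A*B*(C*D) = A*(B*C)*D := by noncomm_ring
    _ = A*(Zb - C*B)*D := by rw [hBC]
    _ = A*Zb*D - (A*C)*(B*D) := by noncomm_ring
    _ = A*Zb*D - (-(C*A))*(-(D*B)) := by rw [hAC, hBD]
    _ = A*Zb*D - C*(A*D)*B := by noncomm_ring
    _ = A*Zb*D - C*(Za - D*A)*B := by rw [hAD]
    _ = A*Zb*D - C*Za*B + C*D*(A*B) := by noncomm_ring
    _ = Zb*(A*D) - Za*(C*B) + C*D*(A*B) := by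
        rw [hZb A, hZa C]; noncomm_ring
  rw [expand]; abel

/-- Key CAR computation: `[ψ(a)* ψ(b), ρ(y)] = (δ_{by} - δ_{ay}) ψ(a)* ψ(b)`. -/
lemma commut_hop_rho (ψ : Site ν L → Matrix (Fin N) (Fin N) ℂ) (hCAR : CAR ψ)
    (a b y : Site ν L) :
    commut (star (ψ a) * ψ b) (rho ψ y)
      = (((if b = y then 1 else 0) - (if a = y then 1 else 0) : ℂ)) •
        (star (ψ a) * ψ b) := by
  obtain ⟨h1, h2⟩ := hCAR
  have hZc : ∀ (c : ℂ) (M : Matrix (Fin N) (Fin N) ℂ),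
      M * (c • (1 : Matrix (Fin N) (Fin N) ℂ)) = (c • 1) * M := by
    intro c M; simp [mul_smul_comm, smul_mul_assoc]
  have hite : ∀ (p : Prop) [Decidable p],
      (if p then (1 : Matrix (Fin N) (Fin N) ℂ) else 0) = (if p then (1:ℂ) else 0) • 1 := by
    intro p _; split_ifs <;> simp
  have hBC : ψ b * star (ψ y)
      = ((if b = y then (1:ℂ) else 0) • 1) - star (ψ y) * ψ b := by
    refine eq_sub_of_add_eq ?_
    rw [← hite]; exact h1 b y
  have hAD : star (ψ a) * ψ y
      = ((if a = y then (1:ℂ) else 0) • 1) - ψ y * star (ψ a) := by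
    refine eq_sub_of_add_eq ?_
    have := h1 y a
    rw [add_comm] at this
    rw [← hite]
    rw [this]
    simp [eq_comm]
  have hAC : star (ψ a) * star (ψ y) = -(star (ψ y) * star (ψ a)) := by
    refine eq_neg_of_add_eq_zero_left ?_
    have := congrArg star (h2 y a)
    simpa [star_add, StarMul.star_mul, add_comm] using this
  have hBD : ψ b * ψ y = -(ψ y * ψ b) := by
    refine eq_neg_of_add_eq_zero_left ?_
    exact h2 b y
  have key := key_noncomm (star (ψ a)) (ψ b) (star (ψ y)) (ψ y)
    ((if b = y then (1:ℂ) else 0) • 1) ((if a = y then (1:ℂ) else 0) • 1)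
    (hZc _) (hZc _) hBC hAD hAC hBD
  have hrho : rho ψ y = star (ψ y) * ψ y - (1/2 : ℂ) • 1 := rfl
  rw [hrho, commut_sub_right, commut_one_smul, sub_zero]
  show star (ψ a) * ψ b * (star (ψ y) * ψ y) - star (ψ y) * ψ y * (star (ψ a) * ψ b) = _
  rw [key]
  by_cases hb : b = y <;> by_cases ha : a = y
  · subst hb; subst ha; simp
  · subst hb; simp [ha, smul_mul_assoc]
  · subst ha; simp [hb, smul_mul_assoc]
  · simp [hb, ha]

end Aux

section Aux2
set_option maxHeartbeats 1000000
set_option synthInstance.maxHeartbeats 400000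
variable {ν L N : ℕ}

lemma commut_sub_left (A B C : Matrix (Fin N) (Fin N) ℂ) :
    commut (A - B) C = commut A C - commut B C := by
  simp only [commut, mul_sub, sub_mul]; abel

lemma commut_mul_left (A B C : Matrix (Fin N) (Fin N) ℂ) :
    commut (A * B) C = A * commut B C + commut A C * B := by
  simp only [commut, mul_sub, sub_mul, mul_assoc]; abel

lemma commut_hop_rhoTilde [NeZero (2*L)] (ψ : Site ν L → Matrix (Fin N) (Fin N) ℂ)
    (hCAR : CAR ψ) (a b m : Site ν L) :
    commut (star (ψ a) * ψ b) (rhoTilde ψ m)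
      = (((Real.sqrt (Fintype.card (Site ν L)) : ℂ))⁻¹ *
          (Complex.exp (Complex.I * ((pdot ν L m b : ℝ) : ℂ)) -
           Complex.exp (Complex.I * ((pdot ν L m a : ℝ) : ℂ)))) • (star (ψ a) * ψ b) := by
  unfold rhoTilde
  rw [commut_smul_right, commut_sum_right]
  simp_rw [commut_smul_right, commut_hop_rho ψ hCAR a b, smul_smul, ← Finset.sum_smul,
    smul_smul]
  congr 1
  have : ∑ y : Site ν L, Complex.exp (Complex.I * ((pdot ν L m y : ℝ) : ℂ)) *
      (((if b = y then 1 else 0) - (if a = y then 1 else 0) : ℂ))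
      = Complex.exp (Complex.I * ((pdot ν L m b : ℝ) : ℂ)) -
        Complex.exp (Complex.I * ((pdot ν L m a : ℝ) : ℂ)) := by
    simp [mul_sub, Finset.sum_sub_distrib, mul_ite, Finset.sum_ite_eq]
  rw [this]

lemma commut_rho_rho (ψ : Site ν L → Matrix (Fin N) (Fin N) ℂ) (hCAR : CAR ψ)
    (x y : Site ν L) : commut (rho ψ x) (rho ψ y) = 0 := by
  have : rho ψ x = star (ψ x) * ψ x - (1/2 : ℂ) • 1 := rfl
  rw [this, commut_sub_left, commut_hop_rho ψ hCAR x x y]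
  simp [commut, mul_smul_comm, smul_mul_assoc]

lemma psi_norm_le (ψ : Site ν L → Matrix (Fin N) (Fin N) ℂ) (hCAR : CAR ψ)
    (x : Site ν L) : ‖Matrix.toEuclideanCLM (𝕜 := ℂ) (ψ x)‖ ≤ 1 := by
  set u := Matrix.toEuclideanCLM (𝕜 := ℂ) (ψ x) with hu
  have hsq : ψ x * ψ x = 0 := by
    have h := hCAR.2 x x
    have h2 : (2:ℂ) • (ψ x * ψ x) = 0 := by rw [two_smul]; exact h
    simpa using h2
  have h : u * u = 0 := by rw [hu, ← _root_.map_mul, hsq, map_zero]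
  have h2 : u * star u + star u * u = 1 := by
    have := hCAR.1 x x
    simp only [if_pos] at this
    calc u * star u + star u * u
        = Matrix.toEuclideanCLM (𝕜 := ℂ) (ψ x * star (ψ x) + star (ψ x) * ψ x) := by
          simp [hu, map_add, _root_.map_mul, map_star]
      _ = 1 := by rw [this, _root_.map_one]
  exact norm_le_one_of u h h2

lemma psi_star_norm_le (ψ : Site ν L → Matrix (Fin N) (Fin N) ℂ) (hCAR : CAR ψ)
    (x : Site ν L) : ‖Matrix.toEuclideanCLM (𝕜 := ℂ) (star (ψ x))‖ ≤ 1 := by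
  set v := Matrix.toEuclideanCLM (𝕜 := ℂ) (star (ψ x)) with hv
  have hsq : ψ x * ψ x = 0 := by
    have h := hCAR.2 x x
    have h2 : (2:ℂ) • (ψ x * ψ x) = 0 := by rw [two_smul]; exact h
    simpa using h2
  have hsq' : star (ψ x) * star (ψ x) = 0 := by
    rw [← StarMul.star_mul, hsq, star_zero]
  have h : v * v = 0 := by rw [hv, ← _root_.map_mul, hsq', map_zero]
  have h2 : v * star v + star v * v = 1 := by
    have hc := hCAR.1 x x
    simp only [if_pos] at hc
    have hst : star v = Matrix.toEuclideanCLM (𝕜 := ℂ) (ψ x) := by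
      rw [hv, ← map_star, star_star]
    calc v * star v + star v * v
        = Matrix.toEuclideanCLM (𝕜 := ℂ) (star (ψ x) * ψ x + ψ x * star (ψ x)) := by
          rw [hv, hst]; simp [map_add, _root_.map_mul]
      _ = 1 := by rw [add_comm] at hc; rw [hc, _root_.map_one]
  exact norm_le_one_of v h h2

lemma hopnorm (ψ : Site ν L → Matrix (Fin N) (Fin N) ℂ) (hCAR : CAR ψ)
    (a b : Site ν L) :
    ‖Matrix.toEuclideanCLM (𝕜 := ℂ) (star (ψ a) * ψ b)‖ ≤ 1 := by
  rw [_root_.map_mul]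
  calc ‖Matrix.toEuclideanCLM (𝕜:=ℂ) (star (ψ a)) * Matrix.toEuclideanCLM (𝕜:=ℂ) (ψ b)‖
      ≤ ‖Matrix.toEuclideanCLM (𝕜:=ℂ) (star (ψ a))‖ * ‖Matrix.toEuclideanCLM (𝕜:=ℂ) (ψ b)‖ :=
        norm_mul_le _ _
    _ ≤ 1 * 1 := by
        exact mul_le_mul (psi_star_norm_le ψ hCAR a) (psi_norm_le ψ hCAR b)
          (norm_nonneg _) zero_le_one
    _ = 1 := by ring

end Aux2

section Main
set_option maxHeartbeats 2000000
set_option synthInstance.maxHeartbeats 400000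

/-- **Double commutator bound**: `[ρ̃_p, [H(0), ρ̃_{-p}]] = [ρ̃_p, [H_K, ρ̃_{-p}]]`,
and its operator norm is bounded by `8|κ|ν`. -/
theorem double_commutator_bound (ν L N : ℕ) [NeZero (2 * L)]
    (hν : 2 ≤ ν) (hL : 1 ≤ L) (hN : 1 ≤ N)
    (ψ : Site ν L → Matrix (Fin N) (Fin N) ℂ) (hCAR : CAR ψ)
    (κ g : ℝ) (hg : 0 ≤ g) (n : Site ν L) :
    (commut (rhoTilde ψ n) (commut (Ham κ 0 g ψ) (rhoTilde ψ (-n))) =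
        commut (rhoTilde ψ n) (commut (HK κ ψ) (rhoTilde ψ (-n)))) ∧
    ‖Matrix.toEuclideanCLM (𝕜 := ℂ)
        (commut (rhoTilde ψ n) (commut (Ham κ 0 g ψ) (rhoTilde ψ (-n))))‖ ≤
      8 * |κ| * (ν : ℝ) := by
  have hz : ∀ w y, commut (rho ψ w) (rhoTilde ψ y) = 0 := by
    intro w y; unfold rhoTilde
    rw [commut_smul_right, commut_sum_right]
    simp [commut_smul_right, commut_rho_rho ψ hCAR]
  have hHint : commut (Hint ψ) (rhoTilde ψ (-n)) = 0 := by
    unfold Hint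
    rw [commut_sum_left]
    apply Finset.sum_eq_zero; intro x _
    rw [commut_sum_left]
    apply Finset.sum_eq_zero; intro μ _
    rw [commut_mul_left, hz, hz]; simp
  have part1 : commut (Ham κ 0 g ψ) (rhoTilde ψ (-n)) =
      commut (HK κ ψ) (rhoTilde ψ (-n)) := by
    have hHam : Ham κ 0 g ψ = HK κ ψ + (g:ℂ) • Hint ψ := by
      unfold Ham; push_cast; simp
    rw [hHam, commut_add_left, commut_smul_left, hHint]; simp
  refine ⟨by rw [part1], ?_⟩
  rw [part1]
  -- notation
  set s : ℂ := ((Real.sqrt (Fintype.card (Site ν L)) : ℂ))⁻¹ with hs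
  set E : Site ν L → Site ν L → ℂ :=
    fun m x => Complex.exp (Complex.I * ((pdot ν L m x : ℝ) : ℂ)) with hE
  set K : Site ν L → Fin ν → Matrix (Fin N) (Fin N) ℂ :=
    fun x μ => star (ψ x) * ψ (x + eVec ν L μ) with hK
  set K' : Site ν L → Fin ν → Matrix (Fin N) (Fin N) ℂ :=
    fun x μ => star (ψ (x + eVec ν L μ)) * ψ x with hK'
  have hop : ∀ a b m, commut (star (ψ a) * ψ b) (rhoTilde ψ m)
      = (s * (E m b - E m a)) • (star (ψ a) * ψ b) :=
    fun a b m => commut_hop_rhoTilde ψ hCAR a b m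
  set c : Site ν L → Fin ν → ℂ :=
    fun x μ => s * (E (-n) (x + eVec ν L μ) - E (-n) x) with hc
  set d : Site ν L → Fin ν → ℂ :=
    fun x μ => s * (E n (x + eVec ν L μ) - E n x) with hd
  have step1 : commut (HK κ ψ) (rhoTilde ψ (-n))
      = (Complex.I * κ) • ∑ x : Site ν L, ∑ μ : Fin ν,
          (((-1:ℂ) ^ theta μ x) * c x μ) • (K x μ + K' x μ) := by
    unfold HK
    rw [commut_smul_left, commut_sum_left]
    congr 1
    apply Finset.sum_congr rfl; intro x _
    rw [commut_sum_left]
    apply Finset.sum_congr rfl; intro μ _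
    rw [commut_smul_left, commut_sub_left, hop x (x + eVec ν L μ) (-n),
      hop (x + eVec ν L μ) x (-n)]
    show ((-1:ℂ) ^ theta μ x) • ((c x μ) • K x μ - (s * (E (-n) x - E (-n) (x + eVec ν L μ))) • K' x μ) = _
    have : s * (E (-n) x - E (-n) (x + eVec ν L μ)) = -(c x μ) := by rw [hc]; ring
    rw [this]
    module
  have step2 : commut (rhoTilde ψ n) (commut (HK κ ψ) (rhoTilde ψ (-n)))
      = (Complex.I * κ) • ∑ x : Site ν L, ∑ μ : Fin ν,
          (((-1:ℂ) ^ theta μ x) * c x μ * d x μ) • (K' x μ - K x μ) := by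
    rw [step1, commut_smul_right, commut_sum_right]
    congr 1
    apply Finset.sum_congr rfl; intro x _
    rw [commut_sum_right]
    apply Finset.sum_congr rfl; intro μ _
    rw [commut_smul_right, commut_add_right,
      commut_skew (rhoTilde ψ n) (K x μ), commut_skew (rhoTilde ψ n) (K' x μ),
      hK, hK']
    show (((-1:ℂ) ^ theta μ x) * c x μ) •
      (-(commut (star (ψ x) * ψ (x + eVec ν L μ)) (rhoTilde ψ n)) +
       -(commut (star (ψ (x + eVec ν L μ)) * ψ x) (rhoTilde ψ n))) = _
    rw [hop x (x + eVec ν L μ) n, hop (x + eVec ν L μ) x n]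
    show (((-1:ℂ) ^ theta μ x) * c x μ) •
      (-((d x μ) • K x μ) + -((s * (E n x - E n (x + eVec ν L μ))) • K' x μ)) = _
    have : s * (E n x - E n (x + eVec ν L μ)) = -(d x μ) := by rw [hd]; ring
    rw [this]
    module
  rw [step2]
  -- norm estimates
  set card := Fintype.card (Site ν L) with hcard
  have hcpos : 0 < (card : ℝ) := by
    have : 0 < card := Fintype.card_pos
    exact_mod_cast this
  have hsnorm : ‖s‖ = (Real.sqrt card)⁻¹ := by
    rw [hs, norm_inv, Complex.norm_real, Real.norm_eq_abs,
      abs_of_nonneg (Real.sqrt_nonneg _)]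
  have hsnorm2 : ‖s‖ * ‖s‖ = (card : ℝ)⁻¹ := by
    rw [hsnorm, ← mul_inv]
    congr 1
    exact Real.mul_self_sqrt (le_of_lt hcpos)
  have hEnorm : ∀ m x, ‖E m x‖ = 1 := by
    intro m x
    rw [hE]
    show ‖Complex.exp (Complex.I * ((pdot ν L m x : ℝ) : ℂ))‖ = 1
    rw [mul_comm]
    exact Complex.norm_exp_ofReal_mul_I _
  have hcoef : ∀ (m : Site ν L) x μ, ‖s * (E m (x + eVec ν L μ) - E m x)‖ ≤ 2 * ‖s‖ := by
    intro m x μ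
    rw [norm_mul, mul_comm]
    apply mul_le_mul_of_nonneg_right _ (norm_nonneg s)
    calc ‖E m (x + eVec ν L μ) - E m x‖ ≤ ‖E m (x + eVec ν L μ)‖ + ‖E m x‖ := norm_sub_le _ _
    _ ≤ 2 := by rw [hEnorm, hEnorm]; norm_num
  have hterm : ∀ (x : Site ν L) (μ : Fin ν),
      ‖Matrix.toEuclideanCLM (𝕜 := ℂ)
        ((((-1:ℂ) ^ theta μ x) * c x μ * d x μ) • (K' x μ - K x μ))‖ ≤ 8 / card := by
    intro x μ
    rw [_root_.map_smul]
    rw [show ∀ (a : ℂ) (v : EuclideanSpace ℂ (Fin N) →L[ℂ] EuclideanSpace ℂ (Fin N)), ‖a • v‖ = ‖a‖ * ‖v‖ from fun a v => norm_smul a v]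
    have h1 : ‖((-1:ℂ) ^ theta μ x) * c x μ * d x μ‖ ≤ 4 / card := by
      rw [norm_mul, norm_mul]
      have hε : ‖((-1:ℂ) ^ theta μ x)‖ = 1 := by
        rw [norm_pow, norm_neg, norm_one, one_pow]
      rw [hε, one_mul]
      calc ‖c x μ‖ * ‖d x μ‖ ≤ (2 * ‖s‖) * (2 * ‖s‖) := by
            apply mul_le_mul (hcoef _ x μ) (hcoef _ x μ) (norm_nonneg _)
            positivity
        _ = 4 * (‖s‖ * ‖s‖) := by ring
        _ = 4 / card := by rw [hsnorm2]; field_simp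
    have h2 : ‖Matrix.toEuclideanCLM (𝕜 := ℂ) (K' x μ - K x μ)‖ ≤ 2 := by
      rw [_root_.map_sub]
      calc ‖Matrix.toEuclideanCLM (𝕜 := ℂ) (K' x μ) - Matrix.toEuclideanCLM (𝕜 := ℂ) (K x μ)‖
          ≤ ‖Matrix.toEuclideanCLM (𝕜 := ℂ) (K' x μ)‖ +
            ‖Matrix.toEuclideanCLM (𝕜 := ℂ) (K x μ)‖ := norm_sub_le _ _
        _ ≤ 1 + 1 := add_le_add (hopnorm ψ hCAR _ _) (hopnorm ψ hCAR _ _)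
        _ = 2 := by norm_num
    calc ‖((-1:ℂ) ^ theta μ x) * c x μ * d x μ‖ *
          ‖Matrix.toEuclideanCLM (𝕜 := ℂ) (K' x μ - K x μ)‖
        ≤ (4 / card) * 2 := by
          apply mul_le_mul h1 h2 (norm_nonneg _)
          positivity
      _ = 8 / card := by ring
  rw [_root_.map_smul]
  rw [show ∀ (a : ℂ) (v : EuclideanSpace ℂ (Fin N) →L[ℂ] EuclideanSpace ℂ (Fin N)), ‖a • v‖ = ‖a‖ * ‖v‖ from fun a v => norm_smul a v]
  have hIκ : ‖Complex.I * (κ:ℂ)‖ = |κ| := by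
    rw [norm_mul, Complex.norm_I, one_mul, Complex.norm_real, Real.norm_eq_abs]
  rw [hIκ]
  have hsum : ‖Matrix.toEuclideanCLM (𝕜 := ℂ) (∑ x : Site ν L, ∑ μ : Fin ν,
      (((-1:ℂ) ^ theta μ x) * c x μ * d x μ) • (K' x μ - K x μ))‖ ≤ 8 * ν := by
    rw [map_sum]
    calc ‖∑ x : Site ν L, Matrix.toEuclideanCLM (𝕜 := ℂ) (∑ μ : Fin ν,
          (((-1:ℂ) ^ theta μ x) * c x μ * d x μ) • (K' x μ - K x μ))‖
        ≤ ∑ x : Site ν L, ‖Matrix.toEuclideanCLM (𝕜 := ℂ) (∑ μ : Fin ν,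
          (((-1:ℂ) ^ theta μ x) * c x μ * d x μ) • (K' x μ - K x μ))‖ :=
          norm_sum_le _ _
      _ ≤ ∑ _x : Site ν L, ((ν:ℝ) * (8 / (card:ℝ))) := by
          apply Finset.sum_le_sum; intro x _
          rw [map_sum]
          calc ‖∑ μ : Fin ν, Matrix.toEuclideanCLM (𝕜 := ℂ)
                ((((-1:ℂ) ^ theta μ x) * c x μ * d x μ) • (K' x μ - K x μ))‖
              ≤ ∑ μ : Fin ν, ‖Matrix.toEuclideanCLM (𝕜 := ℂ)
                ((((-1:ℂ) ^ theta μ x) * c x μ * d x μ) • (K' x μ - K x μ))‖ :=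
                norm_sum_le _ _
            _ ≤ ∑ _μ : Fin ν, (8 / (card:ℝ)) := Finset.sum_le_sum (fun μ _ => hterm x μ)
            _ = (ν:ℝ) * (8 / (card:ℝ)) := by
                rw [Finset.sum_const, Finset.card_univ, Fintype.card_fin, nsmul_eq_mul]
      _ = (card:ℝ) * ((ν:ℝ) * (8 / (card:ℝ))) := by
          rw [Finset.sum_const, Finset.card_univ, nsmul_eq_mul]
      _ = 8 * ν := by
          field_simp
  calc |κ| * ‖Matrix.toEuclideanCLM (𝕜 := ℂ) (∑ x : Site ν L, ∑ μ : Fin ν,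
        (((-1:ℂ) ^ theta μ x) * c x μ * d x μ) • (K' x μ - K x μ))‖
      ≤ |κ| * (8 * ν) := mul_le_mul_of_nonneg_left hsum (abs_nonneg κ)
    _ = 8 * |κ| * ν := by ring

end Main

end
end
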